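/- arXiv:2010.09720 — 8 statements merged into one kernel-verified Lean document; each statement's English description precedes it below -/
import Mathlib

section
/- Let n ≥ 3 and consider a single layer of the hardware efficient ansatz V(a,b,c,d) on n qubits. Then there exist α ∈ ℝ with V(a,b,c,d) = e^{iα}·I_{2^n} if and only if the parameters satisfy: every daisy-chain parameter d_i is an integer multiple of π; every middle rotation parameter b_i is an integer multiple of π; and for every wire i, if the controlled-R_Y gate whose control is wire i has parameter an even integer multiple of π then a_i + c_i ∈ πℤ, while if that parameter is an odd integer multiple of π then a_i + c_i ∈ π/2 + πℤ. -/
open Matrix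
open scoped Kronecker

noncomputable def PX : Matrix (Fin 2) (Fin 2) ℂ := !![0, 1; 1, 0]
noncomputable def PY : Matrix (Fin 2) (Fin 2) ℂ := !![0, -Complex.I; Complex.I, 0]
noncomputable def PZ : Matrix (Fin 2) (Fin 2) ℂ := !![1, 0; 0, -1]
noncomputable def RX (θ : ℝ) : Matrix (Fin 2) (Fin 2) ℂ :=
  !![(Real.cos θ : ℂ), -Complex.I * (Real.sin θ : ℂ); -Complex.I * (Real.sin θ : ℂ), (Real.cos θ : ℂ)]
noncomputable def RY (θ : ℝ) : Matrix (Fin 2) (Fin 2) ℂ :=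
  !![(Real.cos θ : ℂ), -(Real.sin θ : ℂ); (Real.sin θ : ℂ), (Real.cos θ : ℂ)]
noncomputable def RZ (θ : ℝ) : Matrix (Fin 2) (Fin 2) ℂ :=
  !![Complex.exp (-Complex.I * (θ : ℂ)), 0; 0, Complex.exp (Complex.I * (θ : ℂ))]
noncomputable def P0 : Matrix (Fin 2) (Fin 2) ℂ := !![1, 0; 0, 0]
noncomputable def P1 : Matrix (Fin 2) (Fin 2) ℂ := !![0, 0; 0, 1]
noncomputable def CRY (θ : ℝ) : Matrix (Fin 2 × Fin 2) (Fin 2 × Fin 2) ℂ :=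
  P0 ⊗ₖ (1 : Matrix (Fin 2) (Fin 2) ℂ) + P1 ⊗ₖ RY θ
noncomputable def CNOT : Matrix (Fin 2 × Fin 2) (Fin 2 × Fin 2) ℂ :=
  P0 ⊗ₖ (1 : Matrix (Fin 2) (Fin 2) ℂ) + P1 ⊗ₖ PX

/-- successor modulo n on `Fin n` -/
def fsucc {n : ℕ} (i : Fin n) : Fin n := ⟨(i.val + 1) % n, Nat.mod_lt _ i.pos⟩

/-- embedding into `n` qubits of a two-qubit gate acting on qubit `p` (first tensor factor)
and qubit `q` (second tensor factor), as the identity on all other qubits -/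
noncomputable def embed2 (n : ℕ) (p q : Fin n)
    (g : Matrix (Fin 2 × Fin 2) (Fin 2 × Fin 2) ℂ) :
    Matrix (Fin n → Fin 2) (Fin n → Fin 2) ℂ :=
  fun i j => g (i p, i q) (j p, j q) *
    ∏ k : Fin n, if k = p ∨ k = q then 1 else (if i k = j k then (1 : ℂ) else 0)

/-- embedding into `n` qubits of a single-qubit gate acting on qubit `p` -/
noncomputable def embed1 (n : ℕ) (p : Fin n) (g : Matrix (Fin 2) (Fin 2) ℂ) :
    Matrix (Fin n → Fin 2) (Fin n → Fin 2) ℂ :=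
  fun i j => g (i p) (j p) *
    ∏ k : Fin n, if k = p then 1 else (if i k = j k then (1 : ℂ) else 0)

/-- the single-qubit rotation part of a HEA layer: `⊗ᵢ R_Z(cᵢ)·R_Y(bᵢ)·R_Z(aᵢ)` -/
noncomputable def heaR (n : ℕ) (a b c : Fin n → ℝ) :
    Matrix (Fin n → Fin 2) (Fin n → Fin 2) ℂ :=
  fun i j => ∏ k : Fin n, (RZ (c k) * RY (b k) * RZ (a k)) (i k) (j k)

/-- the daisy chain of controlled-R_Y gates, `C_{n,1}(d_n)·…·C_{2,3}(d_2)·C_{1,2}(d_1)`,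
where `C_{i,i+1}(t)` has control qubit `i` and target qubit `i+1 (mod n)` -/
noncomputable def heaD (n : ℕ) (d : Fin n → ℝ) :
    Matrix (Fin n → Fin 2) (Fin n → Fin 2) ℂ :=
  (((List.finRange n).map fun i => embed2 n i (fsucc i) (CRY (d i))).reverse).prod

/-- a single layer of the hardware efficient ansatz on `n` qubits -/
noncomputable def heaV (n : ℕ) (a b c d : Fin n → ℝ) :
    Matrix (Fin n → Fin 2) (Fin n → Fin 2) ℂ :=
  heaD n d * heaR n a b c

/-- the k-Toffoli gate on n = k+1 qubits: identity except that the bottom-right 2×2 block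
(basis states whose first n−1 bits are all 1) is the Pauli X. -/
noncomputable def toff (n : ℕ) : Matrix (Fin n → Fin 2) (Fin n → Fin 2) ℂ :=
  if h : 0 < n then
    fun i j =>
      if (∀ k : Fin n, k.val + 1 < n → (i k = 1 ∧ j k = 1)) then
        PX (i ⟨n - 1, by omega⟩) (j ⟨n - 1, by omega⟩)
      else if i = j then 1 else 0
  else 1
namespace HEA

noncomputable def Tm (s : Fin 2) (θ : ℝ) : Matrix (Fin 2) (Fin 2) ℂ :=
  if s = 1 then RY θ else 1

@[simp] lemma Tm_zero (θ : ℝ) : Tm 0 θ = 1 := by simp [Tm]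
@[simp] lemma Tm_one (θ : ℝ) : Tm 1 θ = RY θ := by simp [Tm]

lemma CRY_apply (θ : ℝ) (u v s t : Fin 2) :
    CRY θ (u, v) (s, t) = if u = s then Tm u θ v t else 0 := by
  fin_cases u <;> fin_cases s <;>
    simp [CRY, Tm, P0, P1, Matrix.kroneckerMap_apply, Matrix.add_apply]

end HEA
namespace HEA
variable {n : ℕ}

lemma prod_delta (y x : Fin n → Fin 2) :
    (∏ j : Fin n, if y j = x j then (1 : ℂ) else 0) = if y = x then 1 else 0 := by
  by_cases h : y = x
  · simp [h]
  · obtain ⟨j, hj⟩ := Function.ne_iff.mp h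
    rw [if_neg h]
    exact Finset.prod_eq_zero (Finset.mem_univ j) (by simp [hj])

lemma sum_update (y : Fin n → Fin 2) (q : Fin n) (F : (Fin n → Fin 2) → ℂ)
    (h : ∀ z : Fin n → Fin 2, (∃ k, k ≠ q ∧ z k ≠ y k) → F z = 0) :
    ∑ z : Fin n → Fin 2, F z = ∑ t : Fin 2, F (Function.update y q t) := by
  have key : ∀ z : Fin n → Fin 2,
      (∑ t : Fin 2, if z = Function.update y q t then F z else 0) = F z := by
    intro z
    by_cases hz : ∀ k, k ≠ q → z k = y k
    · have hzu : z = Function.update y q (z q) := by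
        funext k
        by_cases hk : k = q
        · subst hk; simp
        · rw [Function.update_of_ne hk]; exact hz k hk
      have : ∀ t : Fin 2, (z = Function.update y q t) ↔ t = z q := by
        intro t
        constructor
        · intro he; have := congrFun he q; simpa using this.symm
        · rintro rfl; exact hzu
      simp only [this]
      simp
    · push_neg at hz
      obtain ⟨k, hk, hzk⟩ := hz
      rw [h z ⟨k, hk, hzk⟩]
      simp
  calc ∑ z : Fin n → Fin 2, F z
      = ∑ z : Fin n → Fin 2, ∑ t : Fin 2, if z = Function.update y q t then F z else 0 := by
        simp only [key]
    _ = ∑ t : Fin 2, ∑ z : Fin n → Fin 2, if z = Function.update y q t then F z else 0 := by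
        rw [Finset.sum_comm]
    _ = ∑ t : Fin 2, F (Function.update y q t) := by
        refine Finset.sum_congr rfl fun t _ => ?_
        simp

lemma embed2_CRY_apply (p q : Fin n) (hpq : p ≠ q) (θ : ℝ) (y z : Fin n → Fin 2) :
    embed2 n p q (CRY θ) y z =
      Tm (y p) θ (y q) (z q) *
        ∏ k : Fin n, if k = q then 1 else (if y k = z k then (1 : ℂ) else 0) := by
  unfold embed2
  rw [CRY_apply]
  by_cases hp : y p = z p
  · rw [if_pos hp]
    congr 1
    refine Finset.prod_congr rfl fun k _ => ?_
    by_cases hkq : k = q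
    · simp [hkq]
    · by_cases hkp : k = p
      · subst hkp; simp [hkq, hp]
      · simp [hkq, hkp]
  · rw [if_neg hp, zero_mul]
    symm
    rw [Finset.prod_eq_zero (Finset.mem_univ p) (by simp [hpq, hp]), mul_zero]

end HEA
namespace HEA
variable {n : ℕ}

lemma embed2_CRY_mul_apply (p q : Fin n) (hpq : p ≠ q) (θ : ℝ)
    (P : Matrix (Fin n → Fin 2) (Fin n → Fin 2) ℂ) (y x : Fin n → Fin 2) :
    (embed2 n p q (CRY θ) * P) y x =
      ∑ t : Fin 2, Tm (y p) θ (y q) t * P (Function.update y q t) x := by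
  rw [Matrix.mul_apply]
  rw [sum_update y q _ (fun z hz => ?_)]
  · refine Finset.sum_congr rfl fun t _ => ?_
    rw [embed2_CRY_apply p q hpq]
    have h1 : (∏ k : Fin n, if k = q then 1 else
        (if y k = Function.update y q t k then (1:ℂ) else 0)) = 1 := by
      refine Finset.prod_eq_one fun k _ => ?_
      by_cases hk : k = q
      · simp [hk]
      · rw [if_neg hk, Function.update_of_ne hk, if_pos rfl]
    rw [Function.update_self, h1, mul_one]
  · obtain ⟨k, hkq, hzk⟩ := hz
    rw [embed2_CRY_apply p q hpq]
    rw [Finset.prod_eq_zero (Finset.mem_univ k) (by simp [hkq, Ne.symm hzk]), mul_zero, zero_mul]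

end HEA
namespace HEA
variable {n : ℕ}

def em (hn : 0 < n) (k : ℕ) : Fin n := ⟨k % n, Nat.mod_lt _ hn⟩

lemma em_val (hn : 0 < n) {k : ℕ} (hk : k < n) : ((em hn k : Fin n) : ℕ) = k :=
  Nat.mod_eq_of_lt hk

lemma fsucc_em (hn : 0 < n) {k : ℕ} (hk : k < n) :
    fsucc (em hn k) = em hn (k + 1) := by
  apply Fin.ext
  simp [fsucc, em, Nat.mod_eq_of_lt hk]

noncomputable def gate (d : Fin n → ℝ) (i : Fin n) :
    Matrix (Fin n → Fin 2) (Fin n → Fin 2) ℂ :=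
  embed2 n i (fsucc i) (CRY (d i))

noncomputable def Pm (d : Fin n → ℝ) (m : ℕ) :
    Matrix (Fin n → Fin 2) (Fin n → Fin 2) ℂ :=
  (((List.finRange n).take m).map (gate d)).reverse.prod

lemma heaD_eq_Pm (d : Fin n → ℝ) : heaD n d = Pm d n := by
  unfold heaD Pm gate
  rw [show (List.finRange n).take n = List.finRange n from
    List.take_of_length_le (by simp)]

lemma Pm_succ (d : Fin n → ℝ) {m : ℕ} (hm : m < n) :
    Pm d (m + 1) = gate d ⟨m, hm⟩ * Pm d m := by
  unfold Pm
  rw [List.take_succ]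
  have h1 : (List.finRange n)[m]? = some ⟨m, hm⟩ := by
    rw [List.getElem?_eq_getElem (by simpa using hm)]
    simp
  rw [h1]
  simp [List.prod_append]

end HEA
namespace HEA
variable {n : ℕ}

lemma Pm_apply (hn : 0 < n) (d : Fin n → ℝ) (m : ℕ) (hm : m + 1 ≤ n)
    (y x : Fin n → Fin 2) :
    Pm d m y x =
      (∏ k ∈ Finset.range m,
          Tm (if k = 0 then x (em hn 0) else y (em hn k)) (d (em hn k))
            (y (em hn (k + 1))) (x (em hn (k + 1)))) *
        ∏ j : Fin n,
          if 1 ≤ (j : ℕ) ∧ (j : ℕ) ≤ m then 1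
          else (if y j = x j then (1 : ℂ) else 0) := by
  induction m generalizing y x with
  | zero =>
    have : Pm d 0 = 1 := by simp [Pm]
    rw [this]
    simp only [Finset.range_zero, Finset.prod_empty, one_mul]
    rw [show (∏ j : Fin n, if 1 ≤ (j:ℕ) ∧ (j:ℕ) ≤ 0 then 1
        else (if y j = x j then (1:ℂ) else 0)) =
        ∏ j : Fin n, if y j = x j then (1:ℂ) else 0 from
      Finset.prod_congr rfl fun j _ => by
        rw [if_neg]; omega]
    rw [prod_delta, Matrix.one_apply]
  | succ m ih =>
    have hm1 : m < n := by omega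
    have hm2 : m + 1 < n := by omega
    rw [Pm_succ d hm1]
    have hpm : (⟨m, hm1⟩ : Fin n) = em hn m := Fin.ext (Nat.mod_eq_of_lt hm1).symm
    have hqv : ((em hn (m+1) : Fin n) : ℕ) = m + 1 := em_val hn hm2
    have hne : em hn m ≠ em hn (m + 1) := by
      intro h
      have := congrArg Fin.val h
      rw [em_val hn hm1, hqv] at this
      omega
    unfold gate
    rw [hpm, fsucc_em hn hm1, embed2_CRY_mul_apply _ _ hne]
    set q := em hn (m + 1) with hqdef
    set A := ∏ k ∈ Finset.range m,
          Tm (if k = 0 then x (em hn 0) else y (em hn k)) (d (em hn k))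
            (y (em hn (k + 1))) (x (em hn (k + 1))) with hA
    set B := ∏ j ∈ Finset.univ.erase q,
          (if 1 ≤ (j : ℕ) ∧ (j : ℕ) ≤ m then 1
            else (if y j = x j then (1 : ℂ) else 0)) with hB
    have hterm : ∀ t : Fin 2,
        Pm d m (Function.update y q t) x = A * ((if t = x q then 1 else 0) * B) := by
      intro t
      rw [ih (by omega)]
      congr 1
      · -- prod part unchanged
        refine Finset.prod_congr rfl fun k hk => ?_
        have hk' : k < m := Finset.mem_range.mp hk
        have h1 : em hn k ≠ q := by
          intro h; have := congrArg Fin.val h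
          rw [em_val hn (by omega), hqv] at this; omega
        have h2 : em hn (k + 1) ≠ q := by
          intro h; have := congrArg Fin.val h
          rw [em_val hn (by omega), hqv] at this; omega
        by_cases hk0 : k = 0
        · subst hk0
          rw [if_pos rfl, if_pos rfl, Function.update_of_ne h2]
        · rw [if_neg hk0, if_neg hk0, Function.update_of_ne h1, Function.update_of_ne h2]
      · -- delta part: extract factor at q
        rw [← Finset.mul_prod_erase _ _ (Finset.mem_univ q)]
        have hqcond : ¬(1 ≤ (q : ℕ) ∧ (q : ℕ) ≤ m) := by rw [hqv]; omega
        rw [if_neg hqcond, Function.update_self]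
        congr 1
        refine Finset.prod_congr rfl fun j hj => ?_
        have hjq : j ≠ q := (Finset.mem_erase.mp hj).1
        rw [Function.update_of_ne hjq]
    simp only [hterm]
    have hsum : (∑ t : Fin 2, Tm (y (em hn m)) (d (em hn m)) (y q) t *
        (A * ((if t = x q then 1 else 0) * B))) =
        Tm (y (em hn m)) (d (em hn m)) (y q) (x q) * (A * B) := by
      have hsw : ∀ t : Fin 2, Tm (y (em hn m)) (d (em hn m)) (y q) t *
          (A * ((if t = x q then 1 else 0) * B)) =
          if t = x q then Tm (y (em hn m)) (d (em hn m)) (y q) t * (A * B) else 0 := by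
        intro t; by_cases ht : t = x q <;> simp [ht]
      rw [Finset.sum_congr rfl fun t _ => hsw t, Finset.sum_ite_eq' Finset.univ (x q)]
      simp
    rw [hsum]
    -- reassemble RHS
    have hRHSprod : (∏ k ∈ Finset.range (m+1),
          Tm (if k = 0 then x (em hn 0) else y (em hn k)) (d (em hn k))
            (y (em hn (k + 1))) (x (em hn (k + 1)))) =
        A * Tm (if m = 0 then x (em hn 0) else y (em hn m)) (d (em hn m)) (y q) (x q) := by
      rw [Finset.prod_range_succ]
    have hRHSdelta : (∏ j : Fin n,
          if 1 ≤ (j : ℕ) ∧ (j : ℕ) ≤ m + 1 then 1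
          else (if y j = x j then (1 : ℂ) else 0)) = B := by
      rw [← Finset.mul_prod_erase _ _ (Finset.mem_univ q)]
      rw [if_pos (by rw [hqv]; omega), one_mul]
      refine Finset.prod_congr rfl fun j hj => ?_
      have hjq : j ≠ q := (Finset.mem_erase.mp hj).1
      have hjv : (j : ℕ) ≠ m + 1 := by
        intro h; exact hjq (Fin.ext (h.trans hqv.symm))
      congr 1
      simp only [eq_iff_iff]
      omega
    rw [hRHSprod, hRHSdelta]
    by_cases hm0 : m = 0
    · subst hm0
      rw [if_pos rfl]
      have h0q : em hn 0 ≠ q := by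
        intro h; have := congrArg Fin.val h
        rw [em_val hn hn, hqv] at this; omega
      by_cases h00 : y (em hn 0) = x (em hn 0)
      · rw [h00]; ring
      · have hB0 : B = 0 := by
          rw [hB]
          refine Finset.prod_eq_zero (Finset.mem_erase.mpr ⟨h0q, Finset.mem_univ _⟩) ?_
          rw [if_neg (by rw [em_val hn hn]; omega), if_neg h00]
        rw [hB0]; ring
    · rw [if_neg hm0]; ring

end HEA
namespace HEA
variable {n : ℕ}

lemma heaD_apply (hn : 0 < n) (hn2 : 2 ≤ n) (d : Fin n → ℝ) (y x : Fin n → Fin 2) :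
    heaD n d y x =
      Tm (y (em hn (n - 1))) (d (em hn (n - 1)))
          (y (em hn 0)) (x (em hn 0)) *
        ∏ k ∈ Finset.range (n - 1),
          Tm (if k = 0 then x (em hn 0) else y (em hn k)) (d (em hn k))
            (y (em hn (k + 1))) (x (em hn (k + 1))) := by
  have hm1 : n - 1 < n := by omega
  have h1 : Pm d n = gate d ⟨n - 1, hm1⟩ * Pm d (n - 1) := by
    have h := Pm_succ d (m := n - 1) hm1
    rwa [show n - 1 + 1 = n by omega] at h
  have hpm : (⟨n - 1, hm1⟩ : Fin n) = em hn (n - 1) := Fin.ext (Nat.mod_eq_of_lt hm1).symm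
  have hfs : fsucc (em hn (n - 1)) = em hn 0 := by
    rw [fsucc_em hn hm1]
    apply Fin.ext
    simp [em, show n - 1 + 1 = n by omega, Nat.mod_self]
  have h0v : ((em hn 0 : Fin n) : ℕ) = 0 := em_val hn hn
  have hne : em hn (n - 1) ≠ em hn 0 := by
    intro h; have := congrArg Fin.val h
    rw [em_val hn hm1, h0v] at this; omega
  rw [heaD_eq_Pm, h1]
  unfold gate
  rw [hpm, hfs, embed2_CRY_mul_apply _ _ hne]
  set q := em hn 0 with hq
  set A := ∏ k ∈ Finset.range (n - 1),
      Tm (if k = 0 then x q else y (em hn k)) (d (em hn k))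
        (y (em hn (k + 1))) (x (em hn (k + 1))) with hA
  have hterm : ∀ t : Fin 2,
      Pm d (n - 1) (Function.update y q t) x = A * (if t = x q then 1 else 0) := by
    intro t
    rw [Pm_apply hn d (n - 1) (by omega)]
    congr 1
    · refine Finset.prod_congr rfl fun k hk => ?_
      have hk' : k < n - 1 := Finset.mem_range.mp hk
      have h2 : em hn (k + 1) ≠ q := by
        intro h; have := congrArg Fin.val h
        rw [em_val hn (by omega), h0v] at this; omega
      by_cases hk0 : k = 0
      · subst hk0
        rw [if_pos rfl, if_pos rfl, Function.update_of_ne h2]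
      · have h1' : em hn k ≠ q := by
          intro h; have := congrArg Fin.val h
          rw [em_val hn (by omega), h0v] at this; omega
        rw [if_neg hk0, if_neg hk0, Function.update_of_ne h1', Function.update_of_ne h2]
    · rw [← Finset.mul_prod_erase _ _ (Finset.mem_univ q)]
      have hqcond : ¬(1 ≤ (q : ℕ) ∧ (q : ℕ) ≤ n - 1) := by rw [h0v]; omega
      rw [if_neg hqcond, Function.update_self]
      have hrest : (∏ j ∈ Finset.univ.erase q,
          (if 1 ≤ (j : ℕ) ∧ (j : ℕ) ≤ n - 1 then 1
            else (if Function.update y q t j = x j then (1 : ℂ) else 0))) = 1 := by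
        refine Finset.prod_eq_one fun j hj => ?_
        have hjq : j ≠ q := (Finset.mem_erase.mp hj).1
        have hjv : (j : ℕ) ≠ 0 := by
          intro h; exact hjq (Fin.ext (h.trans h0v.symm))
        rw [if_pos ⟨by omega, by omega⟩]
      rw [hrest, mul_one]
  simp only [hterm]
  have hsw : ∀ t : Fin 2, Tm (y (em hn (n - 1))) (d (em hn (n - 1))) (y q) t *
      (A * (if t = x q then 1 else 0)) =
      if t = x q then Tm (y (em hn (n - 1))) (d (em hn (n - 1))) (y q) t * A else 0 := by
    intro t; by_cases ht : t = x q <;> simp [ht]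
  rw [Finset.sum_congr rfl fun t _ => hsw t, Finset.sum_ite_eq' Finset.univ (x q)]
  simp

end HEA
namespace HEA

noncomputable def Mq (A B C : ℝ) : Matrix (Fin 2) (Fin 2) ℂ := RZ C * RY B * RZ A

lemma conj_exp_I (r : ℝ) :
    (starRingEnd ℂ) (Complex.exp (Complex.I * ↑r)) = Complex.exp (-(Complex.I * ↑r)) := by
  rw [← Complex.exp_conj]
  congr 1
  simp [Complex.conj_ofReal]

lemma conj_exp_negI (r : ℝ) :
    (starRingEnd ℂ) (Complex.exp (-(Complex.I * ↑r))) = Complex.exp (Complex.I * ↑r) := by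
  rw [← Complex.exp_conj]
  congr 1
  simp [Complex.conj_ofReal]

lemma exp_negI_mul_exp_I (r : ℝ) :
    Complex.exp (-(Complex.I * ↑r)) * Complex.exp (Complex.I * ↑r) = 1 := by
  rw [← Complex.exp_add]; simp

set_option linter.unusedTactic false in
lemma Mq_eq (A B C : ℝ) : Mq A B C =
    !![Complex.exp (-(Complex.I * ((A + C : ℝ) : ℂ))) * Real.cos B,
       -(Complex.exp (Complex.I * ((A - C : ℝ) : ℂ)) * Real.sin B);
       Complex.exp (-(Complex.I * ((A - C : ℝ) : ℂ))) * Real.sin B,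
       Complex.exp (Complex.I * ((A + C : ℝ) : ℂ)) * Real.cos B] := by
  ext i j
  fin_cases i <;> fin_cases j <;>
    · simp [Mq, RZ, RY, Matrix.mul_apply, Fin.sum_univ_two]
      rw [mul_right_comm, ← Complex.exp_add]
      congr 2
      push_cast
      try ring

lemma Mq_mul_conjTranspose (A B C : ℝ) : Mq A B C * (Mq A B C)ᴴ = 1 := by
  have hcs : ((Real.cos B : ℂ))^2 + ((Real.sin B : ℂ))^2 = 1 := by
    norm_cast
    linarith [Real.sin_sq_add_cos_sq B]
  rw [Mq_eq]
  ext i j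
  fin_cases i <;> fin_cases j <;>
    simp only [Matrix.cons_val', Matrix.cons_val_zero, Matrix.cons_val_one,
      Matrix.head_cons, Matrix.empty_val', Matrix.cons_val_fin_one, Matrix.head_fin_const,
      Fin.mk_zero, Fin.mk_one, Fin.isValue, Matrix.mul_apply, Fin.sum_univ_two,
      Matrix.conjTranspose_apply, Complex.star_def, map_neg, _root_.map_mul,
      Complex.conj_ofReal, conj_exp_I, conj_exp_negI, Matrix.one_apply, Matrix.of_apply, if_true]
  · linear_combination ((Real.cos B : ℂ))^2 * exp_negI_mul_exp_I (A + C) +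
      ((Real.sin B : ℂ))^2 * exp_negI_mul_exp_I (A - C) + hcs
  · rw [if_neg (by decide)]
    ring
  · rw [if_neg (by decide)]
    ring
  · linear_combination ((Real.sin B : ℂ))^2 * exp_negI_mul_exp_I (A - C) +
      ((Real.cos B : ℂ))^2 * exp_negI_mul_exp_I (A + C) + hcs

end HEA
namespace HEA
variable {n : ℕ}

lemma heaR_apply (a b c : Fin n → ℝ) (y x : Fin n → Fin 2) :
    heaR n a b c y x = ∏ k : Fin n, Mq (a k) (b k) (c k) (y k) (x k) := rfl

lemma heaR_mul_conjTranspose (a b c : Fin n → ℝ) :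
    heaR n a b c * (heaR n a b c)ᴴ = 1 := by
  ext y x
  rw [Matrix.mul_apply]
  have h1 : ∀ z : Fin n → Fin 2, heaR n a b c y z * (heaR n a b c)ᴴ z x =
      ∏ k : Fin n, (Mq (a k) (b k) (c k) (y k) (z k) *
        (starRingEnd ℂ) (Mq (a k) (b k) (c k) (x k) (z k))) := by
    intro z
    rw [Matrix.conjTranspose_apply, heaR_apply, heaR_apply, Complex.star_def, map_prod,
      ← Finset.prod_mul_distrib]
  simp only [h1]
  rw [← Fintype.prod_sum fun k t => Mq (a k) (b k) (c k) (y k) t *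
      (starRingEnd ℂ) (Mq (a k) (b k) (c k) (x k) t)]
  have h2 : ∀ k : Fin n, (∑ t : Fin 2, Mq (a k) (b k) (c k) (y k) t *
      (starRingEnd ℂ) (Mq (a k) (b k) (c k) (x k) t)) =
      (1 : Matrix (Fin 2) (Fin 2) ℂ) (y k) (x k) := by
    intro k
    rw [← Mq_mul_conjTranspose (a k) (b k) (c k), Matrix.mul_apply]
    refine Finset.sum_congr rfl fun t _ => ?_
    rw [Matrix.conjTranspose_apply, Complex.star_def]
  rw [Finset.prod_congr rfl fun k _ => h2 k]
  simp only [Matrix.one_apply]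
  rw [prod_delta]

end HEA
namespace HEA
variable {n : ℕ}

lemma Tm_diag (s t : Fin 2) (θ : ℝ) :
    Tm s θ t t = if s = 1 then (Real.cos θ : ℂ) else 1 := by
  fin_cases s <;> fin_cases t <;> simp [RY, Matrix.one_apply]

lemma Tm_offdiag {s' t' : Fin 2} (h : s' ≠ t') (s : Fin 2) {θ : ℝ}
    (hs : Real.sin θ = 0) : Tm s θ s' t' = 0 := by
  fin_cases s <;> fin_cases s' <;> fin_cases t' <;>
    simp_all [RY, Matrix.one_apply]

lemma Tm_01 (s : Fin 2) (θ : ℝ) :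
    Tm s θ 0 1 = if s = 1 then -(Real.sin θ : ℂ) else 0 := by
  fin_cases s <;> simp [RY, Matrix.one_apply]

def ze : Fin n → Fin 2 := fun _ => 0
def ee (j : Fin n) : Fin n → Fin 2 := fun k => if k = j then 1 else 0
def ee2 (j j' : Fin n) : Fin n → Fin 2 := fun k => if k = j ∨ k = j' then 1 else 0

lemma heaD_ze_ze (hn2 : 2 ≤ n) (d : Fin n → ℝ) : heaD n d ze ze = 1 := by
  have hn : 0 < n := by omega
  rw [heaD_apply hn hn2 d]
  rw [show ze (em hn (n-1)) = 0 from rfl]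
  rw [Tm_diag, if_neg (by decide), one_mul]
  refine Finset.prod_eq_one fun k hk => ?_
  have h1 : (if k = 0 then ze (em hn 0) else ze (em hn k)) = 0 := by
    split_ifs <;> rfl
  rw [h1, Tm_diag, if_neg (by decide)]

lemma heaD_ze_ee (hn2 : 2 ≤ n) (d : Fin n → ℝ) (j : Fin n) :
    heaD n d ze (ee j) = 0 := by
  have hn : 0 < n := by omega
  rw [heaD_apply hn hn2 d]
  by_cases hj : j = em hn 0
  · -- final factor is zero
    rw [show ze (em hn (n-1)) = 0 from rfl, Tm_zero]
    rw [show ee j (em hn 0) = 1 by simp [ee, hj]]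
    rw [show ze (em hn 0) = 0 from rfl]
    rw [show (1 : Matrix (Fin 2) (Fin 2) ℂ) 0 1 = 0 by simp [Matrix.one_apply]]
    rw [zero_mul]
  · -- factor at k = j.val - 1 is zero
    have hjv : 1 ≤ (j : ℕ) := by
      rcases Nat.eq_zero_or_pos (j : ℕ) with h | h
      · exact absurd (Fin.ext (h.trans (em_val hn hn).symm)) hj
      · exact h
    have hk : (j : ℕ) - 1 ∈ Finset.range (n - 1) := by
      rw [Finset.mem_range]; have := j.isLt; omega
    rw [Finset.prod_eq_zero hk, mul_zero]
    have hemj : em hn (((j : ℕ) - 1) + 1) = j := by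
      apply Fin.ext; rw [em_val hn (by have := j.isLt; omega)]; omega
    have hctrl : (if (j : ℕ) - 1 = 0 then ee j (em hn 0) else ze (em hn ((j : ℕ) - 1))) = 0 := by
      split_ifs with h
      · simp [ee, Ne.symm hj]
      · rfl
    rw [hctrl, Tm_zero, hemj]
    rw [show ze j = 0 from rfl, show ee j j = 1 by simp [ee]]
    simp [Matrix.one_apply]

lemma heaD_ee_ee (hn2 : 2 ≤ n) (d : Fin n → ℝ) (j : Fin n) :
    heaD n d (ee j) (ee j) = (Real.cos (d j) : ℂ) := by
  have hn : 0 < n := by omega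
  rw [heaD_apply hn hn2 d]
  have hfac : ∀ k : ℕ, k < n →
      Tm (if k = 0 then ee j (em hn 0) else ee j (em hn k)) (d (em hn k))
        (ee j (em hn (k+1))) (ee j (em hn (k+1))) =
      (if em hn k = j then (Real.cos (d (em hn k)) : ℂ) else 1) := by
    intro k hk
    have h1 : (if k = 0 then ee j (em hn 0) else ee j (em hn k)) = ee j (em hn k) := by
      split_ifs with h
      · rw [h]
      · rfl
    rw [h1, Tm_diag]
    congr 1
    simp only [ee, eq_iff_iff]
    constructor
    · intro h; split_ifs at h with h' ; exact h'; exact absurd h (by decide)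
    · intro h; rw [if_pos h]
  have hprod : (∏ k ∈ Finset.range (n-1),
      Tm (if k = 0 then ee j (em hn 0) else ee j (em hn k)) (d (em hn k))
        (ee j (em hn (k+1))) (ee j (em hn (k+1)))) =
      ∏ k ∈ Finset.range (n-1), (if em hn k = j then (Real.cos (d (em hn k)) : ℂ) else 1) :=
    Finset.prod_congr rfl fun k hk => hfac k (by have := Finset.mem_range.mp hk; omega)
  rw [hprod]
  have hfin : Tm (ee j (em hn (n-1))) (d (em hn (n-1))) (ee j (em hn 0)) (ee j (em hn 0)) =
      (if em hn (n-1) = j then (Real.cos (d (em hn (n-1))) : ℂ) else 1) := by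
    rw [Tm_diag]
    congr 1
    simp only [ee, eq_iff_iff]
    constructor
    · intro h; split_ifs at h with h'; exact h'; exact absurd h (by decide)
    · intro h; rw [if_pos h]
  rw [hfin]
  have hcomb : ((if em hn (n-1) = j then (Real.cos (d (em hn (n-1))) : ℂ) else 1) *
      ∏ k ∈ Finset.range (n-1), (if em hn k = j then (Real.cos (d (em hn k)) : ℂ) else 1)) =
      ∏ k ∈ Finset.range n, (if em hn k = j then (Real.cos (d (em hn k)) : ℂ) else 1) := by
    rw [mul_comm, ← Finset.prod_range_succ (fun k => if em hn k = j then (Real.cos (d (em hn k)) : ℂ) else 1) (n-1),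
      show n - 1 + 1 = n by omega]
  rw [hcomb]
  rw [Finset.prod_eq_single_of_mem (j : ℕ) (Finset.mem_range.mpr j.isLt)]
  · rw [show em hn (j : ℕ) = j from Fin.ext (em_val hn j.isLt), if_pos rfl]
  · intro k hk hkj
    rw [if_neg]
    intro h
    exact hkj ((em_val hn (Finset.mem_range.mp hk)).symm.trans (congrArg Fin.val h))

end HEA
namespace HEA
variable {n : ℕ}

lemma RY00 (θ : ℝ) : RY θ 0 0 = (Real.cos θ : ℂ) := by simp [RY]
lemma RY01 (θ : ℝ) : RY θ 0 1 = -(Real.sin θ : ℂ) := by simp [RY]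

lemma ee_apply (j k : Fin n) : ee j k = if k = j then 1 else 0 := rfl
lemma ee2_apply (j j' k : Fin n) : ee2 j j' k = if k = j ∨ k = j' then 1 else 0 := rfl

lemma heaD_ee_ee2_mid (hn3 : 3 ≤ n) (d : Fin n → ℝ) (j : Fin n) (hj : (j : ℕ) ≤ n - 2) :
    heaD n d (ee j) (ee2 j (fsucc j)) = -(Real.sin (d j) : ℂ) := by
  have hn : 0 < n := by omega
  have hjn : (j : ℕ) < n := j.isLt
  have hj'v : ((fsucc j : Fin n) : ℕ) = (j : ℕ) + 1 := by
    simp [fsucc, Nat.mod_eq_of_lt (by omega : (j:ℕ) + 1 < n)]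
  set j' := fsucc j with hj'
  rw [heaD_apply hn (by omega) d]
  have hfin : Tm (ee j (em hn (n-1))) (d (em hn (n-1)))
      (ee j (em hn 0)) (ee2 j j' (em hn 0)) = 1 := by
    have h1 : ee j (em hn (n-1)) = 0 := by
      rw [ee_apply, if_neg]
      intro h; have := congrArg Fin.val h; rw [em_val hn (by omega)] at this; omega
    have h2 : ee2 j j' (em hn 0) = ee j (em hn 0) := by
      rw [ee2_apply, ee_apply]
      have : em hn 0 ≠ j' := by
        intro h; have := congrArg Fin.val h; rw [em_val hn hn, hj'v] at this; omega
      by_cases h : em hn 0 = j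
      · rw [if_pos (Or.inl h), if_pos h]
      · rw [if_neg (by tauto), if_neg h]
    rw [h1, h2, Tm_zero, Matrix.one_apply_eq]
  rw [hfin, one_mul]
  rw [Finset.prod_eq_single_of_mem (j : ℕ) (Finset.mem_range.mpr (by omega))]
  · have hctrl : (if (j:ℕ) = 0 then ee2 j j' (em hn 0) else ee j (em hn (j:ℕ))) = 1 := by
      split_ifs with h
      · rw [ee2_apply, if_pos (Or.inl (Fin.ext ((em_val hn hn).trans h.symm)))]
      · rw [ee_apply, if_pos (Fin.ext (em_val hn hjn))]
    have hout : ee j (em hn ((j:ℕ)+1)) = 0 := by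
      rw [ee_apply, if_neg]
      intro h; have := congrArg Fin.val h; rw [em_val hn (by omega)] at this; omega
    have hin : ee2 j j' (em hn ((j:ℕ)+1)) = 1 := by
      rw [ee2_apply, if_pos (Or.inr (Fin.ext ((em_val hn (by omega)).trans hj'v.symm)))]
    rw [hctrl, hout, hin, Tm_one, RY01]
    rw [show em hn (j:ℕ) = j from Fin.ext (em_val hn hjn)]
  · intro k hk hkj
    have hk' : k < n - 1 := Finset.mem_range.mp hk
    have hctrl : (if k = 0 then ee2 j j' (em hn 0) else ee j (em hn k)) = 0 := by
      split_ifs with h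
      · subst h
        rw [ee2_apply, if_neg]
        push_neg
        constructor
        · intro hh; have := congrArg Fin.val hh; rw [em_val hn hn] at this; omega
        · intro hh; have := congrArg Fin.val hh; rw [em_val hn hn, hj'v] at this; omega
      · rw [ee_apply, if_neg]
        intro hh; have := congrArg Fin.val hh; rw [em_val hn (by omega)] at this; omega
    have heq : ee2 j j' (em hn (k+1)) = ee j (em hn (k+1)) := by
      rw [ee2_apply, ee_apply]
      have : em hn (k+1) ≠ j' := by
        intro hh; have := congrArg Fin.val hh; rw [em_val hn (by omega), hj'v] at this; omega
      by_cases h : em hn (k+1) = j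
      · rw [if_pos (Or.inl h), if_pos h]
      · rw [if_neg (by tauto), if_neg h]
    rw [hctrl, heq, Tm_zero, Matrix.one_apply_eq]

lemma heaD_ee_ee2_last (hn : 0 < n) (hn3 : 3 ≤ n) (d : Fin n → ℝ) :
    heaD n d (ee (em hn (n-1)))
        (ee2 (em hn (n-1)) (em hn 0)) =
      -(Real.sin (d (em hn (n-1))) : ℂ) *
        (Real.cos (d (em hn 0)) : ℂ) := by
  set jn := em hn (n-1) with hjn
  set q0 := em hn 0 with hq0
  have hjnv : (jn : ℕ) = n - 1 := em_val hn (by omega)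
  have hq0v : (q0 : ℕ) = 0 := em_val hn hn
  rw [heaD_apply hn (by omega) d]
  have h1 : ee jn jn = 1 := by rw [ee_apply, if_pos rfl]
  have h2 : ee jn q0 = 0 := by
    rw [ee_apply, if_neg]; intro h; have := congrArg Fin.val h; omega
  have h3 : ee2 jn q0 q0 = 1 := by rw [ee2_apply, if_pos (Or.inr rfl)]
  rw [h1, h2, h3, Tm_one, RY01]
  congr 1
  rw [Finset.prod_eq_single_of_mem 0 (Finset.mem_range.mpr (by omega))]
  · rw [if_pos rfl, Tm_one]
    have ho : ee jn (em hn 1) = 0 := by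
      rw [ee_apply, if_neg]
      intro h; have := congrArg Fin.val h; rw [em_val hn (by omega)] at this; omega
    have hi : ee2 jn q0 (em hn 1) = 0 := by
      rw [ee2_apply, if_neg]
      push_neg
      constructor
      · intro h; have := congrArg Fin.val h; rw [em_val hn (by omega)] at this; omega
      · intro h; have := congrArg Fin.val h; rw [em_val hn (by omega), hq0v] at this; omega
    rw [ho, hi, RY00]
  · intro k hk hk0
    have hk' : k < n - 1 := Finset.mem_range.mp hk
    have hctrl : ee jn (em hn k) = 0 := by
      rw [ee_apply, if_neg]
      intro h; have := congrArg Fin.val h; rw [em_val hn (by omega)] at this; omega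
    have heq : ee2 jn q0 (em hn (k+1)) = ee jn (em hn (k+1)) := by
      rw [ee2_apply, ee_apply]
      have : em hn (k+1) ≠ q0 := by
        intro h; have := congrArg Fin.val h; rw [em_val hn (by omega), hq0v] at this; omega
      by_cases h : em hn (k+1) = jn
      · rw [if_pos (Or.inl h), if_pos h]
      · rw [if_neg (by tauto), if_neg h]
    rw [if_neg hk0, hctrl, heq, Tm_zero, Matrix.one_apply_eq]

end HEA
namespace HEA
variable {n : ℕ}

lemma heaD_diag (hn2 : 2 ≤ n) (d : Fin n → ℝ) (hsin : ∀ i, Real.sin (d i) = 0)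
    (y x : Fin n → Fin 2) :
    heaD n d y x = if x = y then
      (∏ k : Fin n, if y k = 1 then (Real.cos (d k) : ℂ) else 1) else 0 := by
  have hn : 0 < n := by omega
  rw [heaD_apply hn hn2 d]
  by_cases hxy : x = y
  · subst hxy
    rw [if_pos rfl]
    have hfin : Tm (x (em hn (n-1))) (d (em hn (n-1))) (x (em hn 0)) (x (em hn 0)) =
        (if x (em hn (n-1)) = 1 then (Real.cos (d (em hn (n-1))) : ℂ) else 1) := Tm_diag _ _ _
    have hfac : ∀ k ∈ Finset.range (n-1),
        Tm (if k = 0 then x (em hn 0) else x (em hn k)) (d (em hn k))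
          (x (em hn (k+1))) (x (em hn (k+1))) =
        (if x (em hn k) = 1 then (Real.cos (d (em hn k)) : ℂ) else 1) := by
      intro k hk
      have h1 : (if k = 0 then x (em hn 0) else x (em hn k)) = x (em hn k) := by
        split_ifs with h
        · rw [h]
        · rfl
      rw [h1, Tm_diag]
    rw [hfin, Finset.prod_congr rfl hfac]
    have hcomb : ((if x (em hn (n-1)) = 1 then (Real.cos (d (em hn (n-1))) : ℂ) else 1) *
        ∏ k ∈ Finset.range (n-1), (if x (em hn k) = 1 then (Real.cos (d (em hn k)) : ℂ) else 1)) =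
        ∏ k ∈ Finset.range n, (if x (em hn k) = 1 then (Real.cos (d (em hn k)) : ℂ) else 1) := by
      rw [mul_comm, ← Finset.prod_range_succ
        (fun k => if x (em hn k) = 1 then (Real.cos (d (em hn k)) : ℂ) else 1) (n-1),
        show n - 1 + 1 = n by omega]
    rw [hcomb, ← Fin.prod_univ_eq_prod_range
      (fun k => if x (em hn k) = 1 then (Real.cos (d (em hn k)) : ℂ) else 1) n]
    refine Finset.prod_congr rfl fun j _ => ?_
    rw [show em hn (j : ℕ) = j from Fin.ext (em_val hn j.isLt)]
  · rw [if_neg hxy]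
    obtain ⟨j₀, hj₀⟩ := Function.ne_iff.mp hxy
    by_cases hj0 : j₀ = em hn 0
    · have hne : y (em hn 0) ≠ x (em hn 0) := by
        rw [← hj0]; exact Ne.symm hj₀
      rw [Tm_offdiag hne _ (hsin _), zero_mul]
    · have hjv : 1 ≤ (j₀ : ℕ) := by
        rcases Nat.eq_zero_or_pos (j₀ : ℕ) with h | h
        · exact absurd (Fin.ext (h.trans (em_val hn hn).symm)) hj0
        · exact h
      have hk : (j₀ : ℕ) - 1 ∈ Finset.range (n - 1) := by
        rw [Finset.mem_range]; have := j₀.isLt; omega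
      rw [Finset.prod_eq_zero hk, mul_zero]
      have hemj : em hn (((j₀ : ℕ) - 1) + 1) = j₀ := by
        apply Fin.ext; rw [em_val hn (by have := j₀.isLt; omega)]; omega
      rw [hemj]
      exact Tm_offdiag (Ne.symm hj₀) _ (hsin _)

end HEA
namespace HEA
variable {n : ℕ}

lemma exp_I_ofReal_of_sin_eq_zero {B : ℝ} (h : Real.sin B = 0) :
    Complex.exp (Complex.I * (B : ℂ)) = (Real.cos B : ℂ) := by
  rw [mul_comm, Complex.exp_mul_I, ← Complex.ofReal_sin, ← Complex.ofReal_cos, h]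
  simp

lemma K_eq (A B C D : ℝ) (hsinB : Real.sin B = 0)
    (hkey : (Real.cos D : ℂ) * Complex.exp (Complex.I * ((A + C : ℝ) : ℂ)) =
      Complex.exp (-(Complex.I * ((A + C : ℝ) : ℂ)))) (s t : Fin 2) :
    (if s = 1 then (Real.cos D : ℂ) else 1) * Mq A B C s t =
      Complex.exp (Complex.I * ((B - (A + C) : ℝ) : ℂ)) * (if s = t then 1 else 0) := by
  have hexp : Complex.exp (Complex.I * ((B - (A + C) : ℝ) : ℂ)) =
      (Real.cos B : ℂ) * Complex.exp (-(Complex.I * ((A + C : ℝ) : ℂ))) := by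
    rw [show Complex.I * ((B - (A + C) : ℝ) : ℂ) =
      Complex.I * (B : ℂ) + -(Complex.I * ((A + C : ℝ) : ℂ)) by push_cast; ring]
    rw [Complex.exp_add, exp_I_ofReal_of_sin_eq_zero hsinB]
  rw [Mq_eq]
  fin_cases s <;> fin_cases t
  · simp only [Matrix.cons_val', Matrix.cons_val_zero, Matrix.empty_val',
      Matrix.cons_val_fin_one, Matrix.of_apply, Fin.mk_zero, Fin.isValue]
    rw [if_pos trivial, hexp,
      show (if (0 : Fin 2) = 1 then (Real.cos D : ℂ) else 1) = 1 by norm_num]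
    ring
  · simp only [Matrix.cons_val', Matrix.cons_val_zero, Matrix.cons_val_one,
      Matrix.head_cons, Matrix.empty_val', Matrix.cons_val_fin_one, Matrix.of_apply,
      Fin.mk_zero, Fin.mk_one, Fin.isValue]
    simp [hsinB]
  · simp only [Matrix.cons_val', Matrix.cons_val_zero, Matrix.cons_val_one,
      Matrix.head_cons, Matrix.empty_val', Matrix.cons_val_fin_one, Matrix.of_apply,
      Fin.mk_zero, Fin.mk_one, Fin.isValue, Matrix.head_fin_const]
    simp [hsinB]
  · simp only [Matrix.cons_val', Matrix.cons_val_one, Matrix.head_cons,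
      Matrix.empty_val', Matrix.cons_val_fin_one, Matrix.of_apply, Fin.mk_one,
      Fin.isValue, Matrix.head_fin_const]
    rw [if_pos trivial, if_pos trivial, hexp]
    linear_combination (Real.cos B : ℂ) * hkey

lemma hea_backward (hn : 3 ≤ n) (a b c d : Fin n → ℝ)
    (h1 : ∀ i : Fin n, ∃ w : ℤ, d i = Real.pi * w)
    (h2 : ∀ i : Fin n, ∃ u : ℤ, b i = Real.pi * u)
    (h3 : ∀ i : Fin n,
      (∀ w : ℤ, d i = Real.pi * (2 * w) → ∃ v : ℤ, a i + c i = Real.pi * v) ∧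
      (∀ w : ℤ, d i = Real.pi * (2 * w - 1) →
        ∃ v : ℤ, a i + c i = Real.pi * (1 / 2 + v))) :
    heaV n a b c d = Complex.exp (Complex.I * ((∑ k : Fin n, (b k - (a k + c k)) : ℝ) : ℂ)) •
      (1 : Matrix (Fin n → Fin 2) (Fin n → Fin 2) ℂ) := by
  have hsind : ∀ i, Real.sin (d i) = 0 := by
    intro i
    obtain ⟨w, hw⟩ := h1 i
    rw [hw, mul_comm]
    exact Real.sin_int_mul_pi w
  have hsinb : ∀ i, Real.sin (b i) = 0 := by
    intro i
    obtain ⟨u, hu⟩ := h2 i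
    rw [hu, mul_comm]
    exact Real.sin_int_mul_pi u
  have hkey : ∀ i : Fin n, (Real.cos (d i) : ℂ) *
      Complex.exp (Complex.I * ((a i + c i : ℝ) : ℂ)) =
      Complex.exp (-(Complex.I * ((a i + c i : ℝ) : ℂ))) := by
    intro i
    obtain ⟨w, hw⟩ := h1 i
    have hexpne := Complex.exp_ne_zero (Complex.I * ((a i + c i : ℝ) : ℂ))
    have hprod : Complex.exp (Complex.I * ((a i + c i : ℝ) : ℂ)) *
        Complex.exp (-(Complex.I * ((a i + c i : ℝ) : ℂ))) = 1 := by
      rw [← Complex.exp_add]; simp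
    rcases Int.even_or_odd w with ⟨m, hm⟩ | ⟨m, hm⟩
    · obtain ⟨v, hv⟩ := (h3 i).1 m (by rw [hw, hm]; push_cast; ring)
      have hcos : Real.cos (d i) = 1 := by
        rw [show d i = (m : ℝ) * (2 * Real.pi) by rw [hw, hm]; push_cast; ring]
        exact Real.cos_int_mul_two_pi m
      have h2e : Complex.exp (Complex.I * ((a i + c i : ℝ) : ℂ)) *
          Complex.exp (Complex.I * ((a i + c i : ℝ) : ℂ)) = 1 := by
        rw [← Complex.exp_add, show Complex.I * ((a i + c i : ℝ) : ℂ) +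
          Complex.I * ((a i + c i : ℝ) : ℂ) = (v : ℂ) * (2 * (Real.pi : ℂ) * Complex.I) by
            push_cast [hv]; ring]
        exact Complex.exp_int_mul_two_pi_mul_I v
      rw [hcos, Complex.ofReal_one, one_mul]
      exact mul_left_cancel₀ hexpne (h2e.trans hprod.symm)
    · obtain ⟨v, hv⟩ := (h3 i).2 (m + 1) (by rw [hw, hm]; push_cast; ring)
      have hcos : Real.cos (d i) = -1 := by
        rw [show d i = (m : ℝ) * (2 * Real.pi) + Real.pi by rw [hw, hm]; push_cast; ring,
          Real.cos_add_pi, Real.cos_int_mul_two_pi]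
      have h2e : Complex.exp (Complex.I * ((a i + c i : ℝ) : ℂ)) *
          Complex.exp (Complex.I * ((a i + c i : ℝ) : ℂ)) = -1 := by
        rw [← Complex.exp_add, show Complex.I * ((a i + c i : ℝ) : ℂ) +
          Complex.I * ((a i + c i : ℝ) : ℂ) = (Real.pi : ℂ) * Complex.I +
            (v : ℂ) * (2 * (Real.pi : ℂ) * Complex.I) by push_cast [hv]; ring,
          Complex.exp_add, Complex.exp_pi_mul_I, Complex.exp_int_mul_two_pi_mul_I]
        ring
      rw [hcos, Complex.ofReal_neg, Complex.ofReal_one]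
      apply mul_left_cancel₀ hexpne
      linear_combination (-1 : ℂ) * h2e - hprod
  -- now assemble
  ext y x
  have hmul : heaV n a b c d y x = ∑ z : Fin n → Fin 2, heaD n d y z * heaR n a b c z x :=
    Matrix.mul_apply
  rw [hmul]
  have hdd : ∀ z : Fin n → Fin 2, heaD n d y z * heaR n a b c z x =
      (if z = y then ((∏ k : Fin n, if y k = 1 then (Real.cos (d k) : ℂ) else 1) *
        heaR n a b c z x) else 0) := by
    intro z
    rw [heaD_diag (by omega) d hsind y z]
    split_ifs <;> ring
  rw [Finset.sum_congr rfl fun z _ => hdd z, Finset.sum_ite_eq' Finset.univ y, if_pos (Finset.mem_univ y)]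
  rw [heaR_apply, ← Finset.prod_mul_distrib]
  have hK : ∀ k : Fin n, (if y k = 1 then (Real.cos (d k) : ℂ) else 1) *
      Mq (a k) (b k) (c k) (y k) (x k) =
      Complex.exp (Complex.I * ((b k - (a k + c k) : ℝ) : ℂ)) * (if y k = x k then 1 else 0) :=
    fun k => K_eq (a k) (b k) (c k) (d k) (hsinb k) (hkey k) (y k) (x k)
  rw [Finset.prod_congr rfl fun k _ => hK k, Finset.prod_mul_distrib, prod_delta,
    ← Complex.exp_sum]
  rw [show (∑ k : Fin n, Complex.I * ((b k - (a k + c k) : ℝ) : ℂ)) =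
      Complex.I * ((∑ k : Fin n, (b k - (a k + c k)) : ℝ) : ℂ) by
    rw [← Finset.mul_sum]
    congr 1
    push_cast
    rfl]
  rw [Matrix.smul_apply, Matrix.one_apply, smul_eq_mul]

end HEA
namespace HEA
variable {n : ℕ}

set_option linter.unusedTactic false in
lemma hea_forward (hn : 3 ≤ n) (a b c d : Fin n → ℝ) (α : ℝ)
    (hV : heaV n a b c d = Complex.exp (Complex.I * (α : ℂ)) •
      (1 : Matrix (Fin n → Fin 2) (Fin n → Fin 2) ℂ)) :
    ((∀ i : Fin n, ∃ w : ℤ, d i = Real.pi * w) ∧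
     (∀ i : Fin n, ∃ u : ℤ, b i = Real.pi * u) ∧
     (∀ i : Fin n,
       (∀ w : ℤ, d i = Real.pi * (2 * w) → ∃ v : ℤ, a i + c i = Real.pi * v) ∧
       (∀ w : ℤ, d i = Real.pi * (2 * w - 1) →
         ∃ v : ℤ, a i + c i = Real.pi * (1 / 2 + v)))) := by
  have hn0 : 0 < n := by omega
  have hn2 : 2 ≤ n := by omega
  set L := Complex.exp (Complex.I * (α : ℂ)) with hL
  have hLne : L ≠ 0 := Complex.exp_ne_zero _
  have hD : heaD n d = L • (heaR n a b c)ᴴ := by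
    calc heaD n d = heaD n d * (heaR n a b c * (heaR n a b c)ᴴ) := by
          rw [heaR_mul_conjTranspose, Matrix.mul_one]
    _ = (heaD n d * heaR n a b c) * (heaR n a b c)ᴴ := by rw [Matrix.mul_assoc]
    _ = (L • (1 : Matrix (Fin n → Fin 2) (Fin n → Fin 2) ℂ)) * (heaR n a b c)ᴴ := by
          rw [show heaD n d * heaR n a b c = heaV n a b c d from rfl, hV]
    _ = L • (heaR n a b c)ᴴ := by rw [Matrix.smul_mul, Matrix.one_mul]
  have hDe : ∀ y x : Fin n → Fin 2, heaD n d y x =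
      L * ∏ k : Fin n, (starRingEnd ℂ) (Mq (a k) (b k) (c k) (x k) (y k)) := by
    intro y x
    rw [hD, Matrix.smul_apply, Matrix.conjTranspose_apply, heaR_apply, Complex.star_def,
      map_prod, smul_eq_mul]
  set G : Fin n → Fin 2 → Fin 2 → ℂ :=
    fun k s t => (starRingEnd ℂ) (Mq (a k) (b k) (c k) s t) with hG
  have eq0 : (1 : ℂ) = L * ∏ k : Fin n, G k 0 0 :=
    (heaD_ze_ze hn2 d).symm.trans (hDe ze ze)
  have hprodne : (∏ k : Fin n, G k 0 0) ≠ 0 := by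
    intro h
    rw [h, mul_zero] at eq0
    exact one_ne_zero eq0
  have hG0ne : ∀ k : Fin n, G k 0 0 ≠ 0 :=
    fun k => Finset.prod_ne_zero_iff.mp hprodne k (Finset.mem_univ k)
  have herase_ne : ∀ j : Fin n, (∏ k ∈ Finset.univ.erase j, G k 0 0) ≠ 0 :=
    fun j => Finset.prod_ne_zero_iff.mpr fun k _ => hG0ne k
  -- step 1 : off-diagonal entries of Mq vanish
  have hM10 : ∀ j : Fin n, Mq (a j) (b j) (c j) 1 0 = 0 := by
    intro j
    have h : (0 : ℂ) = L * ∏ k : Fin n, G k (ee j k) (ze k) :=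
      (heaD_ze_ee hn2 d j).symm.trans (hDe ze (ee j))
    rw [← Finset.mul_prod_erase _ _ (Finset.mem_univ j)] at h
    have he : (∏ k ∈ Finset.univ.erase j, G k (ee j k) (ze k)) =
        ∏ k ∈ Finset.univ.erase j, G k 0 0 := by
      refine Finset.prod_congr rfl fun k hk => ?_
      rw [show ee j k = 0 by rw [ee_apply, if_neg (Finset.mem_erase.mp hk).1]]
      rfl
    rw [he, show ee j j = 1 by rw [ee_apply, if_pos rfl]] at h
    have hGj : G j 1 (ze j) = 0 := by
      by_contra hne
      exact (mul_ne_zero hLne (mul_ne_zero hne (herase_ne j))) h.symm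
    have h2 : (starRingEnd ℂ) (Mq (a j) (b j) (c j) 1 0) = 0 := hGj
    have h3 := congrArg (starRingEnd ℂ) h2
    simpa using h3
  have hsinb : ∀ j : Fin n, Real.sin (b j) = 0 := by
    intro j
    have h := hM10 j
    rw [Mq_eq] at h
    have h' : Complex.exp (-(Complex.I * ((a j - c j : ℝ) : ℂ))) * (Real.sin (b j) : ℂ) = 0 := by
      simpa using h
    rcases mul_eq_zero.mp h' with h'' | h''
    · exact absurd h'' (Complex.exp_ne_zero _)
    · exact_mod_cast h''
  -- step 2 : key phase identity per wire
  have key2 : ∀ j : Fin n, (Real.cos (d j) : ℂ) * G j 0 0 = G j 1 1 := by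
    intro j
    have h2 : (Real.cos (d j) : ℂ) = L * ∏ k : Fin n, G k (ee j k) (ee j k) :=
      (heaD_ee_ee hn2 d j).symm.trans (hDe (ee j) (ee j))
    rw [← Finset.mul_prod_erase _ _ (Finset.mem_univ j)] at h2
    have he : (∏ k ∈ Finset.univ.erase j, G k (ee j k) (ee j k)) =
        ∏ k ∈ Finset.univ.erase j, G k 0 0 := by
      refine Finset.prod_congr rfl fun k hk => ?_
      rw [show ee j k = 0 by rw [ee_apply, if_neg (Finset.mem_erase.mp hk).1]]
    rw [he, show ee j j = 1 by rw [ee_apply, if_pos rfl]] at h2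
    have h0 := eq0
    rw [← Finset.mul_prod_erase _ _ (Finset.mem_univ j)] at h0
    linear_combination (G j 0 0) * h2 - (G j 1 1) * h0
  have hG00 : ∀ j : Fin n, G j 0 0 =
      Complex.exp (Complex.I * ((a j + c j : ℝ) : ℂ)) * (Real.cos (b j) : ℂ) := by
    intro j
    rw [hG]
    simp only []
    rw [Mq_eq]
    have : (!![Complex.exp (-(Complex.I * ((a j + c j : ℝ) : ℂ))) * (Real.cos (b j) : ℂ),
       -(Complex.exp (Complex.I * ((a j - c j : ℝ) : ℂ)) * (Real.sin (b j) : ℂ));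
       Complex.exp (-(Complex.I * ((a j - c j : ℝ) : ℂ))) * (Real.sin (b j) : ℂ),
       Complex.exp (Complex.I * ((a j + c j : ℝ) : ℂ)) * (Real.cos (b j) : ℂ)] :
       Matrix (Fin 2) (Fin 2) ℂ) 0 0 =
       Complex.exp (-(Complex.I * ((a j + c j : ℝ) : ℂ))) * (Real.cos (b j) : ℂ) := by simp
    rw [this, _root_.map_mul, conj_exp_negI, Complex.conj_ofReal]
  have hG11 : ∀ j : Fin n, G j 1 1 =
      Complex.exp (-(Complex.I * ((a j + c j : ℝ) : ℂ))) * (Real.cos (b j) : ℂ) := by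
    intro j
    rw [hG]
    simp only []
    rw [Mq_eq]
    have : (!![Complex.exp (-(Complex.I * ((a j + c j : ℝ) : ℂ))) * (Real.cos (b j) : ℂ),
       -(Complex.exp (Complex.I * ((a j - c j : ℝ) : ℂ)) * (Real.sin (b j) : ℂ));
       Complex.exp (-(Complex.I * ((a j - c j : ℝ) : ℂ))) * (Real.sin (b j) : ℂ),
       Complex.exp (Complex.I * ((a j + c j : ℝ) : ℂ)) * (Real.cos (b j) : ℂ)] :
       Matrix (Fin 2) (Fin 2) ℂ) 1 1 =
       Complex.exp (Complex.I * ((a j + c j : ℝ) : ℂ)) * (Real.cos (b j) : ℂ) := by simp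
    rw [this, _root_.map_mul, conj_exp_I, Complex.conj_ofReal]
  have hcbne : ∀ j : Fin n, (Real.cos (b j) : ℂ) ≠ 0 := by
    intro j
    have := hG0ne j
    rw [hG00 j] at this
    exact fun h => this (by rw [h, mul_zero])
  have keyphi : ∀ j : Fin n, (Real.cos (d j) : ℂ) =
      Complex.exp (-(Complex.I * ((2 * (a j + c j) : ℝ) : ℂ))) := by
    intro j
    have h := key2 j
    rw [hG00 j, hG11 j] at h
    have hstar : (Real.cos (d j) : ℂ) * Complex.exp (Complex.I * ((a j + c j : ℝ) : ℂ)) =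
        Complex.exp (-(Complex.I * ((a j + c j : ℝ) : ℂ))) := by
      apply mul_right_cancel₀ (hcbne j)
      linear_combination h
    have hprod : Complex.exp (Complex.I * ((a j + c j : ℝ) : ℂ)) *
        Complex.exp (-(Complex.I * ((a j + c j : ℝ) : ℂ))) = 1 := by
      rw [← Complex.exp_add]; simp
    have hsq : Complex.exp (-(Complex.I * ((a j + c j : ℝ) : ℂ))) *
        Complex.exp (-(Complex.I * ((a j + c j : ℝ) : ℂ))) =
        Complex.exp (-(Complex.I * ((2 * (a j + c j) : ℝ) : ℂ))) := by
      rw [← Complex.exp_add]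
      congr 1
      push_cast
      ring
    linear_combination Complex.exp (-(Complex.I * ((a j + c j : ℝ) : ℂ))) * hstar -
      (Real.cos (d j) : ℂ) * hprod + hsq
  have hcdne : ∀ j : Fin n, Real.cos (d j) ≠ 0 := by
    intro j h
    have := keyphi j
    rw [h] at this
    exact Complex.exp_ne_zero _ (by exact_mod_cast this.symm)
  -- step 3 : sin (d j) = 0
  have hsind : ∀ j : Fin n, Real.sin (d j) = 0 := by
    have hmid : ∀ j : Fin n, (j : ℕ) ≤ n - 2 → Real.sin (d j) = 0 := by
      intro j hj
      have h : -((Real.sin (d j) : ℂ)) = L * ∏ k : Fin n, G k (ee2 j (fsucc j) k) (ee j k) :=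
        (heaD_ee_ee2_mid hn d j hj).symm.trans (hDe (ee j) (ee2 j (fsucc j)))
      have hfs : fsucc j ≠ j := by
        intro hh
        have := congrArg Fin.val hh
        rw [show ((fsucc j : Fin n) : ℕ) = (j : ℕ) + 1 by
          simp [fsucc, Nat.mod_eq_of_lt (by have := j.isLt; omega : (j:ℕ) + 1 < n)]] at this
        omega
      have hzero : G (fsucc j) (ee2 j (fsucc j) (fsucc j)) (ee j (fsucc j)) = 0 := by
        rw [show ee2 j (fsucc j) (fsucc j) = 1 by rw [ee2_apply, if_pos (Or.inr rfl)],
          show ee j (fsucc j) = 0 by rw [ee_apply, if_neg hfs]]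
        show (starRingEnd ℂ) (Mq (a (fsucc j)) (b (fsucc j)) (c (fsucc j)) 1 0) = 0
        rw [hM10 (fsucc j)]
        exact map_zero _
      rw [Finset.prod_eq_zero (Finset.mem_univ (fsucc j)) hzero, mul_zero] at h
      have : (Real.sin (d j) : ℂ) = 0 := by linear_combination -h
      exact_mod_cast this
    intro j
    by_cases hj : (j : ℕ) ≤ n - 2
    · exact hmid j hj
    · have hjv : (j : ℕ) = n - 1 := by have := j.isLt; omega
      have hjem : j = em hn0 (n - 1) := Fin.ext (hjv.trans (em_val hn0 (by omega)).symm)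
      have h : -((Real.sin (d (em hn0 (n-1))) : ℂ)) * (Real.cos (d (em hn0 0)) : ℂ) =
          L * ∏ k : Fin n, G k (ee2 (em hn0 (n-1)) (em hn0 0) k) (ee (em hn0 (n-1)) k) :=
        (heaD_ee_ee2_last hn0 hn d).symm.trans
          (hDe (ee (em hn0 (n-1))) (ee2 (em hn0 (n-1)) (em hn0 0)))
      have hne0 : em hn0 0 ≠ em hn0 (n-1) := by
        intro hh
        have := congrArg Fin.val hh
        rw [em_val hn0 hn0, em_val hn0 (by omega)] at this
        omega
      have hzero : G (em hn0 0) (ee2 (em hn0 (n-1)) (em hn0 0) (em hn0 0))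
          (ee (em hn0 (n-1)) (em hn0 0)) = 0 := by
        rw [show ee2 (em hn0 (n-1)) (em hn0 0) (em hn0 0) = 1 by
            rw [ee2_apply, if_pos (Or.inr rfl)],
          show ee (em hn0 (n-1)) (em hn0 0) = 0 by rw [ee_apply, if_neg hne0]]
        show (starRingEnd ℂ) (Mq (a (em hn0 0)) (b (em hn0 0)) (c (em hn0 0)) 1 0) = 0
        rw [hM10 (em hn0 0)]
        exact map_zero _
      rw [Finset.prod_eq_zero (Finset.mem_univ (em hn0 0)) hzero, mul_zero] at h
      rw [hjem]
      have hsc : (Real.sin (d (em hn0 (n-1))) : ℂ) * (Real.cos (d (em hn0 0)) : ℂ) = 0 := by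
        linear_combination -h
      rcases mul_eq_zero.mp hsc with h' | h'
      · exact_mod_cast h'
      · exact absurd (by exact_mod_cast h') (hcdne (em hn0 0))
  refine ⟨?_, ?_, ?_⟩
  · intro i
    obtain ⟨w, hw⟩ := Real.sin_eq_zero_iff.mp (hsind i)
    exact ⟨w, by linarith [hw]⟩
  · intro i
    obtain ⟨u, hu⟩ := Real.sin_eq_zero_iff.mp (hsinb i)
    exact ⟨u, by linarith [hu]⟩
  · intro i
    constructor
    · intro w hw
      have hcos : Real.cos (d i) = 1 := by
        rw [show d i = (w : ℝ) * (2 * Real.pi) by rw [hw]; push_cast; ring]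
        exact Real.cos_int_mul_two_pi w
      have h1 : Complex.exp (-(Complex.I * ((2 * (a i + c i) : ℝ) : ℂ))) = 1 := by
        rw [← keyphi i, hcos]
        exact Complex.ofReal_one
      obtain ⟨k, hk⟩ := Complex.exp_eq_one_iff.mp h1
      have h2 : Complex.I * ((-(2 * (a i + c i)) : ℝ) : ℂ) =
          Complex.I * (((k : ℝ) * (2 * Real.pi) : ℝ) : ℂ) := by
        push_cast
        push_cast at hk
        linear_combination hk
      have h3 := Complex.ofReal_inj.mp (mul_left_cancel₀ Complex.I_ne_zero h2)
      refine ⟨-k, ?_⟩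
      push_cast
      linarith
    · intro w hw
      have hcos : Real.cos (d i) = -1 := by
        rw [show d i = (w - 1 : ℝ) * (2 * Real.pi) + Real.pi by rw [hw]; push_cast; ring]
        have : ((w - 1 : ℝ)) = ((w - 1 : ℤ) : ℝ) := by push_cast; ring
        rw [this, Real.cos_add_pi, Real.cos_int_mul_two_pi]
      have h1 : Complex.exp (-(Complex.I * ((2 * (a i + c i) : ℝ) : ℂ)) +
          (Real.pi : ℂ) * Complex.I) = 1 := by
        rw [Complex.exp_add, ← keyphi i, hcos, Complex.exp_pi_mul_I]
        push_cast
        ring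
      obtain ⟨k, hk⟩ := Complex.exp_eq_one_iff.mp h1
      have h2 : Complex.I * ((Real.pi - 2 * (a i + c i) : ℝ) : ℂ) =
          Complex.I * (((k : ℝ) * (2 * Real.pi) : ℝ) : ℂ) := by
        push_cast
        push_cast at hk
        linear_combination hk
      have h3 := Complex.ofReal_inj.mp (mul_left_cancel₀ Complex.I_ne_zero h2)
      refine ⟨-k, ?_⟩
      push_cast
      linarith

end HEA

/-- for `n ≥ 3`, a single HEA layer equals the identity up to a global phase
iff every daisy-chain parameter `dᵢ ∈ πℤ`, every middle rotation parameter `bᵢ ∈ πℤ`, and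
for every wire `i`: if the controlled-R_Y gate controlled by wire `i` has angle an even
multiple of π then `aᵢ + cᵢ ∈ πℤ`, while if that angle is an odd multiple of π then
`aᵢ + cᵢ ∈ π(1/2 + ℤ)`. -/
theorem hea_layer_eq_phase_id_iff (n : ℕ) (hn : 3 ≤ n) (a b c d : Fin n → ℝ) :
    (∃ α : ℝ, heaV n a b c d =
        Complex.exp (Complex.I * α) • (1 : Matrix (Fin n → Fin 2) (Fin n → Fin 2) ℂ)) ↔
      ((∀ i : Fin n, ∃ w : ℤ, d i = Real.pi * w) ∧
       (∀ i : Fin n, ∃ u : ℤ, b i = Real.pi * u) ∧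
       (∀ i : Fin n,
         (∀ w : ℤ, d i = Real.pi * (2 * w) → ∃ v : ℤ, a i + c i = Real.pi * v) ∧
         (∀ w : ℤ, d i = Real.pi * (2 * w - 1) →
           ∃ v : ℤ, a i + c i = Real.pi * (1 / 2 + v)))) := by
  constructor
  · rintro ⟨α, hV⟩
    exact HEA.hea_forward hn a b c d α hV
  · rintro ⟨h1, h2, h3⟩
    exact ⟨∑ k : Fin n, (b k - (a k + c k)), HEA.hea_backward hn a b c d h1 h2 h3⟩
end

section
/- Let N ≥ 1, let T ∈ M_N(ℂ) have real entries with Tᵀ = T and Tr(T) ≠ 0, let G ∈ M_N(ℂ) be Hermitian, let B ∈ M_N(ℂ) be unitary, let A ∈ M_N(ℂ), and suppose there exist θ₀, α ∈ ℝ with A·exp(−iθ₀G)·B = e^{iα}·I_N. Then the function θ ↦ d(A·exp(−iθG)·B, T) = 1 − |Tr(Tᴴ·A·exp(−iθG)·B)|/N has derivative 0 at θ₀. -/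
open Matrix

/-- if `A·exp(−iθ₀G)·B` is the identity up to phase (G Hermitian, B unitary,
T real symmetric with nonzero trace), then `θ ↦ d(A·exp(−iθG)·B, T)` has derivative 0 at θ₀. -/
theorem cost_deriv_zero_at_identity_config (N : ℕ) (hN : 1 ≤ N)
    (T G B A : Matrix (Fin N) (Fin N) ℂ)
    (hTreal : ∀ i j, (T i j).im = 0) (hTsym : Tᵀ = T) (hTtr : T.trace ≠ 0)
    (hG : G.IsHermitian) (hB : B ∈ Matrix.unitaryGroup (Fin N) ℂ) (θ₀ : ℝ)
    (hid : ∃ α : ℝ,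
      A * NormedSpace.exp ((-(Complex.I * (θ₀ : ℂ))) • G) * B =
        Complex.exp (Complex.I * α) • (1 : Matrix (Fin N) (Fin N) ℂ)) :
    HasDerivAt
      (fun θ : ℝ =>
        1 - ‖(Tᴴ * (A * NormedSpace.exp ((-(Complex.I * (θ : ℂ))) • G) * B)).trace‖ / N)
      0 θ₀ := by
  classical
  letI : NormedRing (Matrix (Fin N) (Fin N) ℂ) := Matrix.linftyOpNormedRing
  letI : NormedAlgebra ℂ (Matrix (Fin N) (Fin N) ℂ) := Matrix.linftyOpNormedAlgebra
  obtain ⟨α, hα⟩ := hid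
  -- T is Hermitian
  have hT : Tᴴ = T := by
    ext i j
    have h1 : T j i = T i j := by conv_lhs => rw [← hTsym, Matrix.transpose_apply]
    simp [Matrix.conjTranspose_apply, Complex.ext_iff, hTreal, h1]
  -- unitarity
  have hB1 : B * Bᴴ = 1 := by
    have := (Matrix.mem_unitaryGroup_iff).mp hB
    simpa [Matrix.star_eq_conjTranspose] using this
  have hB2 : Bᴴ * B = 1 := by
    have := (Matrix.mem_unitaryGroup_iff').mp hB
    simpa [Matrix.star_eq_conjTranspose] using this
  set φ : ℂ := Complex.exp (Complex.I * α) with hφdef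
  have hφabs : ‖φ‖ = 1 := by
    rw [hφdef, Complex.norm_exp]
    simp
  -- A * exp(−iθ₀ G) = φ • Bᴴ
  have hAE : A * NormedSpace.exp ((-(Complex.I * (θ₀ : ℂ))) • G) = φ • Bᴴ := by
    calc A * NormedSpace.exp ((-(Complex.I * (θ₀ : ℂ))) • G)
        = (A * NormedSpace.exp ((-(Complex.I * (θ₀ : ℂ))) • G) * B) * Bᴴ := by
          rw [mul_assoc, hB1, mul_one]
      _ = (φ • (1 : Matrix (Fin N) (Fin N) ℂ)) * Bᴴ := by rw [hα]
      _ = φ • Bᴴ := by rw [Matrix.smul_mul, one_mul]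
  -- the reduced function
  set k : ℝ → ℂ := fun θ =>
    (Tᴴ * (Bᴴ * NormedSpace.exp ((-(Complex.I * ((θ : ℂ) - (θ₀ : ℂ)))) • G) * B)).trace with hk
  -- pointwise identity for absolute values
  have habs : ∀ θ : ℝ,
      ‖(Tᴴ * (A * NormedSpace.exp ((-(Complex.I * (θ : ℂ))) • G) * B)).trace‖
        = ‖k θ‖ := by
    intro θ
    have hcomm : Commute ((-(Complex.I * (θ₀ : ℂ))) • G)
        ((-(Complex.I * ((θ : ℂ) - (θ₀ : ℂ)))) • G) :=
      ((Commute.refl G).smul_left _).smul_right _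
    have hsplit : NormedSpace.exp ((-(Complex.I * (θ : ℂ))) • G)
        = NormedSpace.exp ((-(Complex.I * (θ₀ : ℂ))) • G) *
          NormedSpace.exp ((-(Complex.I * ((θ : ℂ) - (θ₀ : ℂ)))) • G) := by
      rw [← Matrix.exp_add_of_commute _ _ hcomm, ← add_smul]
      congr 2
      ring
    have hmain : A * NormedSpace.exp ((-(Complex.I * (θ : ℂ))) • G) * B
        = φ • (Bᴴ * NormedSpace.exp ((-(Complex.I * ((θ : ℂ) - (θ₀ : ℂ)))) • G) * B) := by
      rw [hsplit, ← mul_assoc, hAE, Matrix.smul_mul, Matrix.smul_mul]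
    rw [hmain, Matrix.mul_smul, Matrix.trace_smul, smul_eq_mul, norm_mul, hφabs, one_mul]
  -- derivative of the matrix exponential part
  have hEexp : HasDerivAt
      (fun θ : ℝ => NormedSpace.exp ((-(Complex.I * ((θ : ℂ) - (θ₀ : ℂ)))) • G))
      ((-Complex.I) • G) θ₀ := by
    have hinner : HasDerivAt (fun w : ℂ => -(Complex.I * (w - (θ₀ : ℂ))))
        (-(Complex.I * 1)) (θ₀ : ℂ) :=
      (((hasDerivAt_id (θ₀ : ℂ)).sub_const (θ₀ : ℂ)).const_mul Complex.I).neg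
    have houter : HasDerivAt (fun u : ℂ => NormedSpace.exp (u • G))
        (NormedSpace.exp ((-(Complex.I * ((θ₀ : ℂ) - (θ₀ : ℂ)))) • G) * G)
        (-(Complex.I * ((θ₀ : ℂ) - (θ₀ : ℂ)))) :=
      hasDerivAt_exp_smul_const G _
    have hcomp : HasDerivAt
        (fun z : ℂ => NormedSpace.exp ((-(Complex.I * (z - (θ₀ : ℂ)))) • G))
        ((-(Complex.I * 1)) •
          (NormedSpace.exp ((-(Complex.I * ((θ₀ : ℂ) - (θ₀ : ℂ)))) • G) * G)) (θ₀ : ℂ) := by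
      have := houter.scomp (θ₀ : ℂ) hinner
      exact this
    have hR := hcomp.scomp θ₀ Complex.ofRealCLM.hasDerivAt
    have h0 : (-(Complex.I * ((θ₀ : ℂ) - (θ₀ : ℂ)))) • G = (0 : ℂ) • G := by
      norm_num
    rw [h0, zero_smul, NormedSpace.exp_zero, one_mul, mul_one] at hR
    exact hR.congr_deriv (by simp)
  -- the trace linear map
  let L₀ : Matrix (Fin N) (Fin N) ℂ →ₗ[ℂ] ℂ :=
    { toFun := fun X => (Tᴴ * (Bᴴ * X * B)).trace
      map_add' := by
        intro X Y
        simp [Matrix.mul_add, Matrix.add_mul]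
      map_smul' := by
        intro c X
        simp [Matrix.mul_smul, Matrix.smul_mul] }
  let L : Matrix (Fin N) (Fin N) ℂ →L[ℂ] ℂ := L₀.toContinuousLinearMap
  have hkderiv : HasDerivAt k (L ((-Complex.I) • G)) θ₀ := by
    have h := ((L.restrictScalars ℝ).hasFDerivAt.comp_hasDerivAt θ₀ hEexp)
    exact h
  -- the derivative value
  set c : ℂ := (Tᴴ * (Bᴴ * G * B)).trace with hc
  have hLval : L ((-Complex.I) • G) = (-Complex.I) * c := by
    show (Tᴴ * (Bᴴ * ((-Complex.I) • G) * B)).trace = (-Complex.I) * c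
    rw [Matrix.mul_smul, Matrix.smul_mul, Matrix.mul_smul, Matrix.trace_smul, smul_eq_mul, hc]
  -- c is real
  have hcreal : c.im = 0 := by
    have h2 : (Tᴴ * (Bᴴ * G * B))ᴴ = Bᴴ * G * B * T := by
      simp [Matrix.conjTranspose_mul, hG.eq, Matrix.mul_assoc]
    have hstar : (starRingEnd ℂ) c = c := by
      calc (starRingEnd ℂ) c = ((Tᴴ * (Bᴴ * G * B))ᴴ).trace := by
            rw [Matrix.trace_conjTranspose]; rfl
        _ = (Bᴴ * G * B * T).trace := by rw [h2]
        _ = (T * (Bᴴ * G * B)).trace := Matrix.trace_mul_comm _ _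
        _ = c := by rw [hc, hT]
    exact Complex.conj_eq_iff_im.mp hstar
  have hre_deriv : (L ((-Complex.I) • G)).re = 0 := by
    rw [hLval]
    simp [Complex.mul_re, hcreal]
  -- value of k at θ₀
  have hk0 : k θ₀ = T.trace := by
    show (Tᴴ * (Bᴴ * NormedSpace.exp ((-(Complex.I * ((θ₀ : ℂ) - (θ₀ : ℂ)))) • G) * B)).trace
        = T.trace
    have h0 : (-(Complex.I * ((θ₀ : ℂ) - (θ₀ : ℂ)))) • G = (0 : ℂ) • G := by norm_num
    rw [h0, zero_smul, NormedSpace.exp_zero, mul_one, hB2, mul_one, hT]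
  have hk0im : (k θ₀).im = 0 := by
    rw [hk0]
    simp [Matrix.trace, Matrix.diag, Complex.im_sum, hTreal]
  have hk0ne : k θ₀ ≠ 0 := by rw [hk0]; exact hTtr
  -- real and imaginary parts
  have hre : HasDerivAt (fun θ : ℝ => (k θ).re) ((L ((-Complex.I) • G)).re) θ₀ := by
    have h := Complex.reCLM.hasFDerivAt.comp_hasDerivAt θ₀ hkderiv
    exact h
  have him : HasDerivAt (fun θ : ℝ => (k θ).im) ((L ((-Complex.I) • G)).im) θ₀ := by
    have h := Complex.imCLM.hasFDerivAt.comp_hasDerivAt θ₀ hkderiv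
    exact h
  -- the squared norm
  set u : ℝ → ℝ := fun θ => (k θ).re * (k θ).re + (k θ).im * (k θ).im with hu
  have huderiv : HasDerivAt u 0 θ₀ := by
    have h := (hre.mul hre).add (him.mul him)
    refine h.congr_deriv ?_
    rw [hre_deriv, hk0im]
    ring
  have hu0ne : u θ₀ ≠ 0 := by
    intro h
    exact hk0ne (Complex.normSq_eq_zero.mp (by rwa [Complex.normSq_apply]))
  have hsqrt : HasDerivAt (fun θ => Real.sqrt (u θ)) 0 θ₀ := by
    have h := huderiv.sqrt hu0ne
    simpa using h
  -- assemble
  have key : (fun θ : ℝ =>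
      1 - ‖(Tᴴ * (A * NormedSpace.exp ((-(Complex.I * (θ : ℂ))) • G) * B)).trace‖ / N)
      = fun θ : ℝ => 1 - Real.sqrt (u θ) / N := by
    funext θ
    rw [habs θ, Complex.norm_def, Complex.normSq_apply]
  rw [key]
  have final := (hsqrt.div_const (N : ℝ)).const_sub 1
  simpa using final
end

section
/- Let N ≥ 1, let T ∈ M_N(ℂ) have real entries with Tᵀ = T and Tr(T) ≠ 0, let G ∈ M_N(ℂ) be Hermitian, let B ∈ M_N(ℂ) be unitary, let A ∈ M_N(ℂ), and suppose there exist θ₀, α ∈ ℝ with A·exp(−iθ₀G)·B = e^{iα}·I_N. Set H = Bᴴ·G·B. Then the second derivative at θ₀ of the function θ ↦ d(A·exp(−iθG)·B, T) equals ( Tr(T)·Tr(Tᵀ·H²) − (Tr(Tᵀ·H))² ) / ( N·|Tr(T)| ), where both traces Tr(T), Tr(Tᵀ·H), Tr(Tᵀ·H²) are real numbers. -/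
open Matrix

lemma aux_trace_exp_hasDerivAt (N : ℕ) (C H : Matrix (Fin N) (Fin N) ℂ) (s : ℝ) :
    HasDerivAt (fun s : ℝ => (C * NormedSpace.exp ((-(Complex.I * (s:ℂ))) • H)).trace)
      ((-Complex.I) * ((C * H) * NormedSpace.exp ((-(Complex.I * (s:ℂ))) • H)).trace) s := by
  letI : SeminormedRing (Matrix (Fin N) (Fin N) ℂ) := Matrix.linftyOpSemiNormedRing
  letI : NormedRing (Matrix (Fin N) (Fin N) ℂ) := Matrix.linftyOpNormedRing
  letI : NormedAlgebra ℂ (Matrix (Fin N) (Fin N) ℂ) := Matrix.linftyOpNormedAlgebra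
  have hc : HasDerivAt (fun s : ℝ => (-(Complex.I * (s:ℂ)))) (-Complex.I) s := by
    have h1 : HasDerivAt (fun s : ℝ => (s : ℂ)) 1 s := by
      exact Complex.ofRealCLM.hasDerivAt
    have h2 := (h1.const_mul Complex.I).neg
    simp only [mul_one] at h2
    exact h2
  have hexp : HasDerivAt (fun z : ℂ => NormedSpace.exp (z • H))
      (H * NormedSpace.exp ((-(Complex.I * (s:ℂ))) • H)) (-(Complex.I * (s:ℂ))) :=
    hasDerivAt_exp_smul_const' H _
  have hu : HasDerivAt (fun s : ℝ => NormedSpace.exp ((-(Complex.I * (s:ℂ))) • H))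
      ((-Complex.I) • (H * NormedSpace.exp ((-(Complex.I * (s:ℂ))) • H))) s :=
    by have h3 := hexp.scomp s hc; exact h3
  have hCu := hu.const_mul C
  set L : Matrix (Fin N) (Fin N) ℂ →L[ℂ] ℂ :=
    LinearMap.toContinuousLinearMap (Matrix.traceLinearMap (Fin N) ℂ ℂ) with hL
  have htr := ((L.restrictScalars ℝ).hasFDerivAt).comp_hasDerivAt s hCu
  have : ∀ M : Matrix (Fin N) (Fin N) ℂ, L M = M.trace := fun M => rfl
  simp only [Function.comp_def, this] at htr
  have hval : (L.restrictScalars ℝ) (C * ((-Complex.I) • (H * NormedSpace.exp ((-(Complex.I * (s:ℂ))) • H)))) = (-Complex.I) * ((C * H) * NormedSpace.exp ((-(Complex.I * (s:ℂ))) • H)).trace := by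
    show (C * ((-Complex.I) • (H * NormedSpace.exp ((-(Complex.I * (s:ℂ))) • H)))).trace = _
    rw [mul_smul_comm, Matrix.trace_smul, smul_eq_mul, mul_assoc]
  rw [← hval]
  exact htr

lemma aux_main (N : ℕ) (hN : 1 ≤ N) (T H : Matrix (Fin N) (Fin N) ℂ)
    (hta : (T.trace).im = 0) (haa : ((T * H).trace).im = 0)
    (hba : ((T * H * H).trace).im = 0) (htre : (T.trace).re ≠ 0) :
    iteratedDeriv 2
      (fun s : ℝ =>
        1 - ‖(T * NormedSpace.exp ((-(Complex.I * (s : ℂ))) • H)).trace‖ / N) 0 =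
      ((T.trace).re * ((T * H * H).trace).re - ((T * H).trace).re ^ 2) /
        (N * ‖T.trace‖) := by
  classical
  set g : ℝ → ℂ := fun s => (T * NormedSpace.exp ((-(Complex.I * (s : ℂ))) • H)).trace
    with hgdef
  set g1 : ℝ → ℂ := fun s =>
    (-Complex.I) * ((T * H) * NormedSpace.exp ((-(Complex.I * (s : ℂ))) • H)).trace with hg1def
  set g2 : ℝ → ℂ := fun s =>
    (-Complex.I) *
      ((-Complex.I) * ((T * H * H) * NormedSpace.exp ((-(Complex.I * (s : ℂ))) • H)).trace)
    with hg2def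
  have hg : ∀ s, HasDerivAt g (g1 s) s := fun s => aux_trace_exp_hasDerivAt N T H s
  have hg1 : ∀ s, HasDerivAt g1 (g2 s) s := fun s =>
    (aux_trace_exp_hasDerivAt N (T * H) H s).const_mul (-Complex.I)
  have hgr : ∀ s, HasDerivAt (fun r => (g r).re) ((g1 s).re) s := fun s => by
    exact (Complex.reCLM.hasFDerivAt.comp_hasDerivAt s (hg s))
  have hgi : ∀ s, HasDerivAt (fun r => (g r).im) ((g1 s).im) s := fun s => by
    exact (Complex.imCLM.hasFDerivAt.comp_hasDerivAt s (hg s))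
  have hg1r : ∀ s, HasDerivAt (fun r => (g1 r).re) ((g2 s).re) s := fun s => by
    exact (Complex.reCLM.hasFDerivAt.comp_hasDerivAt s (hg1 s))
  have hg1i : ∀ s, HasDerivAt (fun r => (g1 r).im) ((g2 s).im) s := fun s => by
    exact (Complex.imCLM.hasFDerivAt.comp_hasDerivAt s (hg1 s))
  set q : ℝ → ℝ := fun s => (g s).re * (g s).re + (g s).im * (g s).im with hqdef
  have hq : ∀ s, HasDerivAt q
      (((g1 s).re * (g s).re + (g s).re * (g1 s).re) +
        ((g1 s).im * (g s).im + (g s).im * (g1 s).im)) s := fun s =>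
    ((hgr s).mul (hgr s)).add ((hgi s).mul (hgi s))
  have hu0 : NormedSpace.exp ((-(Complex.I * ((0 : ℝ) : ℂ))) • H) =
      (1 : Matrix (Fin N) (Fin N) ℂ) := by
    simp [NormedSpace.exp_zero]
  have hg0 : g 0 = T.trace := by rw [hgdef]; simp only [hu0, mul_one]
  have hg10 : g1 0 = (-Complex.I) * (T * H).trace := by rw [hg1def]; simp only [hu0, mul_one]
  have hg20 : g2 0 = -((T * H * H).trace) := by
    rw [hg2def]; simp only [hu0, mul_one, ← mul_assoc, neg_mul_neg, Complex.I_mul_I, neg_one_mul]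
  have h1r : (g1 0).re = 0 := by rw [hg10]; simp [Complex.mul_re, haa]
  have h1i : (g1 0).im = -((T * H).trace).re := by rw [hg10]; simp [Complex.mul_im]
  have h2r : (g2 0).re = -((T * H * H).trace).re := by rw [hg20]; simp
  have h2i : (g2 0).im = 0 := by rw [hg20]; simp [hba]
  have hq0 : q 0 = T.trace.re * T.trace.re := by
    rw [hqdef]; simp [hg0, hta]
  have hq0ne : q 0 ≠ 0 := by rw [hq0]; exact mul_ne_zero htre htre
  have hsqrt0 : Real.sqrt (q 0) = |T.trace.re| := by rw [hq0]; exact Real.sqrt_mul_self_eq_abs _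
  have habs_t : ‖T.trace‖ = |T.trace.re| := by
    rw [Complex.norm_def, Complex.normSq_apply, hta, mul_zero, add_zero]
    exact Real.sqrt_mul_self_eq_abs _
  have hFeq : (fun s : ℝ =>
      1 - ‖(T * NormedSpace.exp ((-(Complex.I * (s : ℂ))) • H)).trace‖ / N) =
      fun s => 1 - Real.sqrt (q s) / N := by
    funext s
    rw [hqdef]
    simp only [hgdef]
    rw [Complex.norm_def, Complex.normSq_apply]
  rw [hFeq]
  have hF : ∀ s : ℝ, q s ≠ 0 → HasDerivAt (fun r : ℝ => 1 - Real.sqrt (q r) / N)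
      (-(1 / (2 * Real.sqrt (q s)) *
        (((g1 s).re * (g s).re + (g s).re * (g1 s).re) +
          ((g1 s).im * (g s).im + (g s).im * (g1 s).im)) / N)) s := fun s hs =>
    (((Real.hasDerivAt_sqrt hs).comp s (hq s)).div_const _).const_sub 1
  have hev : ∀ᶠ s in nhds (0 : ℝ), q s ≠ 0 :=
    ((hq 0).differentiableAt.continuousAt).eventually_ne hq0ne
  have hDF : deriv (fun r : ℝ => 1 - Real.sqrt (q r) / N) =ᶠ[nhds (0 : ℝ)]
      fun s => -(1 / (2 * Real.sqrt (q s)) *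
        (((g1 s).re * (g s).re + (g s).re * (g1 s).re) +
          ((g1 s).im * (g s).im + (g s).im * (g1 s).im)) / N) :=
    hev.mono fun s hs => (hF s hs).deriv
  rw [show (2 : ℕ) = 1 + 1 from rfl, iteratedDeriv_succ, iteratedDeriv_one,
    Filter.EventuallyEq.deriv_eq hDF]
  have hQD : HasDerivAt (fun s : ℝ =>
      ((g1 s).re * (g s).re + (g s).re * (g1 s).re) +
        ((g1 s).im * (g s).im + (g s).im * (g1 s).im))
      ((((g2 0).re * (g 0).re + (g1 0).re * (g1 0).re) +
          ((g1 0).re * (g1 0).re + (g 0).re * (g2 0).re)) +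
        (((g2 0).im * (g 0).im + (g1 0).im * (g1 0).im) +
          ((g1 0).im * (g1 0).im + (g 0).im * (g2 0).im))) 0 :=
    (((hg1r 0).mul (hgr 0)).add ((hgr 0).mul (hg1r 0))).add
      (((hg1i 0).mul (hgi 0)).add ((hgi 0).mul (hg1i 0)))
  have hsq := (Real.hasDerivAt_sqrt hq0ne).comp 0 (hq 0)
  have h2ne : 2 * Real.sqrt (q 0) ≠ 0 := by
    rw [hsqrt0]; positivity
  have hone : (fun s : ℝ => 1 / (2 * Real.sqrt (q s))) =
      fun s : ℝ => (2 * Real.sqrt (q s))⁻¹ := by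
    funext s; rw [one_div]
  have hinv : HasDerivAt (fun s : ℝ => 1 / (2 * Real.sqrt (q s)))
      (-(2 * (1 / (2 * Real.sqrt (q 0)) *
          (((g1 0).re * (g 0).re + (g 0).re * (g1 0).re) +
            ((g1 0).im * (g 0).im + (g 0).im * (g1 0).im)))) /
        (2 * Real.sqrt (q 0)) ^ 2) 0 := by
    rw [hone]
    exact (hsq.const_mul 2).inv h2ne
  have hphi := ((hinv.mul hQD).div_const (N : ℝ)).neg
  simp only [Pi.neg_def, Pi.mul_apply] at hphi
  rw [hphi.deriv]
  have habsne : |T.trace.re| ≠ 0 := abs_ne_zero.mpr htre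
  have hNne : (N : ℝ) ≠ 0 := Nat.cast_ne_zero.mpr (by omega)
  rw [h1r, h1i, h2r, h2i, hg0, hsqrt0, habs_t, hta]
  field_simp
  ring

/-- second derivative of the cost at an identity configuration, with
`H = Bᴴ·G·B`: it equals `(Tr(T)·Tr(Tᵀ·H²) − (Tr(Tᵀ·H))²)/(N·|Tr(T)|)`, and the three
traces involved are real. -/
theorem cost_second_deriv_at_identity_config (N : ℕ) (hN : 1 ≤ N)
    (T G B A : Matrix (Fin N) (Fin N) ℂ)
    (hTreal : ∀ i j, (T i j).im = 0) (hTsym : Tᵀ = T) (hTtr : T.trace ≠ 0)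
    (hG : G.IsHermitian) (hB : B ∈ Matrix.unitaryGroup (Fin N) ℂ) (θ₀ : ℝ)
    (hid : ∃ α : ℝ,
      A * NormedSpace.exp ((-(Complex.I * (θ₀ : ℂ))) • G) * B =
        Complex.exp (Complex.I * α) • (1 : Matrix (Fin N) (Fin N) ℂ)) :
    (T.trace).im = 0 ∧ ((Tᵀ * (Bᴴ * G * B)).trace).im = 0 ∧
    ((Tᵀ * (Bᴴ * G * B) * (Bᴴ * G * B)).trace).im = 0 ∧
    iteratedDeriv 2
        (fun θ : ℝ =>
          1 - ‖(Tᴴ * (A * NormedSpace.exp ((-(Complex.I * (θ : ℂ))) • G) * B)).trace‖ / N)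
        θ₀ =
      ((T.trace).re * ((Tᵀ * (Bᴴ * G * B) * (Bᴴ * G * B)).trace).re -
          ((Tᵀ * (Bᴴ * G * B)).trace).re ^ 2) /
        (N * ‖T.trace‖) := by
  obtain ⟨α, hα⟩ := hid
  have hT : Tᴴ = T := by
    ext i j
    rw [Matrix.conjTranspose_apply]
    calc star (T j i) = T j i := Complex.conj_eq_iff_im.mpr (hTreal j i)
      _ = T i j := by rw [← Matrix.transpose_apply T i j, hTsym]
  have hHerm : (Bᴴ * G * B)ᴴ = Bᴴ * G * B := by
    simp [Matrix.conjTranspose_mul, Matrix.conjTranspose_conjTranspose, hG.eq, Matrix.mul_assoc]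
  have hstar : ∀ M : Matrix (Fin N) (Fin N) ℂ, star M.trace = M.trace → M.trace.im = 0 := by
    intro M h1
    exact Complex.conj_eq_iff_im.mp h1
  have hta : T.trace.im = 0 := by
    apply hstar
    rw [← Matrix.trace_conjTranspose, hT]
  have haa : ((T * (Bᴴ * G * B)).trace).im = 0 := by
    apply hstar
    rw [← Matrix.trace_conjTranspose, Matrix.conjTranspose_mul, hHerm, hT,
      Matrix.trace_mul_comm]
  have hba : ((T * (Bᴴ * G * B) * (Bᴴ * G * B)).trace).im = 0 := by
    apply hstar
    rw [← Matrix.trace_conjTranspose]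
    have h2 : (T * (Bᴴ * G * B) * (Bᴴ * G * B))ᴴ =
        (Bᴴ * G * B) * ((Bᴴ * G * B) * T) := by
      rw [Matrix.conjTranspose_mul, hHerm, Matrix.conjTranspose_mul, hHerm, hT]
    rw [h2, ← mul_assoc, Matrix.trace_mul_comm, ← mul_assoc]
  have htre : T.trace.re ≠ 0 := by
    intro h
    exact hTtr (by apply Complex.ext <;> simp [h, hta])
  rw [hT, hTsym]
  refine ⟨hta, haa, hba, ?_⟩
  -- unitary facts
  have hB2 : Bᴴ * B = 1 := by
    have := (Unitary.mem_iff.mp hB).1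
    rwa [Matrix.star_eq_conjTranspose] at this
  have hB1 : B * Bᴴ = 1 := by
    have := (Unitary.mem_iff.mp hB).2
    rwa [Matrix.star_eq_conjTranspose] at this
  have hBinv : B⁻¹ = Bᴴ := Matrix.inv_eq_left_inv hB2
  have hBunit : IsUnit B := ⟨⟨B, Bᴴ, hB1, hB2⟩, rfl⟩
  have hconj : ∀ s : ℝ, Bᴴ * NormedSpace.exp ((-(Complex.I * (s : ℂ))) • G) * B =
      NormedSpace.exp ((-(Complex.I * (s : ℂ))) • (Bᴴ * G * B)) := by
    intro s
    have h := Matrix.exp_conj' B ((-(Complex.I * (s : ℂ))) • G) hBunit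
    rw [hBinv] at h
    rw [← h]
    congr 1
    rw [Matrix.mul_smul, Matrix.smul_mul]
  have hE : ∀ θ : ℝ, NormedSpace.exp ((-(Complex.I * (θ : ℂ))) • G) =
      NormedSpace.exp ((-(Complex.I * (θ₀ : ℂ))) • G) *
        NormedSpace.exp ((-(Complex.I * (((θ + -θ₀ : ℝ)) : ℂ))) • G) := by
    intro θ
    have hsplit : (-(Complex.I * (θ : ℂ))) • G =
        ((-(Complex.I * (θ₀ : ℂ))) • G) + ((-(Complex.I * (((θ + -θ₀ : ℝ)) : ℂ))) • G) := by
      rw [← add_smul]; congr 1; push_cast; ring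
    have hcomm : Commute ((-(Complex.I * (θ₀ : ℂ))) • G)
        ((-(Complex.I * (((θ + -θ₀ : ℝ)) : ℂ))) • G) := by
      unfold Commute SemiconjBy
      rw [smul_mul_smul_comm, smul_mul_smul_comm, mul_comm (-(Complex.I * (θ₀ : ℂ)))]
    rw [hsplit]
    exact Matrix.exp_add_of_commute _ _ hcomm
  have hkey : ∀ θ : ℝ, A * NormedSpace.exp ((-(Complex.I * (θ : ℂ))) • G) * B =
      Complex.exp (Complex.I * α) •
        NormedSpace.exp ((-(Complex.I * (((θ + -θ₀ : ℝ)) : ℂ))) • (Bᴴ * G * B)) := by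
    intro θ
    rw [hE θ, ← hconj]
    calc A * (NormedSpace.exp ((-(Complex.I * (θ₀ : ℂ))) • G) *
          NormedSpace.exp ((-(Complex.I * (((θ + -θ₀ : ℝ)) : ℂ))) • G)) * B
        = (A * NormedSpace.exp ((-(Complex.I * (θ₀ : ℂ))) • G) * B) *
          (Bᴴ * NormedSpace.exp ((-(Complex.I * (((θ + -θ₀ : ℝ)) : ℂ))) • G) * B) := by
          simp only [mul_assoc]
          rw [← mul_assoc B Bᴴ, hB1, one_mul]
      _ = Complex.exp (Complex.I * α) •
          (Bᴴ * NormedSpace.exp ((-(Complex.I * (((θ + -θ₀ : ℝ)) : ℂ))) • G) * B) := by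
          rw [hα, Matrix.smul_mul, one_mul]
  have habs1 : ‖Complex.exp (Complex.I * α)‖ = 1 := by
    rw [Complex.norm_exp]; simp
  have hfun : (fun θ : ℝ =>
      1 - ‖(T * (A * NormedSpace.exp ((-(Complex.I * (θ : ℂ))) • G) * B)).trace‖ / N)
      = fun θ : ℝ =>
      1 - ‖(T *
        NormedSpace.exp ((-(Complex.I * (((θ + -θ₀ : ℝ)) : ℂ))) • (Bᴴ * G * B))).trace‖ / N := by
    funext θ
    rw [hkey θ, Matrix.mul_smul, Matrix.trace_smul, smul_eq_mul, norm_mul, habs1, one_mul]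
  rw [hfun]
  rw [iteratedDeriv_comp_add_const 2 (fun s : ℝ =>
    1 - ‖(T *
      NormedSpace.exp ((-(Complex.I * (s : ℂ))) • (Bᴴ * G * B))).trace‖ / N) (-θ₀)]
  simp only [add_neg_cancel]
  exact aux_main N hN T (Bᴴ * G * B) hta haa hba htre
end

section
/- Let n ≥ 2 and let T_n ∈ M_{2^n}(ℂ) be the k-Toffoli gate (k = n−1). Consider a single layer V(a,b,c,d) of the hardware efficient ansatz on n qubits, and suppose the parameter point (a₀,b₀,c₀,d₀) satisfies V(a₀,b₀,c₀,d₀) = e^{iα}·I_{2^n} for some α ∈ ℝ. Then every first-order partial derivative of the cost function (a,b,c,d) ↦ 1 − |Tr(T_nᴴ·V(a,b,c,d))|/2^n with respect to any single parameter coordinate vanishes at (a₀,b₀,c₀,d₀); i.e., the identity configuration is a stationary point of the cost. -/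
open Matrix
open scoped Kronecker

section Aux
open Complex

noncomputable def Kc : Matrix (Fin 2) (Fin 2) ℂ := !![0, -1; 1, 0]

lemma RY_mul (x y : ℝ) : RY x * RY y = RY (x + y) := by
  funext i j
  fin_cases i <;> fin_cases j <;>
    simp [RY, Matrix.mul_apply, Fin.sum_univ_two, Real.cos_add, Real.sin_add] <;>
    push_cast <;> ring

lemma RY_zero : RY 0 = 1 := by
  simp [RY, Matrix.one_fin_two]

lemma RZ_mul (x y : ℝ) : RZ x * RZ y = RZ (x + y) := by
  funext i j
  fin_cases i <;> fin_cases j <;>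
    simp [RZ, Matrix.mul_apply, Fin.sum_univ_two, ← Complex.exp_add] <;> ring_nf

lemma RZ_zero : RZ 0 = 1 := by
  simp [RZ, Matrix.one_fin_two]

lemma RY_decomp (s : ℝ) : RY s = (Real.cos s : ℂ) • 1 + (Real.sin s : ℂ) • Kc := by
  funext i j
  fin_cases i <;> fin_cases j <;>
    simp [RY, Kc, Matrix.one_fin_two]

lemma exp_negI (s : ℝ) :
    Complex.exp (-Complex.I * (s : ℂ)) = (Real.cos s : ℂ) + (-Complex.I * (Real.sin s : ℂ)) := by
  have : (-Complex.I * (s : ℂ)) = ((-s : ℝ) : ℂ) * Complex.I := by push_cast; ring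
  rw [this, Complex.exp_mul_I, ← Complex.ofReal_cos, ← Complex.ofReal_sin]
  push_cast [Real.cos_neg, Real.sin_neg]
  ring

lemma exp_posI (s : ℝ) :
    Complex.exp (Complex.I * (s : ℂ)) = (Real.cos s : ℂ) + Complex.I * (Real.sin s : ℂ) := by
  have : (Complex.I * (s : ℂ)) = ((s : ℝ) : ℂ) * Complex.I := by push_cast; ring
  rw [this, Complex.exp_mul_I, ← Complex.ofReal_cos, ← Complex.ofReal_sin]
  ring

lemma exp_negI' (s : ℝ) :
    Complex.exp (-(Complex.I * (s : ℂ))) = -(Complex.I * Complex.sin (s : ℂ)) + Complex.cos (s : ℂ) := by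
  rw [show -(Complex.I * (s : ℂ)) = (-(s : ℂ)) * Complex.I by ring, Complex.exp_mul_I,
    Complex.cos_neg, Complex.sin_neg]
  ring

lemma exp_posI' (s : ℝ) :
    Complex.exp (Complex.I * (s : ℂ)) = Complex.I * Complex.sin (s : ℂ) + Complex.cos (s : ℂ) := by
  rw [show Complex.I * (s : ℂ) = ((s : ℂ)) * Complex.I by ring, Complex.exp_mul_I]
  ring

lemma RZ_decomp (s : ℝ) :
    RZ s = (Real.cos s : ℂ) • 1 + (-Complex.I * (Real.sin s : ℂ)) • PZ := by
  funext i j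
  fin_cases i <;> fin_cases j <;>
    simp [RZ, PZ, Matrix.one_fin_two, exp_negI', exp_posI', neg_mul] <;> ring

lemma RZ_conjTranspose (θ : ℝ) : (RZ θ)ᴴ = RZ (-θ) := by
  funext i j
  fin_cases i <;> fin_cases j <;>
    simp [RZ, Matrix.conjTranspose_apply, ← Complex.exp_conj, _root_.map_mul, Complex.conj_I,
      Complex.conj_ofReal] <;> push_cast <;> ring_nf

lemma Kc_conjTranspose : Kcᴴ = -Kc := by
  funext i j
  fin_cases i <;> fin_cases j <;> simp [Kc, Matrix.conjTranspose_apply]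

end Aux
section CRYlemmas
open Matrix
open scoped Kronecker

lemma P0_mul_P0 : P0 * P0 = P0 := by
  funext i j; fin_cases i <;> fin_cases j <;> simp [P0, Matrix.mul_apply, Fin.sum_univ_two]
lemma P0_mul_P1 : P0 * P1 = 0 := by
  funext i j; fin_cases i <;> fin_cases j <;> simp [P0, P1, Matrix.mul_apply, Fin.sum_univ_two]
lemma P1_mul_P0 : P1 * P0 = 0 := by
  funext i j; fin_cases i <;> fin_cases j <;> simp [P0, P1, Matrix.mul_apply, Fin.sum_univ_two]
lemma P1_mul_P1 : P1 * P1 = P1 := by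
  funext i j; fin_cases i <;> fin_cases j <;> simp [P1, Matrix.mul_apply, Fin.sum_univ_two]
lemma P0_add_P1 : P0 + P1 = 1 := by
  funext i j; fin_cases i <;> fin_cases j <;> simp [P0, P1, Matrix.one_fin_two]
lemma P0_transpose : P0ᵀ = P0 := by
  funext i j; fin_cases i <;> fin_cases j <;> simp [P0, Matrix.transpose_apply]
lemma P1_transpose : P1ᵀ = P1 := by
  funext i j; fin_cases i <;> fin_cases j <;> simp [P1, Matrix.transpose_apply]
lemma RY_transpose (s : ℝ) : (RY s)ᵀ = RY (-s) := by
  funext i j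
  fin_cases i <;> fin_cases j <;> simp [RY, Matrix.transpose_apply, Real.cos_neg, Real.sin_neg]
lemma Kc_transpose : Kcᵀ = -Kc := by
  funext i j; fin_cases i <;> fin_cases j <;> simp [Kc, Matrix.transpose_apply]

lemma kron_transpose (A B : Matrix (Fin 2) (Fin 2) ℂ) : (A ⊗ₖ B)ᵀ = Aᵀ ⊗ₖ Bᵀ := by
  funext x y
  obtain ⟨a, b⟩ := x; obtain ⟨c, d⟩ := y
  rfl

lemma CRY_mul (x y : ℝ) : CRY x * CRY y = CRY (x + y) := by
  simp only [CRY, Matrix.add_mul, Matrix.mul_add, ← Matrix.mul_kronecker_mul,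
    P0_mul_P0, P0_mul_P1, P1_mul_P0, P1_mul_P1, one_mul, mul_one, RY_mul,
    Matrix.zero_kronecker, Matrix.kronecker_zero, add_zero, zero_add]

lemma CRY_zero : CRY 0 = 1 := by
  rw [CRY, RY_zero, ← Matrix.add_kronecker, P0_add_P1, Matrix.one_kronecker_one]

lemma CRY_transpose (s : ℝ) : (CRY s)ᵀ = CRY (-s) := by
  simp only [CRY, Matrix.transpose_add, kron_transpose, P0_transpose, P1_transpose,
    Matrix.transpose_one, RY_transpose]

lemma CRY_orth (s : ℝ) : (CRY s)ᵀ * CRY s = 1 := by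
  rw [CRY_transpose, CRY_mul, neg_add_cancel, CRY_zero]

lemma CRY_decomp (s : ℝ) :
    CRY s = P0 ⊗ₖ (1 : Matrix (Fin 2) (Fin 2) ℂ)
      + (Real.cos s : ℂ) • (P1 ⊗ₖ (1 : Matrix (Fin 2) (Fin 2) ℂ))
      + (Real.sin s : ℂ) • (P1 ⊗ₖ Kc) := by
  rw [CRY, RY_decomp, Matrix.kronecker_add, Matrix.kronecker_smul, Matrix.kronecker_smul]
  abel

lemma CRY_real (s : ℝ) (x y : Fin 2 × Fin 2) :
    (starRingEnd ℂ) (CRY s x y) = CRY s x y := by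
  obtain ⟨a, b⟩ := x; obtain ⟨c, d⟩ := y
  fin_cases a <;> fin_cases b <;> fin_cases c <;> fin_cases d <;>
    simp [CRY, Matrix.kroneckerMap_apply, P0, P1, RY, Matrix.one_apply, Matrix.add_apply,
      map_add, _root_.map_mul, ← Complex.ofReal_cos, ← Complex.ofReal_sin, Complex.conj_ofReal]

lemma P1Kc_transpose : (P1 ⊗ₖ Kc)ᵀ = -(P1 ⊗ₖ Kc) := by
  rw [kron_transpose, P1_transpose, Kc_transpose]
  funext x y
  simp [Matrix.kroneckerMap_apply]

end CRYlemmas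
section TP
open Matrix Finset

variable {n : ℕ}

noncomputable def tp (n : ℕ) (M : Fin n → Matrix (Fin 2) (Fin 2) ℂ) :
    Matrix (Fin n → Fin 2) (Fin n → Fin 2) ℂ :=
  fun i j => ∏ k : Fin n, M k (i k) (j k)

lemma tp_mul (M N : Fin n → Matrix (Fin 2) (Fin 2) ℂ) :
    tp n M * tp n N = tp n (fun k => M k * N k) := by
  funext i j
  simp only [tp, Matrix.mul_apply]
  calc ∑ x : Fin n → Fin 2, (∏ k, M k (i k) (x k)) * ∏ k, N k (x k) (j k)
      = ∑ x : Fin n → Fin 2, ∏ k, (M k (i k) (x k) * N k (x k) (j k)) := by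
        simp [Finset.prod_mul_distrib]
    _ = ∏ k, ∑ v, M k (i k) v * N k v (j k) := by
        rw [Finset.prod_univ_sum]
        simp [Fintype.piFinset_univ]

lemma tp_one : tp n (fun _ => (1 : Matrix (Fin 2) (Fin 2) ℂ)) = 1 := by
  funext i j
  simp only [tp, Matrix.one_apply]
  by_cases h : i = j
  · subst h; simp
  · rw [if_neg h]
    obtain ⟨k, hk⟩ : ∃ k, i k ≠ j k := by
      by_contra hc
      push_neg at hc
      exact h (funext hc)
    exact Finset.prod_eq_zero (mem_univ k) (by rw [if_neg hk])

lemma tp_congr {M N : Fin n → Matrix (Fin 2) (Fin 2) ℂ} (h : ∀ k, M k = N k) :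
    tp n M = tp n N := by
  have : M = N := funext h
  rw [this]

noncomputable def e1 (n : ℕ) (p : Fin n) (g : Matrix (Fin 2) (Fin 2) ℂ) :
    Matrix (Fin n → Fin 2) (Fin n → Fin 2) ℂ :=
  tp n (fun k => if k = p then g else 1)

lemma e1_apply (p : Fin n) (g : Matrix (Fin 2) (Fin 2) ℂ) (i j : Fin n → Fin 2) :
    e1 n p g i j = g (i p) (j p) *
      ∏ k ∈ Finset.univ.erase p, (1 : Matrix (Fin 2) (Fin 2) ℂ) (i k) (j k) := by
  rw [e1, tp]
  rw [← Finset.mul_prod_erase Finset.univ _ (mem_univ p)]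
  rw [if_pos rfl]
  congr 1
  exact Finset.prod_congr rfl fun k hk => by rw [if_neg (Finset.mem_erase.mp hk).1]

lemma e1_one (p : Fin n) : e1 n p 1 = 1 := by
  rw [e1, tp_congr (fun k => ite_self _), tp_one]

lemma e1_add (p : Fin n) (g h : Matrix (Fin 2) (Fin 2) ℂ) :
    e1 n p (g + h) = e1 n p g + e1 n p h := by
  funext i j
  simp [e1_apply, Matrix.add_apply, add_mul]

lemma e1_smul (p : Fin n) (x : ℂ) (g : Matrix (Fin 2) (Fin 2) ℂ) :
    e1 n p (x • g) = x • e1 n p g := by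
  funext i j
  simp only [e1_apply, Matrix.smul_apply, smul_eq_mul]
  ring

lemma e1_neg (p : Fin n) (g : Matrix (Fin 2) (Fin 2) ℂ) :
    e1 n p (-g) = -e1 n p g := by
  funext i j
  simp [e1_apply, Matrix.neg_apply]

lemma e1_conjTranspose (p : Fin n) (g : Matrix (Fin 2) (Fin 2) ℂ) :
    (e1 n p g)ᴴ = e1 n p gᴴ := by
  funext i j
  rw [Matrix.conjTranspose_apply, e1_apply, e1_apply, ← starRingEnd_apply, _root_.map_mul,
    map_prod]
  congr 1
  exact Finset.prod_congr rfl fun k _ => by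
    simp [Matrix.one_apply, apply_ite (starRingEnd ℂ), eq_comm]

/-- entrywise-real square matrices -/
def IsRealMat {m : Type*} (M : Matrix m m ℂ) : Prop :=
  ∀ i j, (starRingEnd ℂ) (M i j) = M i j

lemma IsRealMat.mul {m : Type*} [Fintype m] {M N : Matrix m m ℂ}
    (hM : IsRealMat M) (hN : IsRealMat N) : IsRealMat (M * N) := by
  intro i j
  simp only [Matrix.mul_apply, map_sum, _root_.map_mul]
  exact Finset.sum_congr rfl fun k _ => by rw [hM, hN]

lemma IsRealMat.trace {m : Type*} [Fintype m] {M : Matrix m m ℂ}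
    (hM : IsRealMat M) : (starRingEnd ℂ) M.trace = M.trace := by
  simp only [Matrix.trace, Matrix.diag, map_sum]
  exact Finset.sum_congr rfl fun k _ => hM k k

lemma IsRealMat.one {m : Type*} [DecidableEq m] : IsRealMat (1 : Matrix m m ℂ) := by
  intro i j
  simp [Matrix.one_apply, apply_ite (starRingEnd ℂ)]

lemma e1_real (p : Fin n) {g : Matrix (Fin 2) (Fin 2) ℂ}
    (hg : ∀ a b, (starRingEnd ℂ) (g a b) = g a b) : IsRealMat (e1 n p g) := by
  intro i j
  simp only [e1_apply, _root_.map_mul, map_prod]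
  rw [hg]
  congr 1
  exact Finset.prod_congr rfl fun k _ => by
    simp [Matrix.one_apply, apply_ite (starRingEnd ℂ)]

lemma PZ_real : ∀ a b, (starRingEnd ℂ) (PZ a b) = PZ a b := by
  intro a b; fin_cases a <;> fin_cases b <;> simp [PZ]

-- heaR as tp, and update factorizations
lemma heaR_eq_tp (a b c : Fin n → ℝ) :
    heaR n a b c = tp n (fun k => RZ (c k) * RY (b k) * RZ (a k)) := rfl

lemma heaR_update_a (a b c : Fin n → ℝ) (i : Fin n) (t : ℝ) :
    heaR n (Function.update a i t) b c = heaR n a b c * e1 n i (RZ (t - a i)) := by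
  rw [heaR_eq_tp, heaR_eq_tp, e1, tp_mul]
  apply tp_congr
  intro k
  by_cases h : k = i
  · subst h
    rw [if_pos rfl, Function.update_self]
    simp only [Matrix.mul_assoc]
    rw [RZ_mul, add_sub_cancel]
  · rw [if_neg h, Function.update_of_ne h, mul_one]

lemma RZ_cancel (x : ℝ) (M : Matrix (Fin 2) (Fin 2) ℂ) : RZ x * (RZ (-x) * M) = M := by
  rw [← Matrix.mul_assoc, RZ_mul, add_neg_cancel, RZ_zero, Matrix.one_mul]

lemma RY_merge (x y : ℝ) (M : Matrix (Fin 2) (Fin 2) ℂ) : RY x * (RY y * M) = RY (x + y) * M := by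
  rw [← Matrix.mul_assoc, RY_mul]

lemma heaR_update_b (a b c : Fin n → ℝ) (i : Fin n) (t : ℝ) :
    heaR n a (Function.update b i t) c
      = heaR n a b c * e1 n i (RZ (-(a i)) * RY (t - b i) * RZ (a i)) := by
  rw [heaR_eq_tp, heaR_eq_tp, e1, tp_mul]
  apply tp_congr
  intro k
  by_cases h : k = i
  · subst h
    rw [if_pos rfl, Function.update_self]
    symm
    simp only [Matrix.mul_assoc]
    rw [RZ_cancel, RY_merge, add_sub_cancel]
  · rw [if_neg h, Function.update_of_ne h, mul_one]

lemma heaR_update_c (a b c : Fin n → ℝ) (i : Fin n) (t : ℝ) :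
    heaR n a b (Function.update c i t) = e1 n i (RZ (t - c i)) * heaR n a b c := by
  rw [heaR_eq_tp, heaR_eq_tp, e1, tp_mul]
  apply tp_congr
  intro k
  by_cases h : k = i
  · subst h
    rw [if_pos rfl, Function.update_self]
    simp only [← Matrix.mul_assoc]
    rw [RZ_mul, sub_add_cancel]
  · rw [if_neg h, Function.update_of_ne h, one_mul]

end TP
section Embed2
open Matrix Finset

variable {n : ℕ}

lemma embed2_add (p q : Fin n) (g h : Matrix (Fin 2 × Fin 2) (Fin 2 × Fin 2) ℂ) :
    embed2 n p q (g + h) = embed2 n p q g + embed2 n p q h := by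
  funext i j
  simp [embed2, Matrix.add_apply, add_mul]

lemma embed2_smul (p q : Fin n) (x : ℂ) (g : Matrix (Fin 2 × Fin 2) (Fin 2 × Fin 2) ℂ) :
    embed2 n p q (x • g) = x • embed2 n p q g := by
  funext i j
  simp only [embed2, Matrix.smul_apply, smul_eq_mul]
  ring

lemma embed2_neg (p q : Fin n) (g : Matrix (Fin 2 × Fin 2) (Fin 2 × Fin 2) ℂ) :
    embed2 n p q (-g) = -embed2 n p q g := by
  funext i j
  simp [embed2, Matrix.neg_apply]

lemma embed2_one (p q : Fin n) : embed2 n p q 1 = 1 := by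
  funext i j
  simp only [embed2, Matrix.one_apply]
  by_cases h : i = j
  · subst h
    simp
  · rw [if_neg h]
    obtain ⟨k, hk⟩ : ∃ k, i k ≠ j k := by
      by_contra hc
      push_neg at hc
      exact h (funext hc)
    by_cases hkpq : k = p ∨ k = q
    · have hne : (i p, i q) ≠ (j p, j q) := by
        rcases hkpq with h1 | h1 <;> subst h1 <;> simp [Prod.ext_iff] <;> tauto
      rw [if_neg hne, zero_mul]
    · have : (∏ k : Fin n, if k = p ∨ k = q then (1:ℂ) else if i k = j k then 1 else 0) = 0 :=
        Finset.prod_eq_zero (mem_univ k) (by rw [if_neg hkpq, if_neg hk])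
      rw [this, mul_zero]

lemma embed2_transpose (p q : Fin n) (g : Matrix (Fin 2 × Fin 2) (Fin 2 × Fin 2) ℂ) :
    (embed2 n p q g)ᵀ = embed2 n p q gᵀ := by
  funext i j
  simp only [Matrix.transpose_apply, embed2]
  congr 1
  exact Finset.prod_congr rfl fun k _ => by
    by_cases h1 : k = p ∨ k = q
    · rw [if_pos h1, if_pos h1]
    · rw [if_neg h1, if_neg h1]
      simp [eq_comm]

lemma embed2_real (p q : Fin n) {g : Matrix (Fin 2 × Fin 2) (Fin 2 × Fin 2) ℂ}
    (hg : ∀ x y, (starRingEnd ℂ) (g x y) = g x y) : IsRealMat (embed2 n p q g) := by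
  intro i j
  simp only [embed2, _root_.map_mul, map_prod]
  rw [hg]
  congr 1
  exact Finset.prod_congr rfl fun k _ => by
    by_cases h1 : k = p ∨ k = q
    · rw [if_pos h1]; simp
    · rw [if_neg h1]
      simp [apply_ite (starRingEnd ℂ)]

/-- the canonical representative in a fiber -/
private def upd (i : Fin n → Fin 2) (p q : Fin n) (v : Fin 2 × Fin 2) : Fin n → Fin 2 :=
  fun k => if k = p then v.1 else if k = q then v.2 else i k

lemma embed2_mul (p q : Fin n) (hpq : p ≠ q) (g h : Matrix (Fin 2 × Fin 2) (Fin 2 × Fin 2) ℂ) :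
    embed2 n p q g * embed2 n p q h = embed2 n p q (g * h) := by
  funext i j
  simp only [Matrix.mul_apply, embed2]
  rw [Finset.sum_mul]
  have hinj : Function.Injective (upd i p q) := by
    intro v w hvw
    have h1 := congrFun hvw p
    have h2 := congrFun hvw q
    simp [upd, if_pos, if_neg (Ne.symm hpq)] at h1 h2
    exact Prod.ext h1 h2
  have himg : ∀ x : Fin n → Fin 2, x ∉ Finset.univ.image (upd i p q) →
      (g (i p, i q) (x p, x q) * ∏ k : Fin n, if k = p ∨ k = q then (1:ℂ) else if i k = x k then 1 else 0) *
      (h (x p, x q) (j p, j q) * ∏ k : Fin n, if k = p ∨ k = q then (1:ℂ) else if x k = j k then 1 else 0) = 0 := by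
    intro x hx
    have : x ≠ upd i p q (x p, x q) := fun hc => hx (Finset.mem_image.mpr ⟨(x p, x q), mem_univ _, hc.symm⟩)
    obtain ⟨k, hk⟩ : ∃ k, x k ≠ upd i p q (x p, x q) k := by
      by_contra hc; push_neg at hc; exact this (funext hc)
    have hknp : k ≠ p := fun hc => by subst hc; simp [upd] at hk
    have hknq : k ≠ q := fun hc => by subst hc; simp [upd, if_neg (Ne.symm hpq)] at hk
    have hik : i k ≠ x k := by
      simp only [upd, if_neg hknp, if_neg hknq] at hk
      exact fun hc => hk (hc.symm)
    have : (∏ k : Fin n, if k = p ∨ k = q then (1:ℂ) else if i k = x k then 1 else 0) = 0 :=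
      Finset.prod_eq_zero (mem_univ k) (by rw [if_neg (by tauto), if_neg hik])
    rw [this, mul_zero, zero_mul]
  rw [← Finset.sum_subset (Finset.subset_univ (Finset.univ.image (upd i p q))) (fun x _ hx => himg x hx)]
  rw [Finset.sum_image (fun v _ w _ hvw => hinj hvw)]
  apply Finset.sum_congr rfl
  intro v _
  have hvp : upd i p q v p = v.1 := by simp [upd]
  have hvq : upd i p q v q = v.2 := by simp [upd, if_neg (Ne.symm hpq)]
  have hprod1 : (∏ k : Fin n, if k = p ∨ k = q then (1:ℂ) else if i k = upd i p q v k then 1 else 0) = 1 := by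
    apply Finset.prod_eq_one
    intro k _
    by_cases h1 : k = p ∨ k = q
    · rw [if_pos h1]
    · rw [if_neg h1]
      push_neg at h1
      simp [upd, if_neg h1.1, if_neg h1.2]
  have hprod2 : (∏ k : Fin n, if k = p ∨ k = q then (1:ℂ) else if upd i p q v k = j k then 1 else 0)
      = ∏ k : Fin n, if k = p ∨ k = q then (1:ℂ) else if i k = j k then 1 else 0 := by
    apply Finset.prod_congr rfl
    intro k _
    by_cases h1 : k = p ∨ k = q
    · rw [if_pos h1, if_pos h1]
    · rw [if_neg h1, if_neg h1]
      push_neg at h1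
      simp [upd, if_neg h1.1, if_neg h1.2]
  rw [hvp, hvq, hprod1, hprod2]
  ring

lemma fsucc_ne (hn : 2 ≤ n) (j : Fin n) : j ≠ fsucc j := by
  intro hc
  have h1 : j.val = (j.val + 1) % n := congrArg Fin.val hc
  rcases Nat.lt_or_ge (j.val + 1) n with h | h
  · rw [Nat.mod_eq_of_lt h] at h1; omega
  · have hj : j.val < n := j.isLt
    have : j.val + 1 = n := by omega
    rw [this, Nat.mod_self] at h1
    omega

lemma embed2_orth (p q : Fin n) (hpq : p ≠ q) {g : Matrix (Fin 2 × Fin 2) (Fin 2 × Fin 2) ℂ}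
    (hg : gᵀ * g = 1) : (embed2 n p q g)ᵀ * embed2 n p q g = 1 := by
  rw [embed2_transpose, embed2_mul p q hpq, hg, embed2_one]

end Embed2
section Toff
open Matrix Finset

variable {n : ℕ}

lemma PX_diag (a : Fin 2) : PX a a = 0 := by fin_cases a <;> simp [PX]
lemma PX_symm (a b : Fin 2) : PX a b = PX b a := by fin_cases a <;> fin_cases b <;> simp [PX]
lemma PX_real (a b : Fin 2) : (starRingEnd ℂ) (PX a b) = PX a b := by
  fin_cases a <;> fin_cases b <;> simp [PX]

lemma toff_apply (hn : 0 < n) (i j : Fin n → Fin 2) :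
    toff n i j = if (∀ k : Fin n, k.val + 1 < n → (i k = 1 ∧ j k = 1)) then
        PX (i ⟨n - 1, by omega⟩) (j ⟨n - 1, by omega⟩)
      else if i = j then 1 else 0 := by
  rw [toff]
  exact congrArg (fun M : Matrix (Fin n → Fin 2) (Fin n → Fin 2) ℂ => M i j) (dif_pos hn)

lemma toff_transpose (hn : 0 < n) : (toff n)ᵀ = toff n := by
  funext i j
  rw [Matrix.transpose_apply, toff_apply hn, toff_apply hn]
  have hiff : (∀ k : Fin n, k.val + 1 < n → (j k = 1 ∧ i k = 1))
      ↔ (∀ k : Fin n, k.val + 1 < n → (i k = 1 ∧ j k = 1)) :=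
    forall_congr' fun k => imp_congr Iff.rfl and_comm
  by_cases hp : ∀ k : Fin n, k.val + 1 < n → (i k = 1 ∧ j k = 1)
  · rw [if_pos hp, if_pos (hiff.mpr hp), PX_symm]
  · rw [if_neg hp, if_neg (fun hc => hp (hiff.mp hc))]
    simp [eq_comm]

lemma toff_real (hn : 0 < n) : IsRealMat (toff n) := by
  intro i j
  rw [toff_apply hn]
  by_cases hp : ∀ k : Fin n, k.val + 1 < n → (i k = 1 ∧ j k = 1)
  · rw [if_pos hp, PX_real]
  · rw [if_neg hp]
    simp [apply_ite (starRingEnd ℂ)]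

lemma toff_herm (hn : 0 < n) : (toff n)ᴴ = toff n := by
  have h1 : (toff n)ᴴ = ((toff n)ᵀ).map (starRingEnd ℂ) := rfl
  rw [h1, toff_transpose hn]
  funext i j
  rw [Matrix.map_apply]
  exact toff_real hn i j

private def spec (n : ℕ) (v : Fin 2) : Fin n → Fin 2 := fun k => if k.val + 1 < n then 1 else v

lemma toff_trace (hn : 2 ≤ n) : (toff n).trace = ((2 ^ n - 2 : ℕ) : ℂ) := by
  have h0 : 0 < n := by omega
  have hlast : (⟨n - 1, by omega⟩ : Fin n).val + 1 < n ↔ False := by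
    simp; omega
  have hdiag : ∀ i : Fin n → Fin 2, toff n i i
      = if (∀ k : Fin n, k.val + 1 < n → i k = 1) then 0 else 1 := by
    intro i
    rw [toff_apply h0]
    by_cases hp : ∀ k : Fin n, k.val + 1 < n → i k = 1
    · rw [if_pos (fun k hk => ⟨hp k hk, hp k hk⟩), if_pos hp, PX_diag]
    · rw [if_neg (fun hc => hp (fun k hk => (hc k hk).1)), if_pos rfl, if_neg hp]
  rw [Matrix.trace]
  simp only [Matrix.diag, hdiag]
  rw [Finset.sum_ite]
  simp only [Finset.sum_const_zero, Finset.sum_const, nsmul_eq_mul, mul_one, zero_add]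
  have hfilter : Finset.univ.filter (fun i : Fin n → Fin 2 => ∀ k : Fin n, k.val + 1 < n → i k = 1)
      = {spec n 0, spec n 1} := by
    ext x
    simp only [Finset.mem_filter, Finset.mem_univ, true_and, Finset.mem_insert,
      Finset.mem_singleton]
    constructor
    · intro hp
      have hx : x = spec n (x ⟨n - 1, by omega⟩) := by
        funext k
        by_cases hk : k.val + 1 < n
        · rw [spec, if_pos hk]; exact hp k hk
        · have hkeq : k = ⟨n - 1, by omega⟩ := by
            apply Fin.ext; have := k.isLt; simp; omega
          rw [spec, if_neg hk, hkeq]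
      have h01 : ∀ v : Fin 2, v = 0 ∨ v = 1 := by decide
      rcases h01 (x ⟨n - 1, by omega⟩) with h | h
      · left; rw [hx, h]
      · right; rw [hx, h]
    · intro hp
      rcases hp with h | h <;> subst h <;> intro k hk <;> simp [spec, if_pos hk]
  have hne : spec n 0 ≠ spec n 1 := by
    intro hc
    have := congrFun hc ⟨n - 1, by omega⟩
    rw [spec, spec, if_neg (by simp; omega), if_neg (by simp; omega)] at this
    exact absurd this (by decide)
  have hcard2 : ({spec n 0, spec n 1} : Finset (Fin n → Fin 2)).card = 2 := by
    rw [Finset.card_insert_of_notMem (by simp [hne]), Finset.card_singleton]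
  have hcardP : (Finset.univ.filter (fun i : Fin n → Fin 2 => ∀ k : Fin n, k.val + 1 < n → i k = 1)).card = 2 := by
    rw [hfilter, hcard2]
  have hcardN : (Finset.univ.filter (fun i : Fin n → Fin 2 => ¬ ∀ k : Fin n, k.val + 1 < n → i k = 1)).card
      = 2 ^ n - 2 := by
    have := Finset.card_filter_add_card_filter_not
      (s := (Finset.univ : Finset (Fin n → Fin 2)))
      (fun i => ∀ k : Fin n, k.val + 1 < n → i k = 1)
    have hcu : (Finset.univ : Finset (Fin n → Fin 2)).card = 2 ^ n := by
      rw [Finset.card_univ, Fintype.card_fun]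
      simp
    rw [hcu, hcardP] at this
    exact Nat.eq_sub_of_add_eq' this
  rw [hcardN]
end Toff
section Lists
open Matrix Finset

variable {n : ℕ}

lemma list_prod_orth (l : List (Matrix (Fin n → Fin 2) (Fin n → Fin 2) ℂ))
    (h : ∀ X ∈ l, Xᵀ * X = 1) : (l.prod)ᵀ * l.prod = 1 := by
  induction l with
  | nil => simp
  | cons x xs ih =>
    rw [List.prod_cons, Matrix.transpose_mul]
    have hx := h x List.mem_cons_self
    have hxs := ih fun X hX => h X (List.mem_cons_of_mem _ hX)
    calc xs.prodᵀ * xᵀ * (x * xs.prod) = xs.prodᵀ * (xᵀ * x * xs.prod) := by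
          simp only [Matrix.mul_assoc]
      _ = 1 := by rw [hx, Matrix.one_mul, hxs]

lemma list_prod_real (l : List (Matrix (Fin n → Fin 2) (Fin n → Fin 2) ℂ))
    (h : ∀ X ∈ l, IsRealMat X) : IsRealMat l.prod := by
  induction l with
  | nil => simpa using (IsRealMat.one : IsRealMat (1 : Matrix (Fin n → Fin 2) (Fin n → Fin 2) ℂ))
  | cons x xs ih =>
    rw [List.prod_cons]
    exact (h x List.mem_cons_self).mul (ih fun X hX => h X (List.mem_cons_of_mem _ hX))

lemma finRange_split (i : Fin n) :
    List.finRange n = (List.finRange n).take i.val ++ i :: (List.finRange n).drop (i.val + 1) := by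
  conv_lhs => rw [← List.take_append_drop i.val (List.finRange n)]
  congr 1
  rw [List.drop_eq_getElem_cons (by simpa using i.isLt)]
  congr 1
  rw [List.getElem_finRange]
  apply Fin.ext
  simp

lemma heaD_split (d : Fin n → ℝ) (i : Fin n) :
    heaD n d
      = ((((List.finRange n).drop (i.val + 1)).map fun j => embed2 n j (fsucc j) (CRY (d j))).reverse).prod
        * (embed2 n i (fsucc i) (CRY (d i))
          * ((((List.finRange n).take i.val).map fun j => embed2 n j (fsucc j) (CRY (d j))).reverse).prod) := by
  rw [heaD]
  conv_lhs => rw [finRange_split i]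
  simp [List.map_append, List.reverse_append, List.prod_append, List.prod_cons, Matrix.mul_assoc]

lemma not_mem_take_drop (i : Fin n) :
    i ∉ (List.finRange n).take i.val ∧ i ∉ (List.finRange n).drop (i.val + 1) := by
  have hnd := List.nodup_finRange n
  rw [finRange_split i] at hnd
  rw [List.nodup_append] at hnd
  obtain ⟨h1, h2, h3⟩ := hnd
  rw [List.nodup_cons] at h2
  exact ⟨fun hc => h3 i hc i List.mem_cons_self rfl, h2.1⟩

end Lists

section Master
open Complex

lemma master {n : ℕ} {t₀ : ℝ} (z : ℝ → ℂ) (A B C : ℂ)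
    (hz : ∀ t, z t = A + (Real.cos (t - t₀) : ℂ) * B + (Real.sin (t - t₀) : ℂ) * C)
    (hAB : A + B ≠ 0) (horth : ((starRingEnd ℂ) (A + B) * C).re = 0) :
    HasDerivAt (fun t : ℝ => 1 - ‖z t‖ / 2 ^ n) 0 t₀ := by
  have hsub : HasDerivAt (fun t : ℝ => t - t₀) 1 t₀ := (hasDerivAt_id t₀).sub_const t₀
  have hcos : HasDerivAt (fun t : ℝ => Real.cos (t - t₀)) 0 t₀ := by
    have h := hsub.cos
    simpa using h
  have hsin : HasDerivAt (fun t : ℝ => Real.sin (t - t₀)) 1 t₀ := by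
    have h := hsub.sin
    simpa using h
  set q : ℝ → ℝ := fun t => (A.re + Real.cos (t - t₀) * B.re + Real.sin (t - t₀) * C.re) ^ 2
      + (A.im + Real.cos (t - t₀) * B.im + Real.sin (t - t₀) * C.im) ^ 2 with hqdef
  have hu : HasDerivAt (fun t => A.re + Real.cos (t - t₀) * B.re + Real.sin (t - t₀) * C.re) C.re t₀ := by
    have h := ((hasDerivAt_const t₀ A.re).add (hcos.mul_const B.re)).add (hsin.mul_const C.re)
    simpa [Pi.add_def] using h
  have hv : HasDerivAt (fun t => A.im + Real.cos (t - t₀) * B.im + Real.sin (t - t₀) * C.im) C.im t₀ := by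
    have h := ((hasDerivAt_const t₀ A.im).add (hcos.mul_const B.im)).add (hsin.mul_const C.im)
    simpa [Pi.add_def] using h
  have horth' : (A + B).re * C.re + (A + B).im * C.im = 0 := by
    simp only [Complex.mul_re, Complex.conj_re, Complex.conj_im] at horth
    linarith
  have hq : HasDerivAt q 0 t₀ := by
    have h := (hu.pow 2).add (hv.pow 2)
    refine h.congr_deriv ?_
    simp [Real.cos_zero, Real.sin_zero, Complex.add_re, Complex.add_im] at horth' ⊢
    nlinarith [horth']
  have hqt₀ : q t₀ = Complex.normSq (A + B) := by
    simp [hqdef, Complex.normSq_apply, Complex.add_re, Complex.add_im]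
    ring
  have hqne : q t₀ ≠ 0 := by
    rw [hqt₀]
    exact ne_of_gt (Complex.normSq_pos.mpr hAB)
  have hsq : HasDerivAt (fun t => Real.sqrt (q t)) 0 t₀ := by
    have h := (Real.hasDerivAt_sqrt hqne).comp t₀ hq
    simpa [Function.comp_def] using h
  have habs : ∀ t, ‖z t‖ = Real.sqrt (q t) := by
    intro t
    rw [hz t, Complex.norm_def]
    congr 1
    simp only [Complex.normSq_apply, Complex.add_re, Complex.add_im, Complex.mul_re,
      Complex.mul_im, Complex.ofReal_re, Complex.ofReal_im, hqdef]
    ring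
  have hfinal : HasDerivAt (fun t => 1 - Real.sqrt (q t) / 2 ^ n) 0 t₀ := by
    have h := (hsq.div_const (2 ^ n : ℝ)).const_sub 1
    simpa using h
  have hfun : (fun t : ℝ => 1 - ‖z t‖ / 2 ^ n)
      = fun t => 1 - Real.sqrt (q t) / 2 ^ n := funext fun t => by rw [habs t]
  rw [hfun]
  exact hfinal

end Master
section MainAux
open Matrix Complex
open scoped Kronecker

lemma isRealMat_map_eq {m : Type*} {M : Matrix m m ℂ} (h : IsRealMat M) :
    M.map (starRingEnd ℂ) = M := by
  funext i j
  rw [Matrix.map_apply]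
  exact h i j

lemma isRealMat_of_map_eq {m : Type*} {M : Matrix m m ℂ} (h : M.map (starRingEnd ℂ) = M) :
    IsRealMat M := by
  intro i j
  conv_rhs => rw [← h]
  rfl

lemma horth_ia (ph τ ρ : ℂ) (hcc : (starRingEnd ℂ) ph * ph = 1)
    (hτ : (starRingEnd ℂ) τ = τ) (hρ : (starRingEnd ℂ) ρ = ρ) :
    ((starRingEnd ℂ) (0 + ph * τ) * (-(Complex.I * (ph * ρ)))).re = 0 := by
  lift τ to ℝ using (Complex.conj_eq_iff_im.mp hτ) with r
  lift ρ to ℝ using (Complex.conj_eq_iff_im.mp hρ) with u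
  have key : (starRingEnd ℂ) (0 + ph * (r : ℂ)) * (-(Complex.I * (ph * (u : ℂ))))
      = ((starRingEnd ℂ) ph * ph) * (-((r : ℂ) * (u : ℂ) * Complex.I)) := by
    rw [map_add, map_zero, zero_add, _root_.map_mul, Complex.conj_ofReal]
    ring
  rw [key, hcc, one_mul]
  simp [Complex.mul_re]

lemma horth_ib (ph τ γ : ℂ) (hcc : (starRingEnd ℂ) ph * ph = 1)
    (hτ : (starRingEnd ℂ) τ = τ) (hγ : (starRingEnd ℂ) γ = -γ) :
    ((starRingEnd ℂ) (0 + ph * τ) * (ph * γ)).re = 0 := by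
  lift τ to ℝ using (Complex.conj_eq_iff_im.mp hτ) with r
  have hγre : γ.re = 0 := by
    have h := congrArg Complex.re hγ
    simp only [Complex.conj_re, Complex.neg_re] at h
    linarith
  have key : (starRingEnd ℂ) (0 + ph * (r : ℂ)) * (ph * γ)
      = ((starRingEnd ℂ) ph * ph) * ((r : ℂ) * γ) := by
    rw [map_add, map_zero, zero_add, _root_.map_mul, Complex.conj_ofReal]
    ring
  rw [key, hcc, one_mul]
  simp [Complex.mul_re, hγre]

lemma W_decomp (x s : ℝ) : RZ (-x) * RY s * RZ x
    = (Real.cos s : ℂ) • 1 + (Real.sin s : ℂ) • (RZ (-x) * Kc * RZ x) := by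
  rw [RY_decomp, Matrix.mul_add, Matrix.add_mul]
  congr 1
  · rw [Matrix.mul_smul, Matrix.smul_mul, Matrix.mul_one, RZ_mul, neg_add_cancel, RZ_zero]
  · rw [Matrix.mul_smul, Matrix.smul_mul]

lemma Bm_antiherm (x : ℝ) : (RZ (-x) * Kc * RZ x)ᴴ = -(RZ (-x) * Kc * RZ x) := by
  rw [Matrix.conjTranspose_mul, Matrix.conjTranspose_mul, RZ_conjTranspose, RZ_conjTranspose,
    Kc_conjTranspose, neg_neg]
  simp only [Matrix.mul_neg, Matrix.neg_mul, Matrix.mul_assoc]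

end MainAux

/-- at any parameter point where the HEA layer is the identity up to a global
phase, every first-order partial derivative of the cost
`1 − |Tr(T_nᴴ·V)|/2^n` (T_n the k-Toffoli, k = n−1) vanishes. -/
theorem hea_identity_config_is_stationary (n : ℕ) (hn : 2 ≤ n)
    (a₀ b₀ c₀ d₀ : Fin n → ℝ) (α : ℝ)
    (hid : heaV n a₀ b₀ c₀ d₀ =
      Complex.exp (Complex.I * α) • (1 : Matrix (Fin n → Fin 2) (Fin n → Fin 2) ℂ)) :
    ∀ i : Fin n,
      HasDerivAt (fun t : ℝ =>
        1 - ‖((toff n)ᴴ * heaV n (Function.update a₀ i t) b₀ c₀ d₀).trace‖ / 2 ^ n)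
        0 (a₀ i) ∧
      HasDerivAt (fun t : ℝ =>
        1 - ‖((toff n)ᴴ * heaV n a₀ (Function.update b₀ i t) c₀ d₀).trace‖ / 2 ^ n)
        0 (b₀ i) ∧
      HasDerivAt (fun t : ℝ =>
        1 - ‖((toff n)ᴴ * heaV n a₀ b₀ (Function.update c₀ i t) d₀).trace‖ / 2 ^ n)
        0 (c₀ i) ∧
      HasDerivAt (fun t : ℝ =>
        1 - ‖((toff n)ᴴ * heaV n a₀ b₀ c₀ (Function.update d₀ i t)).trace‖ / 2 ^ n)
        0 (d₀ i) := by
  intro i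
  have hn0 : 0 < n := by omega
  set ph : ℂ := Complex.exp (Complex.I * α) with hph
  have hph_ne : ph ≠ 0 := Complex.exp_ne_zero _
  have hcc : (starRingEnd ℂ) ph * ph = 1 := by
    rw [hph, ← Complex.exp_conj, ← Complex.exp_add]
    have h0 : (starRingEnd ℂ) (Complex.I * α) + Complex.I * α = 0 := by
      rw [_root_.map_mul, Complex.conj_I, Complex.conj_ofReal]
      ring
    rw [h0, Complex.exp_zero]
  have hDR : heaD n d₀ * heaR n a₀ b₀ c₀ = ph • 1 := by
    rw [← heaV]; exact hid
  set τ : ℂ := ((2 ^ n - 2 : ℕ) : ℂ) with hτdef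
  have hτr : (starRingEnd ℂ) τ = τ := by rw [hτdef]; exact Complex.conj_natCast _
  have hτne : τ ≠ 0 := by
    rw [hτdef, Nat.cast_ne_zero]
    have h4 : 4 ≤ 2 ^ n := by
      calc (4 : ℕ) = 2 ^ 2 := rfl
        _ ≤ 2 ^ n := Nat.pow_le_pow_right (by norm_num) hn
    omega
  have hT : (toff n)ᴴ = toff n := toff_herm hn0
  have hTtr : (toff n).trace = τ := toff_trace hn
  have hABne : (0 : ℂ) + ph * τ ≠ 0 := by simpa using mul_ne_zero hph_ne hτne
  have hTreal : IsRealMat (toff n) := toff_real hn0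
  have hG1real : IsRealMat (e1 n i PZ) := e1_real i PZ_real
  refine ⟨?_, ?_, ?_, ?_⟩
  -- case a
  · set ρ : ℂ := (toff n * e1 n i PZ).trace with hρdef
    have hρr : (starRingEnd ℂ) ρ = ρ := (hTreal.mul hG1real).trace
    have hz : ∀ t : ℝ, ((toff n)ᴴ * heaV n (Function.update a₀ i t) b₀ c₀ d₀).trace
        = 0 + (Real.cos (t - a₀ i) : ℂ) * (ph * τ)
          + (Real.sin (t - a₀ i) : ℂ) * (-(Complex.I * (ph * ρ))) := by
      intro t
      rw [heaV, heaR_update_a, ← Matrix.mul_assoc (heaD n d₀) (heaR n a₀ b₀ c₀), hDR, hT]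
      rw [RZ_decomp, e1_add, e1_smul, e1_smul, e1_one]
      simp only [Matrix.smul_mul, Matrix.one_mul, Matrix.mul_smul, Matrix.mul_add,
        Matrix.mul_one, Matrix.trace_add, Matrix.trace_smul, smul_eq_mul, hTtr, ← hρdef]
      ring
    exact master _ _ _ _ hz hABne (horth_ia ph τ ρ hcc hτr hρr)
  -- case b
  · set γ : ℂ := (toff n * e1 n i (RZ (-(a₀ i)) * Kc * RZ (a₀ i))).trace with hγdef
    have hγa : (starRingEnd ℂ) γ = -γ := by
      have h1 : (starRingEnd ℂ) γ
          = ((toff n * e1 n i (RZ (-(a₀ i)) * Kc * RZ (a₀ i)))ᴴ).trace := by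
        rw [Matrix.trace_conjTranspose, hγdef, starRingEnd_apply]
      rw [h1, Matrix.conjTranspose_mul, e1_conjTranspose, Bm_antiherm, e1_neg, hT,
        Matrix.neg_mul, Matrix.trace_neg, Matrix.trace_mul_comm]
    have hz : ∀ t : ℝ, ((toff n)ᴴ * heaV n a₀ (Function.update b₀ i t) c₀ d₀).trace
        = 0 + (Real.cos (t - b₀ i) : ℂ) * (ph * τ)
          + (Real.sin (t - b₀ i) : ℂ) * (ph * γ) := by
      intro t
      rw [heaV, heaR_update_b, ← Matrix.mul_assoc (heaD n d₀) (heaR n a₀ b₀ c₀), hDR, hT]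
      rw [W_decomp, e1_add, e1_smul, e1_smul, e1_one]
      simp only [Matrix.smul_mul, Matrix.one_mul, Matrix.mul_smul, Matrix.mul_add,
        Matrix.mul_one, Matrix.trace_add, Matrix.trace_smul, smul_eq_mul, hTtr, ← hγdef]
      ring
    exact master _ _ _ _ hz hABne (horth_ib ph τ γ hcc hτr hγa)
  -- case c
  · set Mm : Matrix (Fin n → Fin 2) (Fin n → Fin 2) ℂ
      := (starRingEnd ℂ) ph • heaR n a₀ b₀ c₀ with hMmdef
    have hphc : ph * (starRingEnd ℂ) ph = 1 := by rw [mul_comm]; exact hcc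
    have hRMm : heaR n a₀ b₀ c₀ = ph • Mm := by
      rw [hMmdef, smul_smul, hphc, one_smul]
    have hRD : heaR n a₀ b₀ c₀ * heaD n d₀ = ph • 1 := by
      have h1 : heaD n d₀ * (ph⁻¹ • heaR n a₀ b₀ c₀) = 1 := by
        rw [Matrix.mul_smul, hDR, smul_smul, inv_mul_cancel₀ hph_ne, one_smul]
      have h2 : (ph⁻¹ • heaR n a₀ b₀ c₀) * heaD n d₀ = 1 := mul_eq_one_comm.mp h1
      calc heaR n a₀ b₀ c₀ * heaD n d₀
          = (ph • (ph⁻¹ • heaR n a₀ b₀ c₀)) * heaD n d₀ := by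
            rw [smul_smul, mul_inv_cancel₀ hph_ne, one_smul]
        _ = ph • ((ph⁻¹ • heaR n a₀ b₀ c₀) * heaD n d₀) := by rw [Matrix.smul_mul]
        _ = ph • 1 := by rw [h2]
    have hMD : Mm * heaD n d₀ = 1 := by
      rw [hMmdef, Matrix.smul_mul, hRD, smul_smul, hcc, one_smul]
    have hDM : heaD n d₀ * Mm = 1 := mul_eq_one_comm.mp hMD
    have hDreal : IsRealMat (heaD n d₀) := by
      rw [heaD]
      apply list_prod_real
      intro X hX
      rw [List.mem_reverse, List.mem_map] at hX
      obtain ⟨j, _, rfl⟩ := hX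
      exact embed2_real _ _ (CRY_real _)
    have hMmreal : IsRealMat Mm := by
      apply isRealMat_of_map_eq
      have h1 : (Mm.map (starRingEnd ℂ)) * heaD n d₀ = 1 := by
        have h2 := congrArg (fun X : Matrix (Fin n → Fin 2) (Fin n → Fin 2) ℂ =>
          X.map (starRingEnd ℂ)) hMD
        simp only [Matrix.map_mul] at h2
        rw [isRealMat_map_eq hDreal] at h2
        rw [h2]
        exact Matrix.map_one _ (map_zero _) (map_one _)
      calc Mm.map (starRingEnd ℂ)
          = Mm.map (starRingEnd ℂ) * (heaD n d₀ * Mm) := by rw [hDM, Matrix.mul_one]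
        _ = (Mm.map (starRingEnd ℂ) * heaD n d₀) * Mm := by rw [Matrix.mul_assoc]
        _ = Mm := by rw [h1, Matrix.one_mul]
    set χ : ℂ := (toff n * (heaD n d₀ * (e1 n i PZ * Mm))).trace with hχdef
    have hχr : (starRingEnd ℂ) χ = χ := (hTreal.mul (hDreal.mul (hG1real.mul hMmreal))).trace
    have hz : ∀ t : ℝ, ((toff n)ᴴ * heaV n a₀ b₀ (Function.update c₀ i t) d₀).trace
        = 0 + (Real.cos (t - c₀ i) : ℂ) * (ph * τ)
          + (Real.sin (t - c₀ i) : ℂ) * (-(Complex.I * (ph * χ))) := by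
      intro t
      rw [heaV, heaR_update_c, hT]
      rw [RZ_decomp, e1_add, e1_smul, e1_smul, e1_one, hRMm]
      simp only [Matrix.add_mul, Matrix.smul_mul, Matrix.one_mul, Matrix.mul_smul,
        Matrix.mul_add, Matrix.mul_one, hDM, Matrix.trace_add, Matrix.trace_smul,
        smul_eq_mul, hTtr, ← hχdef]
      ring
    exact master _ _ _ _ hz hABne (horth_ia ph τ χ hcc hτr hχr)
  -- case d
  · have hpq : i ≠ fsucc i := fsucc_ne hn i
    have hD0 := heaD_split d₀ i
    set L : Matrix (Fin n → Fin 2) (Fin n → Fin 2) ℂ :=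
      ((((List.finRange n).drop (i.val + 1)).map fun j => embed2 n j (fsucc j) (CRY (d₀ j))).reverse).prod with hLdef
    set Pm : Matrix (Fin n → Fin 2) (Fin n → Fin 2) ℂ :=
      ((((List.finRange n).take i.val).map fun j => embed2 n j (fsucc j) (CRY (d₀ j))).reverse).prod with hPmdef
    have hLorth : Lᵀ * L = 1 := by
      rw [hLdef]
      apply list_prod_orth
      intro X hX
      rw [List.mem_reverse, List.mem_map] at hX
      obtain ⟨j, _, rfl⟩ := hX
      exact embed2_orth j (fsucc j) (fsucc_ne hn j) (CRY_orth (d₀ j))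
    have hLorth' : L * Lᵀ = 1 := mul_eq_one_comm.mp hLorth
    have hDupd : ∀ t : ℝ, heaD n (Function.update d₀ i t)
        = L * (embed2 n i (fsucc i) (CRY (t - d₀ i))
            * (embed2 n i (fsucc i) (CRY (d₀ i)) * Pm)) := by
      intro t
      have h := heaD_split (Function.update d₀ i t) i
      rw [Function.update_self] at h
      have hmap1 : (((List.finRange n).take i.val).map
            fun j => embed2 n j (fsucc j) (CRY (Function.update d₀ i t j)))
          = (((List.finRange n).take i.val).map fun j => embed2 n j (fsucc j) (CRY (d₀ j))) := by
        apply List.map_congr_left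
        intro j hj
        have hji : j ≠ i := fun hc => (not_mem_take_drop i).1 (hc ▸ hj)
        rw [Function.update_of_ne hji]
      have hmap2 : (((List.finRange n).drop (i.val + 1)).map
            fun j => embed2 n j (fsucc j) (CRY (Function.update d₀ i t j)))
          = (((List.finRange n).drop (i.val + 1)).map fun j => embed2 n j (fsucc j) (CRY (d₀ j))) := by
        apply List.map_congr_left
        intro j hj
        have hji : j ≠ i := fun hc => (not_mem_take_drop i).2 (hc ▸ hj)
        rw [Function.update_of_ne hji]
      rw [hmap1, hmap2] at h
      rw [show CRY t = CRY (t - d₀ i) * CRY (d₀ i) by rw [CRY_mul, sub_add_cancel]] at h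
      rw [← embed2_mul i (fsucc i) hpq] at h
      rw [h]
      simp only [Matrix.mul_assoc]
      rfl
    have hLQR : (L * (embed2 n i (fsucc i) (CRY (d₀ i)) * Pm)) * heaR n a₀ b₀ c₀ = ph • 1 := by
      rw [← hD0]; exact hDR
    have hQR : embed2 n i (fsucc i) (CRY (d₀ i)) * (Pm * heaR n a₀ b₀ c₀) = ph • Lᵀ := by
      have hcalc : (embed2 n i (fsucc i) (CRY (d₀ i)) * Pm) * heaR n a₀ b₀ c₀ = ph • Lᵀ := by
        calc (embed2 n i (fsucc i) (CRY (d₀ i)) * Pm) * heaR n a₀ b₀ c₀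
            = (Lᵀ * L) * ((embed2 n i (fsucc i) (CRY (d₀ i)) * Pm) * heaR n a₀ b₀ c₀) := by
              rw [hLorth, Matrix.one_mul]
          _ = Lᵀ * ((L * (embed2 n i (fsucc i) (CRY (d₀ i)) * Pm)) * heaR n a₀ b₀ c₀) := by
              simp only [Matrix.mul_assoc]
          _ = Lᵀ * (ph • 1) := by rw [hLQR]
          _ = ph • Lᵀ := by rw [Matrix.mul_smul, Matrix.mul_one]
      rw [← hcalc, Matrix.mul_assoc]
    have hE01 : embed2 n i (fsucc i) (P0 ⊗ₖ (1 : Matrix (Fin 2) (Fin 2) ℂ))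
        + embed2 n i (fsucc i) (P1 ⊗ₖ (1 : Matrix (Fin 2) (Fin 2) ℂ)) = 1 := by
      rw [← embed2_add, ← Matrix.add_kronecker, P0_add_P1, Matrix.one_kronecker_one, embed2_one]
    have hS : (Lᵀ * (toff n * L))ᵀ = Lᵀ * (toff n * L) := by
      simp only [Matrix.transpose_mul, Matrix.transpose_transpose, toff_transpose hn0,
        Matrix.mul_assoc]
    have hEk : (embed2 n i (fsucc i) (P1 ⊗ₖ Kc))ᵀ = -(embed2 n i (fsucc i) (P1 ⊗ₖ Kc)) := by
      rw [embed2_transpose, P1Kc_transpose, embed2_neg]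
    have hC0 : (toff n * (L * (embed2 n i (fsucc i) (P1 ⊗ₖ Kc) * Lᵀ))).trace = 0 := by
      have h1 : (toff n * (L * (embed2 n i (fsucc i) (P1 ⊗ₖ Kc) * Lᵀ))).trace
          = ((Lᵀ * (toff n * L)) * embed2 n i (fsucc i) (P1 ⊗ₖ Kc)).trace := by
        calc (toff n * (L * (embed2 n i (fsucc i) (P1 ⊗ₖ Kc) * Lᵀ))).trace
            = ((toff n * L * embed2 n i (fsucc i) (P1 ⊗ₖ Kc)) * Lᵀ).trace := by
              simp only [Matrix.mul_assoc]
          _ = (Lᵀ * (toff n * L * embed2 n i (fsucc i) (P1 ⊗ₖ Kc))).trace :=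
              Matrix.trace_mul_comm _ _
          _ = ((Lᵀ * (toff n * L)) * embed2 n i (fsucc i) (P1 ⊗ₖ Kc)).trace := by
              simp only [Matrix.mul_assoc]
      have h2 : ((Lᵀ * (toff n * L)) * embed2 n i (fsucc i) (P1 ⊗ₖ Kc)).trace
          = -((Lᵀ * (toff n * L)) * embed2 n i (fsucc i) (P1 ⊗ₖ Kc)).trace := by
        conv_lhs => rw [← Matrix.trace_transpose, Matrix.transpose_mul, hEk, hS]
        rw [Matrix.neg_mul, Matrix.trace_neg, Matrix.trace_mul_comm]
      rw [h1]
      linear_combination h2 / 2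
    have hsum : (toff n * (L * (embed2 n i (fsucc i) (P0 ⊗ₖ (1 : Matrix (Fin 2) (Fin 2) ℂ)) * Lᵀ))).trace
        + (toff n * (L * (embed2 n i (fsucc i) (P1 ⊗ₖ (1 : Matrix (Fin 2) (Fin 2) ℂ)) * Lᵀ))).trace = τ := by
      rw [← Matrix.trace_add, ← Matrix.mul_add, ← Matrix.mul_add, ← Matrix.add_mul, hE01,
        Matrix.one_mul, hLorth', Matrix.mul_one, hTtr]
    have hz : ∀ t : ℝ, ((toff n)ᴴ * heaV n a₀ b₀ c₀ (Function.update d₀ i t)).trace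
        = ph * (toff n * (L * (embed2 n i (fsucc i) (P0 ⊗ₖ (1 : Matrix (Fin 2) (Fin 2) ℂ)) * Lᵀ))).trace
          + (Real.cos (t - d₀ i) : ℂ)
            * (ph * (toff n * (L * (embed2 n i (fsucc i) (P1 ⊗ₖ (1 : Matrix (Fin 2) (Fin 2) ℂ)) * Lᵀ))).trace)
          + (Real.sin (t - d₀ i) : ℂ)
            * (ph * (toff n * (L * (embed2 n i (fsucc i) (P1 ⊗ₖ Kc) * Lᵀ))).trace) := by
      intro t
      rw [heaV, hDupd t, hT]
      simp only [Matrix.mul_assoc]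
      rw [hQR]
      rw [CRY_decomp, embed2_add, embed2_add, embed2_smul, embed2_smul]
      simp only [Matrix.add_mul, Matrix.smul_mul, Matrix.mul_add, Matrix.mul_smul,
        Matrix.trace_add, Matrix.trace_smul, smul_eq_mul]
      ring
    have hab : ph * (toff n * (L * (embed2 n i (fsucc i) (P0 ⊗ₖ (1 : Matrix (Fin 2) (Fin 2) ℂ)) * Lᵀ))).trace
        + ph * (toff n * (L * (embed2 n i (fsucc i) (P1 ⊗ₖ (1 : Matrix (Fin 2) (Fin 2) ℂ)) * Lᵀ))).trace ≠ 0 := by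
      rw [← mul_add, hsum]
      exact mul_ne_zero hph_ne hτne
    have hor : ((starRingEnd ℂ)
          (ph * (toff n * (L * (embed2 n i (fsucc i) (P0 ⊗ₖ (1 : Matrix (Fin 2) (Fin 2) ℂ)) * Lᵀ))).trace
            + ph * (toff n * (L * (embed2 n i (fsucc i) (P1 ⊗ₖ (1 : Matrix (Fin 2) (Fin 2) ℂ)) * Lᵀ))).trace)
          * (ph * (toff n * (L * (embed2 n i (fsucc i) (P1 ⊗ₖ Kc) * Lᵀ))).trace)).re = 0 := by
      rw [hC0, mul_zero, mul_zero]
      simp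
    exact master _ _ _ _ hz hab hor
end

section
/- For all a, b, t ∈ ℝ: there exists α ∈ ℝ with R_Z(b)·R_Y(t)·R_Z(a) = e^{iα}·I₂ if and only if there exist integers u, v with t = π·u and a + b = π·v. -/
open Matrix
open scoped Kronecker

lemma expI (n : ℤ) : Complex.exp (n * Real.pi * Complex.I) = (-1)^n := by
  rw [mul_assoc, Complex.exp_int_mul, Complex.exp_pi_mul_I]

lemma negone_zpow_neg (v : ℤ) : ((-1 : ℂ))^(-v) = (-1)^v := by
  simp [_root_.zpow_neg, ← _root_.inv_zpow, inv_neg]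

lemma cosC (u : ℤ) : Complex.cos ((Real.pi * u : ℝ) : ℂ) = (-1)^u := by
  have h := @Complex.exp_mul_I ((Real.pi * u : ℝ) : ℂ)
  have hs : Complex.sin ((Real.pi * u : ℝ) : ℂ) = 0 := by
    rw [← Complex.ofReal_sin, mul_comm, Real.sin_int_mul_pi]; simp
  rw [hs, zero_mul, add_zero] at h
  rw [← h, show ((Real.pi * u : ℝ) : ℂ) * Complex.I = (u : ℂ) * Real.pi * Complex.I by push_cast; ring,
    expI]


/-- `R_Z(b)·R_Y(t)·R_Z(a)` is the identity up to a global phase iff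
`t ∈ πℤ` and `a + b ∈ πℤ`. -/
theorem rz_ry_rz_eq_phase_id_iff (a b t : ℝ) :
    (∃ α : ℝ, RZ b * RY t * RZ a = Complex.exp (Complex.I * α) • (1 : Matrix (Fin 2) (Fin 2) ℂ)) ↔
      (∃ u : ℤ, t = Real.pi * u) ∧ (∃ v : ℤ, a + b = Real.pi * v) := by
  constructor
  · rintro ⟨α, h⟩
    have h01 : (RZ b * RY t * RZ a) 0 1 = (Complex.exp (Complex.I * α) • (1 : Matrix (Fin 2) (Fin 2) ℂ)) 0 1 := by rw [h]
    have h00 : (RZ b * RY t * RZ a) 0 0 = (Complex.exp (Complex.I * α) • (1 : Matrix (Fin 2) (Fin 2) ℂ)) 0 0 := by rw [h]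
    have h11 : (RZ b * RY t * RZ a) 1 1 = (Complex.exp (Complex.I * α) • (1 : Matrix (Fin 2) (Fin 2) ℂ)) 1 1 := by rw [h]
    simp [RZ, RY, Matrix.mul_apply, Fin.sum_univ_two, Matrix.one_apply] at h01 h00 h11
    have hsr : Real.sin t = 0 := by
      have := h01; rw [← Complex.ofReal_sin] at this; exact_mod_cast this
    have hcr : Real.cos t ≠ 0 := by
      intro hc
      have := Real.sin_sq_add_cos_sq t
      rw [hsr, hc] at this; norm_num at this
    have hcC : Complex.cos (t : ℂ) ≠ 0 := by
      rw [← Complex.ofReal_cos]; exact_mod_cast hcr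
    refine ⟨?_, ?_⟩
    · obtain ⟨n, hn⟩ := Real.sin_eq_zero_iff.mp hsr
      exact ⟨n, by linarith⟩
    · have key : Complex.exp (-(Complex.I * b)) * Complex.exp (-(Complex.I * a)) =
          Complex.exp (Complex.I * b) * Complex.exp (Complex.I * a) := by
        have h2 := h00.trans h11.symm
        have h3 : (Complex.exp (-(Complex.I * b)) * Complex.exp (-(Complex.I * a))) * Complex.cos t =
            (Complex.exp (Complex.I * b) * Complex.exp (Complex.I * a)) * Complex.cos t := by
          linear_combination h2
        exact mul_right_cancel₀ hcC h3
      rw [← Complex.exp_add, ← Complex.exp_add] at key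
      obtain ⟨n, hn⟩ := Complex.exp_eq_exp_iff_exists_int.mp key
      refine ⟨-n, ?_⟩
      have hC : ((a + b : ℝ) : ℂ) = ((Real.pi * (-n : ℤ) : ℝ) : ℂ) := by
        push_cast
        apply mul_left_cancel₀ Complex.I_ne_zero
        linear_combination (-(1:ℂ)/2) * hn
      exact_mod_cast hC
  · rintro ⟨⟨u, hu⟩, ⟨v, hv⟩⟩
    refine ⟨Real.pi * ((u + v : ℤ) : ℝ), ?_⟩
    have hv' : (a : ℂ) + b = Real.pi * v := by exact_mod_cast hv
    have hsin : Complex.sin (t : ℂ) = 0 := by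
      rw [hu, ← Complex.ofReal_sin, mul_comm, Real.sin_int_mul_pi]; simp
    have hcos : Complex.cos (t : ℂ) = (-1)^u := by rw [hu]; exact_mod_cast cosC u
    have e1 : Complex.exp (-(Complex.I * b)) * Complex.exp (-(Complex.I * a)) = (-1 : ℂ)^v := by
      rw [← Complex.exp_add,
        show -(Complex.I * (b:ℂ)) + -(Complex.I * a) = ((-v : ℤ) : ℂ) * Real.pi * Complex.I by
          push_cast; linear_combination (-Complex.I) * hv',
        expI, negone_zpow_neg]
    have e2 : Complex.exp (Complex.I * b) * Complex.exp (Complex.I * a) = (-1 : ℂ)^v := by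
      rw [← Complex.exp_add,
        show Complex.I * (b:ℂ) + Complex.I * a = ((v : ℤ) : ℂ) * Real.pi * Complex.I by
          push_cast; linear_combination Complex.I * hv',
        expI]
    have e3 : Complex.exp (Complex.I * ((Real.pi : ℂ) * ((u : ℂ) + (v : ℂ)))) = (-1 : ℂ)^u * (-1 : ℂ)^v := by
      rw [show Complex.I * ((Real.pi : ℂ) * ((u : ℂ) + (v : ℂ))) = ((u + v : ℤ) : ℂ) * Real.pi * Complex.I by
          push_cast; ring, expI, zpow_add₀ (by norm_num : (-1:ℂ) ≠ 0)]
    ext i j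
    fin_cases i <;> fin_cases j <;>
      simp [RZ, RY, Matrix.mul_apply, Fin.sum_univ_two, Matrix.one_apply, hsin, hcos]
    · rw [e3]; linear_combination (-1 : ℂ)^u * e1
    · rw [e3]; linear_combination (-1 : ℂ)^u * e2
end

section
/- For all a, b, t ∈ ℝ: there exists α ∈ ℝ with Z·R_Z(b)·R_Y(t)·R_Z(a) = e^{iα}·I₂ if and only if there exist integers u, v with t = π·u and a + b = π·(1/2 + v). -/
open Matrix
open scoped Kronecker

lemma prod_formula (a b t : ℝ) : PZ * RZ b * RY t * RZ a =
    !![Complex.exp (-(Complex.I * ((a:ℂ)+b))) * Real.cos t,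
       -(Complex.exp (Complex.I * ((a:ℂ)-b)) * Real.sin t);
       -(Complex.exp (-(Complex.I * ((a:ℂ)-b))) * Real.sin t),
       -(Complex.exp (Complex.I * ((a:ℂ)+b)) * Real.cos t)] := by
  have h1 : Complex.exp (-(Complex.I * ((a:ℂ)+b))) =
      Complex.exp (-Complex.I * b) * Complex.exp (-Complex.I * a) := by
    rw [← Complex.exp_add]; congr 1; ring
  have h2 : Complex.exp (Complex.I * ((a:ℂ)-b)) =
      Complex.exp (-Complex.I * b) * Complex.exp (Complex.I * a) := by
    rw [← Complex.exp_add]; congr 1; ring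
  have h3 : Complex.exp (-(Complex.I * ((a:ℂ)-b))) =
      Complex.exp (Complex.I * b) * Complex.exp (-Complex.I * a) := by
    rw [← Complex.exp_add]; congr 1; ring
  have h4 : Complex.exp (Complex.I * ((a:ℂ)+b)) =
      Complex.exp (Complex.I * b) * Complex.exp (Complex.I * a) := by
    rw [← Complex.exp_add]; congr 1; ring
  simp only [PZ, RZ, RY, Matrix.mul_fin_two, h1, h2, h3, h4]
  norm_num
  ring_nf
  exact ⟨⟨trivial, trivial⟩, trivial, trivial⟩

/-- `Z·R_Z(b)·R_Y(t)·R_Z(a)` is the identity up to a global phase iff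
`t ∈ πℤ` and `a + b ∈ π(1/2 + ℤ)`. -/
theorem z_rz_ry_rz_eq_phase_id_iff (a b t : ℝ) :
    (∃ α : ℝ, PZ * RZ b * RY t * RZ a = Complex.exp (Complex.I * α) • (1 : Matrix (Fin 2) (Fin 2) ℂ)) ↔
      (∃ u : ℤ, t = Real.pi * u) ∧ (∃ v : ℤ, a + b = Real.pi * (1 / 2 + v)) := by
  rw [prod_formula]
  set A : ℂ := Complex.I * ((a:ℂ)+b) with hA
  set E : ℂ := Complex.exp A with hE
  set F : ℂ := Complex.exp (-A) with hF
  have hEF : E * F = 1 := by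
    rw [hE, hF, ← Complex.exp_add, add_neg_cancel, Complex.exp_zero]
  have hEne : E ≠ 0 := Complex.exp_ne_zero _
  constructor
  · rintro ⟨α, h⟩
    have h10 := congrFun (congrFun h 1) 0
    have h00 := congrFun (congrFun h 0) 0
    have h11 := congrFun (congrFun h 1) 1
    simp [Matrix.smul_apply, Matrix.one_apply] at h10 h00 h11
    have hs : Real.sin t = 0 := by exact_mod_cast h10
    have hc : Complex.cos ↑t ≠ 0 := by
      have hsq := Real.sin_sq_add_cos_sq t
      rw [hs] at hsq
      rw [← Complex.ofReal_cos]
      simp only [ne_eq, Complex.ofReal_eq_zero]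
      intro hc0
      rw [hc0] at hsq; norm_num at hsq
    have key : F * Complex.cos ↑t = -(E * Complex.cos ↑t) := h00.trans h11.symm
    have key2 : F = -E := mul_right_cancel₀ hc (by linear_combination key)
    have hEF' : E * -E = 1 := by rw [← key2]; exact hEF
    have hexp1 : Complex.exp (A + A + (Real.pi : ℂ) * Complex.I) = 1 := by
      rw [Complex.exp_add, Complex.exp_add, ← hE, Complex.exp_pi_mul_I]
      linear_combination hEF'
    obtain ⟨n, hn⟩ := Complex.exp_eq_one_iff.mp hexp1
    have him := congrArg Complex.im hn
    rw [hA] at him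
    simp [Complex.add_im, Complex.mul_im, Complex.mul_re] at him
    constructor
    · obtain ⟨m, hm⟩ := Real.sin_eq_zero_iff.mp hs
      exact ⟨m, by rw [← hm]; ring⟩
    · refine ⟨n - 1, ?_⟩
      push_cast
      linarith [him]
  · rintro ⟨⟨u, hu⟩, ⟨v, hv⟩⟩
    refine ⟨Real.pi * u - (a + b), ?_⟩
    have hs : Real.sin t = 0 := by rw [hu, mul_comm]; exact Real.sin_int_mul_pi u
    have hcos : Complex.exp (Complex.I * (Real.pi : ℂ) * (u : ℂ)) = (Real.cos t : ℂ) := by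
      rw [show Complex.I * (Real.pi : ℂ) * (u : ℂ) = ((Real.pi * u : ℝ) : ℂ) * Complex.I by
        push_cast; ring]
      rw [Complex.exp_mul_I, ← Complex.ofReal_cos, ← Complex.ofReal_sin, ← hu, hs]
      simp
    have hEneg : E = -F := by
      have h2 : Complex.exp (A + A) = -1 := by
        rw [hA, show Complex.I * ((a:ℂ)+b) + Complex.I * ((a:ℂ)+b) =
            (Real.pi : ℂ) * Complex.I + ((v : ℂ)) * (2 * (Real.pi:ℂ) * Complex.I) by
          rw [show ((a:ℂ) + b) = ((a + b : ℝ) : ℂ) by push_cast; ring, hv]; push_cast; ring]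
        rw [Complex.exp_add, Complex.exp_pi_mul_I,
          show ((v:ℂ)) * (2 * (Real.pi:ℂ) * Complex.I) = ((v:ℤ):ℂ) * (2 * (Real.pi:ℂ) * Complex.I) by norm_num,
          Complex.exp_int_mul_two_pi_mul_I]
        ring
      rw [Complex.exp_add, ← hE] at h2
      have hEE : E * (E + F) = 0 := by linear_combination h2 + hEF
      rcases mul_eq_zero.mp hEE with h' | h'
      · exact absurd h' hEne
      · linear_combination h'
    have halpha : Complex.exp (Complex.I * ((Real.pi * u - (a + b) : ℝ) : ℂ)) =
        (Real.cos t : ℂ) * F := by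
      rw [show Complex.I * ((Real.pi * u - (a + b) : ℝ) : ℂ) =
          Complex.I * (Real.pi : ℂ) * (u : ℂ) + -A by rw [hA]; push_cast; ring,
        Complex.exp_add, hcos, ← hF]
    have hFalt : Complex.exp (-(Complex.I * (a:ℂ)) - Complex.I * (b:ℂ)) = F := by
      rw [hF]; congr 1; rw [hA]; ring
    ext i j
    fin_cases i <;> fin_cases j <;>
      simp [Matrix.smul_apply, Matrix.one_apply, hs, halpha, hEneg] <;>
      rw [show Complex.I * ((Real.pi:ℂ) * (u:ℂ) - ((a:ℂ)+(b:ℂ))) =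
          Complex.I * ((Real.pi * (u:ℝ) - (a+b) : ℝ):ℂ) by push_cast; ring,
        halpha, ← Complex.ofReal_cos] <;> ring
end

section
/- For every θ ∈ ℝ: there exist matrices A, B ∈ M₂(ℂ) with CR_Y(θ) = A ⊗ B if and only if there exists an integer w with θ = π·w. (Equivalently, the controlled-R_Y gate has Kronecker/operator rank 1 exactly when its angle is an integer multiple of π.) -/
open Matrix
open scoped Kronecker

/-- `CR_Y(θ)` is a Kronecker product of two single-qubit matrices iff
`θ` is an integer multiple of `π`. -/
theorem cry_kronecker_rank_one_iff (θ : ℝ) :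
    (∃ A B : Matrix (Fin 2) (Fin 2) ℂ, CRY θ = A ⊗ₖ B) ↔ (∃ w : ℤ, θ = Real.pi * w) := by
  constructor
  · rintro ⟨A, B, h⟩
    have h' : ∀ p q : Fin 2 × Fin 2, CRY θ p q = A p.1 q.1 * B p.2 q.2 := by
      intro p q
      rw [h]; rfl
    have h1 := h' (0,0) (0,0)
    have h2 := h' (0,1) (0,0)
    have h3 := h' (1,1) (1,0)
    simp [CRY, P0, P1, RY, Matrix.one_apply] at h1 h2 h3
    have hA : A 0 0 ≠ 0 := by
      intro hz; rw [hz, zero_mul] at h1; exact one_ne_zero h1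
    have hB : B 1 0 = 0 := h2.resolve_left hA
    rw [hB, mul_zero, ← Complex.ofReal_sin] at h3
    have hs' : Real.sin θ = 0 := by exact_mod_cast h3
    rcases Real.sin_eq_zero_iff.mp hs' with ⟨n, hn⟩
    exact ⟨n, by linarith [hn]⟩
  · rintro ⟨w, rfl⟩
    refine ⟨!![1, 0; 0, (Real.cos (Real.pi * w) : ℂ)], 1, ?_⟩
    have hs : Real.sin (Real.pi * w) = 0 := by
      rw [mul_comm]; exact Real.sin_int_mul_pi w
    ext ⟨i, j⟩ ⟨k, l⟩
    fin_cases i <;> fin_cases j <;> fin_cases k <;> fin_cases l <;>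
      simp [CRY, P0, P1, RY, Matrix.one_apply, hs]
end

section
/- Let n ≥ 2, let T_n ∈ M_{2^n}(ℂ) be the k-Toffoli gate (k = n−1), let i ∈ {1,…,n}, and let G = I_{2^{i−1}} ⊗ Y ⊗ I_{2^{n−i}} ∈ M_{2^n}(ℂ) be the Pauli Y acting on qubit i. Let D ∈ M_{2^n}(ℂ) be a diagonal unitary matrix, let A ∈ M_{2^n}(ℂ), and suppose there exist θ₀, α ∈ ℝ with A·exp(−iθ₀G)·D = e^{iα}·I_{2^n}. Then the second derivative at θ₀ of the function θ ↦ d(A·exp(−iθG)·D, T_n) = 1 − |Tr(T_nᴴ·A·exp(−iθG)·D)|/2^n is nonnegative. -/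
open Matrix
open scoped Kronecker

set_option linter.unusedSectionVars false
set_option maxHeartbeats 1000000

noncomputable def Umat : Matrix (Fin 2) (Fin 2) ℂ := !![1, 1; Complex.I, -Complex.I]
noncomputable def Vmat : Matrix (Fin 2) (Fin 2) ℂ := !![1/2, -Complex.I/2; 1/2, Complex.I/2]
lemma hUV : Umat * Vmat = 1 := by
  ext i j
  fin_cases i <;> fin_cases j <;>
    simp [Umat, Vmat, Matrix.mul_apply, Fin.sum_univ_two, Matrix.one_apply] <;> ring_nf <;>
    norm_num [Complex.I_sq]
lemma hVU : Vmat * Umat = 1 := by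
  ext i j
  fin_cases i <;> fin_cases j <;>
    simp [Umat, Vmat, Matrix.mul_apply, Fin.sum_univ_two, Matrix.one_apply] <;> ring_nf <;>
    norm_num [Complex.I_sq]

noncomputable def Uunit : (Matrix (Fin 2) (Fin 2) ℂ)ˣ := ⟨Umat, Vmat, hUV, hVU⟩

lemma exp_PY (θ : ℝ) :
    NormedSpace.exp ((-(Complex.I * (θ:ℂ))) • PY) =
      ((Real.cos θ : ℂ)) • (1 : Matrix (Fin 2) (Fin 2) ℂ) + (-(Complex.I * (Real.sin θ : ℂ))) • PY := by
  have key : (-(Complex.I * (θ:ℂ))) • PY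
      = (Uunit : Matrix (Fin 2) (Fin 2) ℂ) * diagonal ![-(Complex.I * (θ:ℂ)), Complex.I * (θ:ℂ)] * (↑Uunit⁻¹ : Matrix (Fin 2) (Fin 2) ℂ) := by
    show _ = Umat * _ * Vmat
    ext i j
    fin_cases i <;> fin_cases j <;>
      simp [Umat, Vmat, PY, Matrix.mul_apply, Fin.sum_univ_two, Matrix.diagonal_apply, Matrix.vecMul_diagonal] <;>
      ring_nf <;> norm_num [Complex.I_sq] <;> ring
  rw [key, Matrix.exp_units_conj Uunit, Matrix.exp_diagonal, Pi.exp_def]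
  show Umat * _ * Vmat = _
  have h1 : ∀ z : ℂ, NormedSpace.exp z = Complex.exp z := fun z =>
    (congrFun Complex.exp_eq_exp_ℂ z).symm
  have e1 : Complex.exp (-(Complex.I * (θ:ℂ))) = Complex.cos (θ:ℂ) - Complex.sin (θ:ℂ) * Complex.I := by
    rw [show (-(Complex.I * (θ:ℂ))) = (-(θ:ℂ)) * Complex.I by ring, Complex.exp_mul_I]
    simp [Complex.cos_neg, Complex.sin_neg]; ring
  have e2 : Complex.exp (Complex.I * (θ:ℂ)) = Complex.cos (θ:ℂ) + Complex.sin (θ:ℂ) * Complex.I := by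
    rw [show (Complex.I * (θ:ℂ)) = ((θ:ℂ)) * Complex.I by ring, Complex.exp_mul_I]
  ext i j
  fin_cases i <;> fin_cases j <;>
    simp [Umat, Vmat, PY, Matrix.mul_apply, Fin.sum_univ_two, Matrix.diagonal_apply, Matrix.vecMul_diagonal, h1, e1, e2,
      Matrix.one_apply] <;> ring_nf <;> norm_num [Complex.I_sq] <;> ring

lemma del_eq (n : ℕ) (p : Fin n) (x y : Fin n → Fin 2) :
    (∏ k : Fin n, if k = p then 1 else (if x k = y k then (1 : ℂ) else 0)) =
      if (∀ k, k ≠ p → x k = y k) then 1 else 0 := by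
  split_ifs with h
  · exact Finset.prod_eq_one fun k _ => by
      by_cases hk : k = p
      · simp [hk]
      · simp [hk, h k hk]
  · push_neg at h
    obtain ⟨k, hk, hxy⟩ := h
    exact Finset.prod_eq_zero (Finset.mem_univ k) (by simp [hk, hxy])

lemma embed1_apply (n : ℕ) (p : Fin n) (g : Matrix (Fin 2) (Fin 2) ℂ) (x y : Fin n → Fin 2) :
    embed1 n p g x y = g (x p) (y p) * if (∀ k, k ≠ p → x k = y k) then 1 else 0 := by
  rw [embed1, del_eq]

lemma eq_of_agree (n : ℕ) (p : Fin n) (x y : Fin n → Fin 2) (h1 : x p = y p)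
    (h2 : ∀ k, k ≠ p → x k = y k) : x = y := by
  funext k
  by_cases hk : k = p
  · subst hk; exact h1
  · exact h2 k hk

lemma sum_update (n : ℕ) (p : Fin n) (a : Fin n → Fin 2) (f : (Fin n → Fin 2) → ℂ)
    (hf : ∀ z, ¬ (∀ k, k ≠ p → z k = a k) → f z = 0) :
    ∑ z, f z = ∑ b : Fin 2, f (Function.update a p b) := by
  classical
  rw [← Finset.sum_subset (Finset.filter_subset (fun z => ∀ k, k ≠ p → z k = a k) Finset.univ)
    (fun z _ hz => hf z (by simpa using hz))]
  refine Finset.sum_nbij' (fun z => z p) (fun b => Function.update a p b) ?_ ?_ ?_ ?_ ?_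
  · intro z _; exact Finset.mem_univ _
  · intro b _
    simp only [Finset.mem_filter, Finset.mem_univ, true_and]
    intro k hk; rw [Function.update_of_ne hk]
  · intro z hz
    simp only [Finset.mem_filter, Finset.mem_univ, true_and] at hz
    show Function.update a p (z p) = z
    refine eq_of_agree n p _ _ (by simp) ?_
    intro k hk; rw [Function.update_of_ne hk]; exact (hz k hk).symm
  · intro b _; simp
  · intro z hz
    simp only [Finset.mem_filter, Finset.mem_univ, true_and] at hz
    have hzz : Function.update a p (z p) = z := by
      refine eq_of_agree n p _ _ (by simp) ?_
      intro k hk; rw [Function.update_of_ne hk]; exact (hz k hk).symm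
    show f z = f (Function.update a p (z p))
    rw [hzz]

lemma embed1_mul (n : ℕ) (p : Fin n) (g h : Matrix (Fin 2) (Fin 2) ℂ) :
    embed1 n p g * embed1 n p h = embed1 n p (g * h) := by
  ext x y
  rw [Matrix.mul_apply]
  rw [sum_update n p x (fun z => embed1 n p g x z * embed1 n p h z y) (fun z hz => by
    simp only [embed1_apply]
    rw [if_neg (by intro hall; exact hz fun k hk => (hall k hk).symm)]
    ring)]
  simp only [embed1_apply]
  have hupd : ∀ b : Fin 2, (∀ k, k ≠ p → x k = Function.update x p b k) := by
    intro b k hk; rw [Function.update_of_ne hk]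
  have hupd2 : ∀ b : Fin 2, (∀ k, k ≠ p → Function.update x p b k = y k) ↔ (∀ k, k ≠ p → x k = y k) := by
    intro b
    constructor <;> intro hh k hk <;> have := hh k hk
    · rwa [Function.update_of_ne hk] at this
    · rwa [Function.update_of_ne hk]
  have key : ∀ b : Fin 2,
      g (x p) (Function.update x p b p) * (if (∀ k, k ≠ p → x k = Function.update x p b k) then (1:ℂ) else 0) *
        (h (Function.update x p b p) (y p) * if (∀ k, k ≠ p → Function.update x p b k = y k) then (1:ℂ) else 0)
      = g (x p) b * h b (y p) * if (∀ k, k ≠ p → x k = y k) then (1:ℂ) else 0 := by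
    intro b
    rw [if_pos (hupd b), Function.update_self]
    by_cases hxy : ∀ k, k ≠ p → x k = y k
    · rw [if_pos ((hupd2 b).mpr hxy), if_pos hxy]; ring
    · rw [if_neg (fun hc => hxy ((hupd2 b).mp hc)), if_neg hxy]; ring
  rw [Finset.sum_congr rfl (fun b _ => key b), ← Finset.sum_mul, Matrix.mul_apply]

lemma embed1_one (n : ℕ) (p : Fin n) : embed1 n p 1 = 1 := by
  ext x y
  rw [embed1_apply, Matrix.one_apply, Matrix.one_apply]
  by_cases hxy : x = y
  · subst hxy; simp
  · rw [if_neg hxy]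
    by_cases h1 : x p = y p
    · rw [if_neg (fun h2 => hxy (eq_of_agree n p x y h1 h2))]; ring
    · simp [h1]

noncomputable def embedAlg (n : ℕ) (p : Fin n) :
    Matrix (Fin 2) (Fin 2) ℂ →ₐ[ℂ] Matrix (Fin n → Fin 2) (Fin n → Fin 2) ℂ where
  toFun := embed1 n p
  map_one' := embed1_one n p
  map_mul' g h := (embed1_mul n p g h).symm
  map_zero' := by ext x y; simp [embed1]
  map_add' g h := by ext x y; simp only [embed1, Matrix.add_apply]; ring
  commutes' c := by
    have : algebraMap ℂ (Matrix (Fin 2) (Fin 2) ℂ) c = c • 1 := by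
      rw [Algebra.algebraMap_eq_smul_one]
    rw [this, Algebra.algebraMap_eq_smul_one]
    show embed1 n p (c • 1) = c • (1 : Matrix (Fin n → Fin 2) (Fin n → Fin 2) ℂ)
    have : embed1 n p (c • 1) = c • embed1 n p 1 := by
      ext x y; simp only [embed1, Matrix.smul_apply, smul_eq_mul]; ring
    rw [this, embed1_one]

lemma embedAlg_continuous (n : ℕ) (p : Fin n) : Continuous (embedAlg n p) := by
  apply continuous_matrix
  intro x y
  show Continuous fun g : Matrix (Fin 2) (Fin 2) ℂ => embed1 n p g x y
  simp only [embed1]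
  exact (((continuous_apply_apply _ _)).mul continuous_const)

lemma embedAlg_apply (n : ℕ) (p : Fin n) (g : Matrix (Fin 2) (Fin 2) ℂ) :
    embedAlg n p g = embed1 n p g := rfl

lemma exp_G (n : ℕ) (p : Fin n) (θ : ℝ) :
    NormedSpace.exp ((-(Complex.I * (θ:ℂ))) • embed1 n p PY) =
      ((Real.cos θ : ℂ)) • (1 : Matrix (Fin n → Fin 2) (Fin n → Fin 2) ℂ)
        + (-(Complex.I * (Real.sin θ : ℂ))) • embed1 n p PY := by
  letI : SeminormedRing (Matrix (Fin 2) (Fin 2) ℂ) := Matrix.linftyOpSemiNormedRing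
  letI : NormedRing (Matrix (Fin 2) (Fin 2) ℂ) := Matrix.linftyOpNormedRing
  letI : NormedAlgebra ℂ (Matrix (Fin 2) (Fin 2) ℂ) := Matrix.linftyOpNormedAlgebra
  letI : SeminormedRing (Matrix (Fin n → Fin 2) (Fin n → Fin 2) ℂ) := Matrix.linftyOpSemiNormedRing
  letI : NormedRing (Matrix (Fin n → Fin 2) (Fin n → Fin 2) ℂ) := Matrix.linftyOpNormedRing
  letI : NormedAlgebra ℂ (Matrix (Fin n → Fin 2) (Fin n → Fin 2) ℂ) := Matrix.linftyOpNormedAlgebra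
  have h1 : (-(Complex.I * (θ:ℂ))) • embed1 n p PY = embedAlg n p ((-(Complex.I * (θ:ℂ))) • PY) := by
    rw [_root_.map_smul, embedAlg_apply]
  erw [h1, ← NormedSpace.map_exp_of_mem_ball (𝕂 := ℂ) (embedAlg n p) (embedAlg_continuous n p)
      ((-(Complex.I * (θ:ℂ))) • PY) ((NormedSpace.expSeries_radius_eq_top ℂ (Matrix (Fin 2) (Fin 2) ℂ)).symm ▸ edist_lt_top _ _), exp_PY, map_add, _root_.map_smul,
    _root_.map_smul, _root_.map_one, embedAlg_apply]


section ToffSec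
variable (n : ℕ)

def uu : Fin n → Fin 2 := fun k => if k.val + 1 < n then 1 else 0
def vv : Fin n → Fin 2 := fun _ => 1

lemma trace_std_mul {N : Type*} [Fintype N] [DecidableEq N] (a b : N)
    (M : Matrix N N ℂ) : ((Matrix.single a b (1:ℂ)) * M).trace = M b a := by
  simp [Matrix.trace, Matrix.diag, Matrix.mul_apply, Matrix.single, ite_and]

section
variable (hn : 2 ≤ n)
include hn

lemma uu_last : uu n ⟨n - 1, by omega⟩ = 0 := by simp [uu]; omega
lemma vv_last : vv n ⟨n - 1, by omega⟩ = 1 := by simp [vv]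
lemma uu_ne_vv : uu n ≠ vv n := by
  intro h
  have := congrFun h ⟨n - 1, by omega⟩
  rw [uu_last n hn, vv_last n hn] at this
  exact absurd this (by decide)

lemma lead_uu : ∀ k : Fin n, k.val + 1 < n → uu n k = 1 := fun k hk => by simp [uu, hk]
lemma lead_vv : ∀ k : Fin n, k.val + 1 < n → vv n k = 1 := fun _ _ => rfl

lemma lead_char (x : Fin n → Fin 2) (hx : ∀ k : Fin n, k.val + 1 < n → x k = 1) :
    x = uu n ∨ x = vv n := by
  have h2 : ∀ b : Fin 2, b = 0 ∨ b = 1 := by decide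
  rcases h2 (x ⟨n - 1, by omega⟩) with h | h
  · left
    funext k
    by_cases hk : k.val + 1 < n
    · rw [hx k hk, lead_uu n hn k hk]
    · have : k = ⟨n - 1, by omega⟩ := by
        apply Fin.ext; have := k.isLt; simp; omega
      rw [this, h, uu_last n hn]
  · right
    funext k
    by_cases hk : k.val + 1 < n
    · rw [hx k hk]; rfl
    · have : k = ⟨n - 1, by omega⟩ := by
        apply Fin.ext; have := k.isLt; simp; omega
      rw [this, h]; rfl

lemma toff_eq :
    toff n = 1 - Matrix.single (uu n) (uu n) 1 - Matrix.single (vv n) (vv n) 1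
      + Matrix.single (uu n) (vv n) 1 + Matrix.single (vv n) (uu n) 1 := by
  have hpos : 0 < n := by omega
  have hne := uu_ne_vv n hn
  funext x y
  have ht : toff n = (fun i j => if (∀ k : Fin n, k.val + 1 < n → (i k = 1 ∧ j k = 1)) then PX (i ⟨n - 1, by omega⟩) (j ⟨n - 1, by omega⟩) else if i = j then (1:ℂ) else 0 : Matrix (Fin n → Fin 2) (Fin n → Fin 2) ℂ) := by rw [toff]; exact dif_pos hpos
  rw [ht]
  simp only [Matrix.add_apply, Matrix.sub_apply, Matrix.one_apply, Matrix.single,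
    Matrix.of_apply]
  by_cases hC : ∀ k : Fin n, k.val + 1 < n → (x k = 1 ∧ y k = 1)
  · rw [if_pos hC]
    have hx := lead_char n hn x (fun k hk => (hC k hk).1)
    have hy := lead_char n hn y (fun k hk => (hC k hk).2)
    rcases hx with rfl | rfl <;> rcases hy with rfl | rfl <;>
      simp [uu_last n hn, vv_last n hn, hne, hne.symm, PX, Matrix.one_apply]
  · rw [if_neg hC]
    have hnot : ∀ s t : Fin n → Fin 2, (∀ k : Fin n, k.val + 1 < n → s k = 1) →
        (∀ k : Fin n, k.val + 1 < n → t k = 1) → ¬(s = x ∧ t = y) := by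
      rintro s t hs ht ⟨rfl, rfl⟩
      exact hC fun k hk => ⟨hs k hk, ht k hk⟩
    rw [if_neg (hnot _ _ (lead_uu n hn) (lead_uu n hn)),
      if_neg (hnot _ _ (lead_vv n hn) (lead_vv n hn)),
      if_neg (hnot _ _ (lead_uu n hn) (lead_vv n hn)),
      if_neg (hnot _ _ (lead_vv n hn) (lead_uu n hn))]
    split_ifs <;> simp

lemma stdH (a b : Fin n → Fin 2) :
    (Matrix.single a b (1:ℂ))ᴴ = Matrix.single b a 1 := by
  ext x y
  simp [Matrix.conjTranspose_apply, Matrix.single, apply_ite, and_comm]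

lemma trace_toffH_mul (M : Matrix (Fin n → Fin 2) (Fin n → Fin 2) ℂ) :
    ((toff n)ᴴ * M).trace =
      M.trace - M (uu n) (uu n) - M (vv n) (vv n) + M (uu n) (vv n) + M (vv n) (uu n) := by
  rw [toff_eq n hn]
  simp only [conjTranspose_add, conjTranspose_sub, conjTranspose_one,
    stdH n hn]
  simp only [Matrix.add_mul, Matrix.sub_mul, Matrix.one_mul, Matrix.trace_add, Matrix.trace_sub,
    trace_std_mul]
end

end ToffSec

lemma calc_key (a c B θ₀ : ℝ) (ha : 0 < a) (hc : |c| ≤ a) (hB : 0 < B) :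
    0 ≤ iteratedDeriv 2
      (fun θ : ℝ => 1 - Real.sqrt ((a * Real.cos (θ - θ₀))^2 + (c * Real.sin (θ - θ₀))^2) / B)
      θ₀ := by
  have hc2 : c^2 ≤ a^2 := by nlinarith [abs_nonneg c, sq_abs c]
  set L : ℝ := (a^2 - c^2)/2 with hL
  set K : ℝ := (a^2 + c^2)/2 with hK
  have hLnn : 0 ≤ L := by rw [hL]; linarith
  have hKL : K + L = a^2 := by rw [hK, hL]; ring
  set F : ℝ → ℝ := fun θ => K + L * Real.cos (2*(θ - θ₀)) with hFdef
  have harg : ∀ θ : ℝ, (a * Real.cos (θ - θ₀))^2 + (c * Real.sin (θ - θ₀))^2 = F θ := by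
    intro θ
    rw [hFdef]
    simp only [hK, hL]
    rw [Real.cos_two_mul]
    linear_combination (c^2) * Real.sin_sq_add_cos_sq (θ - θ₀)
  have hfun : (fun θ : ℝ => 1 - Real.sqrt ((a * Real.cos (θ - θ₀))^2 + (c * Real.sin (θ - θ₀))^2) / B)
      = fun θ => 1 - Real.sqrt (F θ) / B := by
    funext θ; rw [harg]
  rw [hfun]
  have hF0 : F θ₀ = a^2 := by simp [hFdef]; linarith [hKL]
  have hFC : Continuous F := by fun_prop
  have hFd : ∀ θ : ℝ, HasDerivAt F (-(2*L) * Real.sin (2*(θ - θ₀))) θ := by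
    intro θ
    have h1 : HasDerivAt (fun θ : ℝ => 2*(θ - θ₀)) 2 θ := by
      simpa using ((hasDerivAt_id θ).sub_const θ₀).const_mul 2
    have h2 := (Real.hasDerivAt_cos (2*(θ - θ₀))).comp θ h1
    have h3 := (h2.const_mul L).const_add K
    refine h3.congr_deriv ?_
    ring
  -- derivative of g on the set where F > 0
  have hg : ∀ θ : ℝ, 0 < F θ →
      HasDerivAt (fun θ => 1 - Real.sqrt (F θ) / B)
        ((2*L) * Real.sin (2*(θ - θ₀)) / (2 * Real.sqrt (F θ) * B)) θ := by
    intro θ hθ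
    have hs := (Real.hasDerivAt_sqrt (ne_of_gt hθ)).comp θ (hFd θ)
    have := (hs.div_const B).const_sub 1
    refine this.congr_deriv ?_
    field_simp
  have hev : ∀ᶠ θ in nhds θ₀, 0 < F θ := by
    have : (0:ℝ) < F θ₀ := by rw [hF0]; positivity
    exact (hFC.continuousAt).eventually (eventually_gt_nhds this)
  -- the first derivative
  have hderiv : deriv (fun θ => 1 - Real.sqrt (F θ) / B)
      =ᶠ[nhds θ₀] fun θ => (2*L) * Real.sin (2*(θ - θ₀)) / (2 * Real.sqrt (F θ) * B) := by
    filter_upwards [hev] with θ hθ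
    exact (hg θ hθ).deriv
  rw [iteratedDeriv_succ, iteratedDeriv_one, hderiv.deriv_eq]
  -- second derivative at θ₀ via quotient rule
  have hsq : Real.sqrt (F θ₀) = a := by rw [hF0, Real.sqrt_sq ha.le]
  have hnum : HasDerivAt (fun θ : ℝ => (2*L) * Real.sin (2*(θ - θ₀))) (4*L) θ₀ := by
    have h1 : HasDerivAt (fun θ : ℝ => 2*(θ - θ₀)) 2 θ₀ := by
      simpa using ((hasDerivAt_id θ₀).sub_const θ₀).const_mul 2
    have h2 := ((Real.hasDerivAt_sin (2*(θ₀ - θ₀))).comp θ₀ h1).const_mul (2*L)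
    refine h2.congr_deriv ?_
    simp
    ring
  have hden : HasDerivAt (fun θ : ℝ => 2 * Real.sqrt (F θ) * B) 0 θ₀ := by
    have hF0' : F θ₀ ≠ 0 := by rw [hF0]; positivity
    have hs := (Real.hasDerivAt_sqrt hF0').comp θ₀ (hFd θ₀)
    have := (hs.const_mul 2).mul_const B
    refine this.congr_deriv ?_
    simp
  have hden0 : 2 * Real.sqrt (F θ₀) * B ≠ 0 := by
    rw [hsq]; positivity
  have hq : HasDerivAt (fun θ => 2*L*Real.sin (2*(θ-θ₀)) / (2*√(F θ)*B)) _ θ₀ := hnum.div hden hden0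
  rw [hq.deriv]
  rw [hsq]
  have h1 : (0:ℝ) ≤ 4*L*(2*a*B) := by positivity
  have h2 : (0:ℝ) < (2*a*B)^2 := by positivity
  calc (0:ℝ) ≤ (4*L*(2*a*B) - (2*L) * Real.sin (2*(θ₀ - θ₀)) * 0) / (2*a*B)^2 := by
        simp
        positivity
    _ = _ := by ring


/-- `T_n` the k-Toffoli (k = n−1), `G = I ⊗ Y ⊗ I` the Pauli Y on qubit `i`,
`D` a diagonal unitary, and `A·exp(−iθ₀G)·D` the identity up to a global phase. Then the
second derivative of `θ ↦ 1 − |Tr(T_nᴴ·A·exp(−iθG)·D)|/2^n` at `θ₀` is nonnegative. -/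
theorem second_deriv_nonneg_ry_param (n : ℕ) (hn : 2 ≤ n) (i : Fin n)
    (D A : Matrix (Fin n → Fin 2) (Fin n → Fin 2) ℂ)
    (hD : D ∈ Matrix.unitaryGroup (Fin n → Fin 2) ℂ) (hDdiag : D.IsDiag)
    (θ₀ α : ℝ)
    (hid : A * NormedSpace.exp ((-(Complex.I * (θ₀ : ℂ))) • embed1 n i PY) * D =
      Complex.exp (Complex.I * α) • (1 : Matrix (Fin n → Fin 2) (Fin n → Fin 2) ℂ)) :
    0 ≤ iteratedDeriv 2
        (fun θ : ℝ =>
          1 - ‖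
            ((toff n)ᴴ *
              (A * NormedSpace.exp ((-(Complex.I * (θ : ℂ))) • embed1 n i PY) * D)).trace‖ /
            2 ^ n)
        θ₀ := by
  classical
  set G : Matrix (Fin n → Fin 2) (Fin n → Fin 2) ℂ := embed1 n i PY with hGdef
  set E : ℝ → Matrix (Fin n → Fin 2) (Fin n → Fin 2) ℂ := fun t =>
    ((Real.cos t : ℂ)) • 1 + (-(Complex.I * (Real.sin t : ℂ))) • G with hEdef
  have hexp : ∀ θ : ℝ,
      NormedSpace.exp ((-(Complex.I * (θ:ℂ))) • G) = E θ := fun θ => exp_G n i θ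
  have hPY2 : PY * PY = 1 := by
    ext a b
    fin_cases a <;> fin_cases b <;>
      simp [PY, Matrix.mul_apply, Fin.sum_univ_two, Matrix.one_apply, Complex.I_mul_I]
  have hG2 : G * G = 1 := by rw [hGdef, embed1_mul, hPY2, embed1_one]
  have mulEE : ∀ x y u v : ℂ, (x • (1 : Matrix (Fin n → Fin 2) (Fin n → Fin 2) ℂ) + y • G)
      * (u • 1 + v • G) = (x*u + y*v) • 1 + (x*v + y*u) • G := by
    intro x y u v
    simp only [Matrix.add_mul, Matrix.mul_add, smul_mul_assoc, Matrix.mul_smul, smul_smul,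
      Matrix.one_mul, Matrix.mul_one, hG2, add_smul]
    module
  have hEsplit : ∀ θ : ℝ, E θ = E θ₀ * E (θ - θ₀) := by
    intro θ
    rw [hEdef]
    simp only []
    rw [mulEE]
    have hcos : (Real.cos θ : ℂ) =
        (Real.cos θ₀ : ℂ) * (Real.cos (θ - θ₀) : ℂ) +
          (-(Complex.I * (Real.sin θ₀ : ℂ))) * (-(Complex.I * (Real.sin (θ - θ₀) : ℂ))) := by
      have h := Real.cos_add θ₀ (θ - θ₀)
      rw [show θ₀ + (θ - θ₀) = θ by ring] at h
      rw [h]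
      push_cast
      ring_nf
      rw [Complex.I_sq]
      ring
    have hsin : (-(Complex.I * (Real.sin θ : ℂ))) =
        (Real.cos θ₀ : ℂ) * (-(Complex.I * (Real.sin (θ - θ₀) : ℂ))) +
          (-(Complex.I * (Real.sin θ₀ : ℂ))) * (Real.cos (θ - θ₀) : ℂ) := by
      have h := Real.sin_add θ₀ (θ - θ₀)
      rw [show θ₀ + (θ - θ₀) = θ by ring] at h
      rw [h]
      push_cast
      ring
    rw [← hcos, ← hsin]
  -- unitarity facts
  have hDH : D * Dᴴ = 1 := by
    have := (Matrix.mem_unitaryGroup_iff.mp hD)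
    rwa [Matrix.star_eq_conjTranspose] at this
  have hHD : Dᴴ * D = 1 := by
    have := (Matrix.mem_unitaryGroup_iff'.mp hD)
    rwa [Matrix.star_eq_conjTranspose] at this
  have hA : A * E θ₀ = Complex.exp (Complex.I * α) • Dᴴ := by
    have h  : A * E θ₀ * D * Dᴴ = (Complex.exp (Complex.I * α) • (1 : Matrix (Fin n → Fin 2) (Fin n → Fin 2) ℂ)) * Dᴴ := by
      rw [← hexp θ₀, hid]
    rwa [Matrix.mul_assoc (A * E θ₀) D Dᴴ, hDH, Matrix.mul_one, Matrix.smul_mul,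
      Matrix.one_mul] at h
  set M : Matrix (Fin n → Fin 2) (Fin n → Fin 2) ℂ := Dᴴ * G * D with hMdef
  have hmain : ∀ θ : ℝ,
      A * NormedSpace.exp ((-(Complex.I * (θ:ℂ))) • G) * D =
        Complex.exp (Complex.I * α) •
          (((Real.cos (θ - θ₀) : ℂ)) • (1 : Matrix (Fin n → Fin 2) (Fin n → Fin 2) ℂ)
            + (-(Complex.I * (Real.sin (θ - θ₀) : ℂ))) • M) := by
    intro θ
    rw [hexp θ, hEsplit θ, ← Matrix.mul_assoc, hA, Matrix.smul_mul, Matrix.smul_mul]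
    congr 1
    rw [hEdef]
    simp only []
    rw [Matrix.mul_add, Matrix.add_mul, Matrix.mul_smul, Matrix.mul_smul,
      Matrix.mul_one, Matrix.smul_mul, Matrix.smul_mul, hHD, hMdef,
      Matrix.mul_assoc]
  -- entries of M
  have hMentry : ∀ x y, M x y = (starRingEnd ℂ) (D x x) * G x y * D y y := by
    intro x y
    rw [hMdef, Matrix.mul_apply]
    rw [Finset.sum_eq_single y]
    · rw [Matrix.mul_apply, Finset.sum_eq_single x]
      · rw [Matrix.conjTranspose_apply]
        rfl
      · intro z _ hz
        rw [Matrix.conjTranspose_apply, hDdiag hz]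
        simp
      · simp
    · intro z _ hz
      rw [hDdiag hz]
      simp
    · simp
  have hPYdiag : ∀ b : Fin 2, PY b b = 0 := by
    intro b; fin_cases b <;> simp [PY]
  have hGdiag : ∀ x, G x x = 0 := by
    intro x
    rw [hGdef, embed1_apply, hPYdiag]
    ring
  have hMdiag : ∀ x, M x x = 0 := by
    intro x; rw [hMentry, hGdiag]; ring
  have hMtrace : M.trace = 0 := by
    simp [Matrix.trace, Matrix.diag, hMdiag]
  -- modulus of diagonal entries
  have hDmod : ∀ x, ‖D x x‖ = 1 := by
    intro x
    have h1 : (Dᴴ * D) x x = 1 := by rw [hHD, Matrix.one_apply_eq]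
    rw [Matrix.mul_apply, Finset.sum_eq_single x] at h1
    · rw [Matrix.conjTranspose_apply] at h1
      have h2 : ((Complex.normSq (D x x) : ℝ) : ℂ) = 1 := by
        rw [← h1, Complex.normSq_eq_conj_mul_self]
        rfl
      have h3 : Complex.normSq (D x x) = 1 := by exact_mod_cast h2
      rw [Complex.norm_def, h3, Real.sqrt_one]
    · intro z _ hz
      rw [hDdiag hz]
      simp
    · simp
  -- the off-diagonal sum is real and small
  obtain ⟨c, hc, hcb⟩ : ∃ c : ℝ, M (uu n) (vv n) + M (vv n) (uu n) = (c : ℂ) ∧ |c| ≤ 2 := by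
    by_cases hi : i = ⟨n - 1, by omega⟩
    · -- i is the last qubit
      have hGuv : G (uu n) (vv n) = -Complex.I := by
        rw [hGdef, embed1_apply, if_pos, hi, uu_last n hn, vv_last n hn]
        · simp [PY]
        · intro k hk
          have hk2 : k.val + 1 < n := by
            have := k.isLt
            rcases Nat.lt_or_ge (k.val + 1) n with h | h
            · exact h
            · exfalso; apply hk; rw [hi]; apply Fin.ext; simp; omega
          rw [lead_uu n hn k hk2]; rfl
      have hGvu : G (vv n) (uu n) = Complex.I := by
        rw [hGdef, embed1_apply, if_pos, hi, uu_last n hn, vv_last n hn]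
        · simp [PY]
        · intro k hk
          have hk2 : k.val + 1 < n := by
            have := k.isLt
            rcases Nat.lt_or_ge (k.val + 1) n with h | h
            · exact h
            · exfalso; apply hk; rw [hi]; apply Fin.ext; simp; omega
          rw [lead_uu n hn k hk2]; rfl
      set w : ℂ := (starRingEnd ℂ) (D (uu n) (uu n)) * D (vv n) (vv n) with hw
      refine ⟨2 * w.im, ?_, ?_⟩
      · rw [hMentry, hMentry, hGuv, hGvu]
        have hconj : (starRingEnd ℂ) (D (vv n) (vv n)) * Complex.I * D (uu n) (uu n)
            = Complex.I * (starRingEnd ℂ) w := by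
          rw [hw]
          simp only [_root_.map_mul, Complex.conj_conj]
          ring
        rw [hconj]
        have : (starRingEnd ℂ) (D (uu n) (uu n)) * -Complex.I * D (vv n) (vv n)
            = -(Complex.I * w) := by rw [hw]; ring
        rw [this]
        have hsub := Complex.sub_conj w
        have : Complex.I * (starRingEnd ℂ) w - Complex.I * w = -(Complex.I * (w - (starRingEnd ℂ) w)) := by ring
        calc -(Complex.I * w) + Complex.I * (starRingEnd ℂ) w
            = -(Complex.I * (w - (starRingEnd ℂ) w)) := by ring
          _ = -(Complex.I * (2 * w.im * Complex.I)) := by rw [hsub]; push_cast; ring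
          _ = ((2 * w.im : ℝ) : ℂ) := by
              push_cast
              ring_nf
              rw [Complex.I_sq]
              ring
      · have him : |w.im| ≤ ‖w‖ := Complex.abs_im_le_norm w
        have habsw : ‖w‖ = 1 := by
          rw [hw, norm_mul, Complex.norm_conj, hDmod, hDmod, mul_one]
        rw [abs_mul, abs_two]
        rw [habsw] at him
        linarith
    · -- i is not the last qubit
      refine ⟨0, ?_, by simp⟩
      have hne : (⟨n - 1, by omega⟩ : Fin n) ≠ i := fun h => hi h.symm
      have huv : uu n ⟨n - 1, by omega⟩ ≠ vv n ⟨n - 1, by omega⟩ := by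
        rw [uu_last n hn, vv_last n hn]; decide
      have hGuv : G (uu n) (vv n) = 0 := by
        rw [hGdef, embed1_apply, if_neg]
        · ring
        · intro hall
          exact huv (hall _ hne)
      have hGvu : G (vv n) (uu n) = 0 := by
        rw [hGdef, embed1_apply, if_neg]
        · ring
        · intro hall
          exact huv (hall _ hne).symm
      rw [hMentry, hMentry, hGuv, hGvu]
      simp
  -- the trace as an explicit function of θ
  set a : ℝ := 2^n - 2 with ha
  have htr : ∀ θ : ℝ,
      ((toff n)ᴴ *
        (A * NormedSpace.exp ((-(Complex.I * (θ:ℂ))) • G) * D)).trace =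
      Complex.exp (Complex.I * α) *
        (((a * Real.cos (θ - θ₀) : ℝ) : ℂ) + ((-(c * Real.sin (θ - θ₀)) : ℝ) : ℂ) * Complex.I) := by
    intro θ
    rw [hmain θ, Matrix.mul_smul, Matrix.trace_smul, smul_eq_mul]
    congr 1
    rw [Matrix.mul_add, Matrix.mul_smul, Matrix.mul_smul, Matrix.trace_add, Matrix.trace_smul,
      Matrix.trace_smul, Matrix.mul_one]
    have h1 : (toff n)ᴴ.trace = ((2:ℂ)^n - 2) := by
      have := trace_toffH_mul n hn 1
      rw [Matrix.mul_one] at this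
      rw [this, Matrix.trace_one, Matrix.one_apply_eq, Matrix.one_apply_eq,
        Matrix.one_apply_ne (uu_ne_vv n hn), Matrix.one_apply_ne (Ne.symm (uu_ne_vv n hn))]
      simp [Fintype.card_fun]
      ring
    have h2 : ((toff n)ᴴ * M).trace = (c : ℂ) := by
      rw [trace_toffH_mul n hn M, hMtrace, hMdiag, hMdiag, ← hc]
      ring
    rw [h1, h2, smul_eq_mul, smul_eq_mul, ha]
    push_cast
    ring
  have hfun : (fun θ : ℝ =>
        1 - ‖
          ((toff n)ᴴ *
            (A * NormedSpace.exp ((-(Complex.I * (θ : ℂ))) • embed1 n i PY) * D)).trace‖ /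
          2 ^ n)
      = fun θ : ℝ => 1 - Real.sqrt ((a * Real.cos (θ - θ₀))^2 + (c * Real.sin (θ - θ₀))^2) / (2^n : ℝ) := by
    funext θ
    rw [← hGdef, htr θ, norm_mul, Complex.norm_exp]
    have hre : (Complex.I * (α:ℂ)).re = 0 := by simp
    rw [hre, Real.exp_zero, one_mul, Complex.norm_def, Complex.normSq_add_mul_I]
    rw [show (-(c * Real.sin (θ - θ₀)))^2 = (c * Real.sin (θ - θ₀))^2 by ring]
  rw [hfun]
  have h4 : (4:ℝ) ≤ 2^n := by
    calc (4:ℝ) = 2^2 := by norm_num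
    _ ≤ 2^n := by
        apply pow_le_pow_right₀ (by norm_num) hn
  exact calc_key a c (2^n) θ₀ (by rw [ha]; linarith) (by rw [ha]; linarith) (by positivity)
end
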